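/- arXiv:1908.06390 — 7 statements merged into one kernel-verified Lean document; each statement's English description precedes it below -/
import Mathlib

section
/- Let P be a set of n points in general position in the plane (no three collinear), with n odd and n ≥ 3. If R is a set of points disjoint from P such that every line through two points of P contains a point of R, then |R| ≥ n. -/
/-- The plane. -/
abbrev Pt := Fin 2 → ℝ

/-- A set of points is in general position if no three of its points are collinear. -/
def GenPos (S : Set Pt) : Prop :=
  ∀ x ∈ S, ∀ y ∈ S, ∀ z ∈ S, x ≠ y → x ≠ z → y ≠ z → ¬ Collinear ℝ ({x, y, z} : Set Pt)

/-- A finset admitting a fixed-point-free involution has even cardinality. -/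
lemma even_card_of_invol {α : Type*} [DecidableEq α] (f : α → α) :
    ∀ s : Finset α, (∀ x ∈ s, f x ∈ s) → (∀ x ∈ s, f (f x) = x) → (∀ x ∈ s, f x ≠ x) →
      Even s.card := by
  intro s
  induction s using Finset.strongInduction with
  | _ s ih =>
    intro hmem hinv hne
    rcases s.eq_empty_or_nonempty with rfl | ⟨a, ha⟩
    · simp
    · have hfa : f a ∈ s := hmem a ha
      have hane : f a ≠ a := hne a ha
      set t := s \ {a, f a} with ht
      have hsub : ({a, f a} : Finset α) ⊆ s := by
        intro x hx
        simp only [Finset.mem_insert, Finset.mem_singleton] at hx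
        rcases hx with rfl | rfl <;> assumption
      have hpaircard : ({a, f a} : Finset α).card = 2 := by
        rw [Finset.card_insert_of_notMem (by simpa using hane.symm), Finset.card_singleton]
      have htcard : t.card = s.card - 2 := by
        rw [ht, Finset.card_sdiff_of_subset hsub, hpaircard]
      have h2le : 2 ≤ s.card := by
        calc 2 = ({a, f a} : Finset α).card := hpaircard.symm
        _ ≤ s.card := Finset.card_le_card hsub
      have hts : t ⊂ s := by
        refine Finset.sdiff_ssubset (by exact_mod_cast hsub) ?_
        exact ⟨a, by simp⟩
      have htmem : ∀ x ∈ t, x ∈ s ∧ x ≠ a ∧ x ≠ f a := by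
        intro x hx
        simp only [ht, Finset.mem_sdiff, Finset.mem_insert, Finset.mem_singleton] at hx
        tauto
      have heven : Even t.card := by
        apply ih t hts
        · intro x hx
          obtain ⟨hxs, hxa, hxfa⟩ := htmem x hx
          simp only [ht, Finset.mem_sdiff, Finset.mem_insert, Finset.mem_singleton]
          refine ⟨hmem x hxs, ?_⟩
          rintro (h | h)
          · apply hxfa; rw [← h, hinv x hxs]
          · apply hxa
            have := hinv x hxs
            rw [h, hinv a ha] at this
            exact this.symm
        · intro x hx; exact hinv x (htmem x hx).1
        · intro x hx; exact hne x (htmem x hx).1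
      have : s.card = t.card + 2 := by omega
      rw [this]
      exact heven.add (by norm_num)

lemma collinear_unique {P : Finset Pt} (hgp : GenPos ↑P) {x y z r : Pt}
    (hx : x ∈ P) (hy : y ∈ P) (hz : z ∈ P) (hr : r ∉ P)
    (hxy : x ≠ y) (hxz : x ≠ z)
    (h1 : Collinear ℝ ({x, y, r} : Set Pt)) (h2 : Collinear ℝ ({x, z, r} : Set Pt)) :
    y = z := by
  by_contra hyz
  have hxr : x ≠ r := fun h => hr (h ▸ hx)
  have hy' : y ∈ line[ℝ, x, r] :=
    h1.mem_affineSpan_of_mem_of_ne (by simp) (by simp) (by simp) hxr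
  have hz' : z ∈ line[ℝ, x, r] :=
    h2.mem_affineSpan_of_mem_of_ne (by simp) (by simp) (by simp) hxr
  have hcol : Collinear ℝ ({y, z, x, r} : Set Pt) :=
    collinear_insert_insert_of_mem_affineSpan_pair hy' hz'
  have : Collinear ℝ ({x, y, z} : Set Pt) := by
    apply hcol.subset
    intro p hp
    simp only [Set.mem_insert_iff, Set.mem_singleton_iff] at hp ⊢
    tauto
  exact hgp x hx y hy z hz hxy hxz hyz this

theorem stmt0 (n : ℕ) (hodd : Odd n) (hn : 3 ≤ n) (P R : Finset Pt)
    (hPcard : P.card = n) (hgp : GenPos ↑P) (hdisj : Disjoint P R)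
    (hpierce : ∀ x ∈ P, ∀ y ∈ P, x ≠ y → ∃ r ∈ R, Collinear ℝ ({x, y, r} : Set Pt)) :
    n ≤ R.card := by
  classical
  set S := P.offDiag with hS
  have hmemS : ∀ p : Pt × Pt, p ∈ S ↔ p.1 ∈ P ∧ p.2 ∈ P ∧ p.1 ≠ p.2 := by
    intro p; simp [hS, Finset.mem_offDiag]
  -- choose a piercing point for each pair
  have hchoice : ∀ p : Pt × Pt, p ∈ S →
      ∃ r ∈ R, Collinear ℝ ({p.1, p.2, r} : Set Pt) := by
    intro p hp
    obtain ⟨h1, h2, h3⟩ := (hmemS p).1 hp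
    exact hpierce p.1 h1 p.2 h2 h3
  set f : Pt × Pt → Pt := fun p =>
    if h : p ∈ S then (hchoice p h).choose else (fun _ => 0) with hf
  have hfR : ∀ p ∈ S, f p ∈ R := by
    intro p hp
    simp only [hf, dif_pos hp]
    exact (hchoice p hp).choose_spec.1
  have hfcol : ∀ p ∈ S, Collinear ℝ ({p.1, p.2, f p} : Set Pt) := by
    intro p hp
    simp only [hf, dif_pos hp]
    exact (hchoice p hp).choose_spec.2
  have hScard : S.card = n * (n - 1) := by
    rw [hS, Finset.offDiag_card, hPcard]
    obtain ⟨m, rfl⟩ : ∃ m, n = m + 1 := ⟨n - 1, by omega⟩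
    rw [Nat.add_sub_cancel, show (m + 1) * (m + 1) = (m + 1) * m + (m + 1) from by ring,
      Nat.add_sub_cancel]
  have hfiber : S.card = ∑ r ∈ R, (S.filter (fun p => f p = r)).card :=
    Finset.card_eq_sum_card_fiberwise hfR
  -- bound each fiber
  have hbound : ∀ r ∈ R, (S.filter (fun p => f p = r)).card ≤ n - 1 := by
    intro r hr
    have hrP : r ∉ P := fun h => (Finset.disjoint_left.1 hdisj) h hr
    set T := S.filter (fun p => Collinear ℝ ({p.1, p.2, r} : Set Pt)) with hT
    have hsubT : S.filter (fun p => f p = r) ⊆ T := by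
      intro p hp
      rw [Finset.mem_filter] at hp ⊢
      exact ⟨hp.1, hp.2 ▸ hfcol p hp.1⟩
    have hmemT : ∀ p : Pt × Pt, p ∈ T ↔
        (p.1 ∈ P ∧ p.2 ∈ P ∧ p.1 ≠ p.2) ∧ Collinear ℝ ({p.1, p.2, r} : Set Pt) := by
      intro p; rw [hT, Finset.mem_filter, hmemS]
    -- first projection injective on T
    have hinj : Set.InjOn Prod.fst (↑T : Set (Pt × Pt)) := by
      intro p hp q hq hpq
      rw [Finset.mem_coe, hmemT] at hp hq
      obtain ⟨⟨hp1, hp2, hp3⟩, hpc⟩ := hp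
      obtain ⟨⟨hq1, hq2, hq3⟩, hqc⟩ := hq
      have : p.2 = q.2 := by
        apply collinear_unique hgp hp1 hp2 hq2 hrP hp3 (hpq ▸ hq3) hpc
        rw [hpq]; exact hqc
      exact Prod.ext hpq this
    have hcardT : T.card ≤ n := by
      rw [← Finset.card_image_of_injOn hinj]
      calc (T.image Prod.fst).card ≤ P.card := by
            apply Finset.card_le_card
            intro x hx
            obtain ⟨p, hp, rfl⟩ := Finset.mem_image.1 hx
            exact ((hmemT p).1 hp).1.1
        _ = n := hPcard
    have hevenT : Even T.card := by
      apply even_card_of_invol Prod.swap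
      · intro p hp
        rw [hmemT] at hp ⊢
        obtain ⟨⟨h1, h2, h3⟩, hc⟩ := hp
        refine ⟨⟨h2, h1, h3.symm⟩, ?_⟩
        have : ({p.2, p.1, r} : Set Pt) = {p.1, p.2, r} := Set.insert_comm _ _ _
        rw [Prod.fst_swap, Prod.snd_swap, this]
        exact hc
      · intro p _; exact Prod.swap_swap p
      · intro p hp h
        have h3 := ((hmemT p).1 hp).1.2.2
        apply h3
        have := congrArg Prod.fst h
        simpa using this.symm
    have : T.card ≤ n - 1 := by
      obtain ⟨k, hk⟩ := hevenT
      obtain ⟨m, hm⟩ := hodd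
      omega
    exact le_trans (Finset.card_le_card hsubT) this
  have htotal : n * (n - 1) ≤ R.card * (n - 1) := by
    calc n * (n - 1) = S.card := hScard.symm
      _ = ∑ r ∈ R, (S.filter (fun p => f p = r)).card := hfiber
      _ ≤ ∑ _r ∈ R, (n - 1) := Finset.sum_le_sum hbound
      _ = R.card * (n - 1) := by rw [Finset.sum_const, smul_eq_mul]
  have hpos : 0 < n - 1 := by omega
  exact Nat.le_of_mul_le_mul_right htotal hpos
end

section
/- Every set of n ≥ 3 points in general position in the plane determines at least n distinct directions, i.e., the lines through pairs of the points have at least n distinct slopes (as points on the projective line of directions). -/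
lemma eq_smul_of_coords (t c : ℝ) (v w : Pt)
    (h0 : v 0 + t * v 1 = c * (w 0 + t * w 1)) (h1 : v 1 = c * w 1) : v = c • w := by
  have ht1 : t * v 1 = c * (t * w 1) := by rw [h1]; ring
  have h0' : v 0 = c * w 0 := by linear_combination h0 - ht1
  funext i
  fin_cases i <;> simp [smul_eq_mul] <;> assumption

theorem stmt2 (n : ℕ) (hn : 3 ≤ n) (P : Finset Pt) (hPcard : P.card = n)
    (hgp : GenPos ↑P) :
    n ≤ Set.ncard {d : Projectivization ℝ Pt |
      ∃ x ∈ P, ∃ y ∈ P, ∃ h : x - y ≠ 0, d = Projectivization.mk ℝ (x - y) h} := by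
  classical
  -- generic slope t
  obtain ⟨t, htB⟩ := Infinite.exists_notMem_finset
    ((P ×ˢ P).image (fun pq => -(pq.1 0 - pq.2 0) / (pq.1 1 - pq.2 1)))
  have ht : ∀ p ∈ P, ∀ q ∈ P, p ≠ q → (p 0 - q 0) + t * (p 1 - q 1) ≠ 0 := by
    intro p hp q hq hpq h0
    by_cases h1 : p 1 = q 1
    · have hp0 : p 0 = q 0 := by rw [h1] at h0; linarith
      exact hpq (funext fun i => by fin_cases i <;> assumption)
    · apply htB
      refine Finset.mem_image.mpr ⟨(p, q), Finset.mem_product.mpr ⟨hp, hq⟩, ?_⟩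
      have h1' : p 1 - q 1 ≠ 0 := sub_ne_zero.mpr h1
      field_simp
      linarith
  set g : Pt → ℝ := fun v => v 0 + t * v 1 with hgdef
  have hPne : P.Nonempty := Finset.card_pos.mp (by omega)
  obtain ⟨x, hxP, hxmin⟩ := P.exists_min_image g hPne
  have hgpos : ∀ p ∈ P, p ≠ x → 0 < g p - g x := by
    intro p hp hpx
    have hle : g x ≤ g p := hxmin p hp
    have hne : g p - g x ≠ 0 := by
      have := ht p hp x hxP hpx
      simp only [hgdef]; intro h; apply this; linarith
    cases (lt_or_eq_of_le hle) with
    | inl h => linarith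
    | inr h => exact absurd (by linarith) hne
  -- lemma A: parallel segments through x force equality
  have pA : ∀ p ∈ P, p ≠ x → ∀ q ∈ P, q ≠ x → ∀ c : ℝ, p - x = c • (q - x) → p = q := by
    intro p hp hpx q hq hqx c hc
    by_contra hpq
    apply hgp x hxP p hp q hq (Ne.symm hpx) (Ne.symm hqx) hpq
    rw [collinear_iff_of_mem (show x ∈ ({x, p, q} : Set Pt) by simp)]
    refine ⟨q - x, fun r hr => ?_⟩
    rcases hr with rfl | rfl | rfl
    · exact ⟨0, by simp⟩
    · exact ⟨c, by rw [← hc]; simp⟩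
    · exact ⟨1, by simp⟩
  set σ : Pt → ℝ := fun p => (p 1 - x 1) / (g p - g x) with hσdef
  set Q := P.erase x with hQdef
  have hQmem : ∀ p ∈ Q, p ∈ P ∧ p ≠ x := fun p hp =>
    ⟨Finset.mem_of_mem_erase hp, Finset.ne_of_mem_erase hp⟩
  -- σ is injective on Q
  have pB : ∀ p ∈ Q, ∀ q ∈ Q, σ p = σ q → p = q := by
    intro p hp q hq hσ
    obtain ⟨hpP, hpx⟩ := hQmem p hp
    obtain ⟨hqP, hqx⟩ := hQmem q hq
    have ha : 0 < g p - g x := hgpos p hpP hpx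
    have hb : 0 < g q - g x := hgpos q hqP hqx
    have hcross : (p 1 - x 1) * (g q - g x) = (q 1 - x 1) * (g p - g x) :=
      (div_eq_div_iff (ne_of_gt ha) (ne_of_gt hb)).mp hσ
    refine pA p hpP hpx q hqP hqx ((g p - g x) / (g q - g x)) ?_
    apply eq_smul_of_coords t
    · have e1 : (p - x) 0 + t * (p - x) 1 = g p - g x := by
        simp [hgdef, Pi.sub_apply]; ring
      have e2 : (q - x) 0 + t * (q - x) 1 = g q - g x := by
        simp [hgdef, Pi.sub_apply]; ring
      rw [e1, e2, div_mul_cancel₀ _ (ne_of_gt hb)]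
    · simp only [Pi.sub_apply]
      field_simp
      linarith [hcross]
  have hQcard : 2 ≤ Q.card := by
    rw [hQdef, Finset.card_erase_of_mem hxP, hPcard]; omega
  obtain ⟨y, hyQ, hymin⟩ := Q.exists_min_image σ (Finset.card_pos.mp (by omega))
  obtain ⟨z, hzQ, hzmax⟩ := Q.exists_max_image σ (Finset.card_pos.mp (by omega))
  obtain ⟨hyP, hyx⟩ := hQmem y hyQ
  obtain ⟨hzP, hzx⟩ := hQmem z hzQ
  have hσyz : σ y < σ z := by
    obtain ⟨a, ha, b, hb, hab⟩ := Finset.one_lt_card.mp (by omega : 1 < Q.card)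
    have h1 : σ a ≠ σ b := fun h => hab (pB a ha b hb h)
    rcases lt_or_ge (σ a) (σ b) with h | h
    · exact lt_of_le_of_lt (hymin a ha) (lt_of_lt_of_le h (hzmax b hb))
    · rcases lt_or_eq_of_le h with h' | h'
      · exact lt_of_le_of_lt (hymin b hb) (lt_of_lt_of_le h' (hzmax a ha))
      · exact absurd h'.symm h1
  have hyz : y ≠ z := fun h => absurd hσyz (by rw [h]; exact lt_irrefl _)
  have hzy0 : z - y ≠ 0 := sub_ne_zero.mpr (Ne.symm hyz)
  -- lemma C: direction z-y is new
  have pC : ∀ p ∈ P, p ≠ x → ∀ c : ℝ, z - y ≠ c • (p - x) := by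
    intro p hpP hpx c hEq
    have hpQ : p ∈ Q := Finset.mem_erase.mpr ⟨hpx, hpP⟩
    have ha : 0 < g p - g x := hgpos p hpP hpx
    have hby : 0 < g y - g x := hgpos y hyP hyx
    have hbz : 0 < g z - g x := hgpos z hzP hzx
    have e0 : z 0 - y 0 = c * (p 0 - x 0) := by
      have := congrFun hEq 0; simpa [Pi.sub_apply, smul_eq_mul] using this
    have e1 : z 1 - y 1 = c * (p 1 - x 1) := by
      have := congrFun hEq 1; simpa [Pi.sub_apply, smul_eq_mul] using this
    have hbb : (g z - g x) - (g y - g x) = c * (g p - g x) := by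
      simp only [hgdef]; linear_combination e0 + t * e1
    have huz : (z 1 - x 1) - (y 1 - x 1) = c * (p 1 - x 1) := by linarith
    have h1 : (y 1 - x 1) * (g p - g x) ≤ (p 1 - x 1) * (g y - g x) :=
      (div_le_div_iff₀ hby ha).mp (hymin p hpQ)
    have h2 : (p 1 - x 1) * (g z - g x) ≤ (z 1 - x 1) * (g p - g x) :=
      (div_le_div_iff₀ ha hbz).mp (hzmax p hpQ)
    have h3 : (y 1 - x 1) * (g z - g x) < (z 1 - x 1) * (g y - g x) :=
      (div_lt_div_iff₀ hby hbz).mp hσyz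
    rcases lt_trichotomy c 0 with hc | hc | hc
    · have k1 : (y 1 - x 1) * ((g z - g x) - (g y - g x))
          = (y 1 - x 1) * (c * (g p - g x)) := by rw [hbb]
      have k2 : (g y - g x) * ((z 1 - x 1) - (y 1 - x 1))
          = (g y - g x) * (c * (p 1 - x 1)) := by rw [huz]
      have k3 : c * ((p 1 - x 1) * (g y - g x)) ≤ c * ((y 1 - x 1) * (g p - g x)) :=
        mul_le_mul_of_nonpos_left h1 hc.le
      nlinarith [k1, k2, k3, h3]
    · rw [hc, zero_smul, sub_eq_zero] at hEq
      exact hyz hEq.symm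
    · have k1 : (z 1 - x 1) * ((g z - g x) - (g y - g x))
          = (z 1 - x 1) * (c * (g p - g x)) := by rw [hbb]
      have k2 : (g z - g x) * ((z 1 - x 1) - (y 1 - x 1))
          = (g z - g x) * (c * (p 1 - x 1)) := by rw [huz]
      have k3 : c * ((p 1 - x 1) * (g z - g x)) ≤ c * ((z 1 - x 1) * (g p - g x)) :=
        mul_le_mul_of_nonneg_left h2 hc.le
      nlinarith [k1, k2, k3, h3]
  -- assemble
  set d : Projectivization ℝ Pt := Projectivization.mk ℝ (z - y) hzy0 with hddef
  set φ : Pt → Projectivization ℝ Pt :=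
    fun p => if h : p - x ≠ 0 then Projectivization.mk ℝ (p - x) h else d with hφdef
  have hφeq : ∀ p, ∀ hp : p ∈ Q, φ p = Projectivization.mk ℝ (p - x)
      (sub_ne_zero.mpr (hQmem p hp).2) := by
    intro p hp
    simp only [hφdef, dif_pos (sub_ne_zero.mpr (hQmem p hp).2)]
  set S : Set (Projectivization ℝ Pt) := {d : Projectivization ℝ Pt |
      ∃ x ∈ P, ∃ y ∈ P, ∃ h : x - y ≠ 0, d = Projectivization.mk ℝ (x - y) h} with hSdef
  have hSfin : S.Finite := by
    apply Set.Finite.subset (((P ×ˢ P).finite_toSet).image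
      (fun pq : Pt × Pt => if h : pq.1 - pq.2 ≠ 0 then Projectivization.mk ℝ (pq.1 - pq.2) h else d))
    rintro e ⟨a, ha, b, hb, hne, rfl⟩
    exact ⟨(a, b), by simpa using ⟨ha, hb⟩, by simp [dif_pos hne]⟩
  have hinj : Set.InjOn φ ↑Q := by
    intro p hp q hq hpq
    have hp' : p ∈ Q := hp
    have hq' : q ∈ Q := hq
    rw [hφeq p hp', hφeq q hq'] at hpq
    obtain ⟨a, haeq⟩ := (Projectivization.mk_eq_mk_iff' ℝ _ _ _ _).mp hpq
    exact pA p (hQmem p hp').1 (hQmem p hp').2 q (hQmem q hq').1 (hQmem q hq').2 a haeq.symm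
  have hdni : d ∉ Q.image φ := by
    intro h
    obtain ⟨p, hp, hφp⟩ := Finset.mem_image.mp h
    rw [hφeq p hp] at hφp
    obtain ⟨a, haeq⟩ := (Projectivization.mk_eq_mk_iff' ℝ _ _ _ _).mp hφp.symm
    exact pC p (hQmem p hp).1 (hQmem p hp).2 a haeq.symm
  set T : Finset (Projectivization ℝ Pt) := insert d (Q.image φ) with hTdef
  have hTcard : T.card = n := by
    rw [hTdef, Finset.card_insert_of_notMem hdni, Finset.card_image_of_injOn hinj,
      hQdef, Finset.card_erase_of_mem hxP, hPcard]
    omega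
  have hTS : ↑T ⊆ S := by
    intro e he
    rw [hTdef] at he
    simp only [Finset.coe_insert, Set.mem_insert_iff, Finset.coe_image, Set.mem_image,
      Finset.mem_coe] at he
    rcases he with rfl | ⟨p, hp, rfl⟩
    · exact ⟨z, hzP, y, hyP, hzy0, rfl⟩
    · exact ⟨p, (hQmem p hp).1, x, hxP, sub_ne_zero.mpr (hQmem p hp).2, (hφeq p hp)⟩
  calc n = (↑T : Set (Projectivization ℝ Pt)).ncard := by rw [Set.ncard_coe_finset, hTcard]
    _ ≤ S.ncard := Set.ncard_le_ncard hTS hSfin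
end

section
/- Let P be a set of n points in general position and R a set of n points disjoint from P such that for every x, y ∈ P there is a point of R on the line through x and y lying outside the closed segment [x, y]. Then a line through two points of P contains at most two points of R. -/
lemma collin_trans {x y z r : Pt} (hxr : x ≠ r)
    (h1 : Collinear ℝ ({x, y, r} : Set Pt)) (h2 : Collinear ℝ ({x, z, r} : Set Pt)) :
    Collinear ℝ ({x, y, z} : Set Pt) := by
  have hy : y ∈ line[ℝ, x, r] :=
    h1.mem_affineSpan_of_mem_of_ne (by simp) (by simp) (by simp) hxr
  have hz : z ∈ line[ℝ, x, r] :=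
    h2.mem_affineSpan_of_mem_of_ne (by simp) (by simp) (by simp) hxr
  have h := collinear_insert_insert_of_mem_affineSpan_pair hy hz
  exact h.subset (by intro p hp; simp at hp ⊢; tauto)

theorem stmt3 (n : ℕ) (P R : Finset Pt) (hPcard : P.card = n) (hRcard : R.card = n)
    (hgp : GenPos ↑P) (hdisj : Disjoint P R)
    (hpierce : ∀ x ∈ P, ∀ y ∈ P, x ≠ y →
      ∃ r ∈ R, Collinear ℝ ({x, y, r} : Set Pt) ∧ r ∉ segment ℝ x y) :
    ∀ x ∈ P, ∀ y ∈ P, x ≠ y →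
      ({r : Pt | r ∈ R ∧ Collinear ℝ ({x, y, r} : Set Pt)}).ncard ≤ 2 := by
  intro x hx y hy hxy
  have key : ∀ z ∈ P.erase x, ∃ r, r ∈ R ∧ Collinear ℝ ({x, z, r} : Set Pt) := by
    intro z hz
    obtain ⟨hzx, hzP⟩ := Finset.mem_erase.mp hz
    obtain ⟨r, hr, hc, -⟩ := hpierce x hx z hzP (Ne.symm hzx)
    exact ⟨r, hr, hc⟩
  choose! f hfR hfC using key
  -- f z ∈ R, so f z ∉ P
  have hfnP : ∀ z ∈ P.erase x, f z ≠ x := by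
    intro z hz h
    exact (Finset.disjoint_left.mp hdisj hx) (h ▸ hfR z hz)
  have hinj : Set.InjOn f ↑(P.erase x) := by
    intro z hz z' hz' hff
    by_contra hne
    obtain ⟨hzx, hzP⟩ := Finset.mem_erase.mp hz
    obtain ⟨hz'x, hz'P⟩ := Finset.mem_erase.mp hz'
    exact hgp x hx z hzP z' hz'P (Ne.symm hzx) (Ne.symm hz'x) hne
      (collin_trans (Ne.symm (hfnP z hz)) (hfC z hz) (hff ▸ hfC z' hz'))
  set T : Finset Pt := (P.erase x).image f with hT
  have hTsub : T ⊆ R := by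
    intro r hr
    obtain ⟨z, hz, rfl⟩ := Finset.mem_image.mp hr
    exact hfR z hz
  have hTcard : T.card = n - 1 := by
    rw [hT, Finset.card_image_of_injOn hinj, Finset.card_erase_of_mem hx, hPcard]
  have hdiff : (R \ T).card ≤ 1 := by
    rw [Finset.card_sdiff_of_subset hTsub, hRcard, hTcard]
    omega
  have hyx : y ∈ P.erase x := Finset.mem_erase.mpr ⟨Ne.symm hxy, hy⟩
  have hsub : {r : Pt | r ∈ R ∧ Collinear ℝ ({x, y, r} : Set Pt)} ⊆
      ↑(insert (f y) (R \ T)) := by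
    intro r ⟨hrR, hrC⟩
    simp only [Finset.coe_insert, Set.mem_insert_iff, Finset.coe_sdiff, Set.mem_diff,
      Finset.mem_coe]
    by_cases hry : r = f y
    · exact Or.inl hry
    · refine Or.inr ⟨hrR, ?_⟩
      intro hrT
      obtain ⟨z, hz, rfl⟩ := Finset.mem_image.mp hrT
      obtain ⟨hzx, hzP⟩ := Finset.mem_erase.mp hz
      have hzy : z ≠ y := fun h => hry (by rw [h])
      exact hgp x hx y hy z hzP hxy (Ne.symm hzx) (Ne.symm hzy)
        (collin_trans (Ne.symm (hfnP z hz)) hrC (hfC z hz))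
  calc ({r : Pt | r ∈ R ∧ Collinear ℝ ({x, y, r} : Set Pt)}).ncard
      ≤ (↑(insert (f y) (R \ T)) : Set Pt).ncard :=
        Set.ncard_le_ncard hsub (Finset.finite_toSet _)
    _ = (insert (f y) (R \ T)).card := Set.ncard_coe_finset _
    _ ≤ (R \ T).card + 1 := Finset.card_insert_le _ _
    _ ≤ 2 := by omega
end

section
/- Let P be a set of n points in general position and R a set of n points disjoint from P such that for every x, y ∈ P some point of R lies on line xy outside the segment [x,y]. Then the points of P are in convex position. -/
noncomputable def cr (u v : Pt) : ℝ := u 0 * v 1 - u 1 * v 0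
noncomputable def dt (u v : Pt) : ℝ := u 0 * v 0 + u 1 * v 1
noncomputable def ff (p w₀ w : Pt) : ℝ := cr (w₀ - p) (w - p)
noncomputable def gg (p w₀ w : Pt) : ℝ := dt (w₀ - p) (w - p)
noncomputable def rr (p w₀ w : Pt) : ℝ := gg p w₀ w / ff p w₀ w

lemma cr_self (u : Pt) : cr u u = 0 := by simp [cr]; ring
lemma cr_anti (u v : Pt) : cr u v = - cr v u := by simp [cr]; ring
lemma cr_neg_left (u v : Pt) : cr (-u) v = - cr u v := by simp [cr]; ring

lemma cr_comb {z a b : Pt} {θ : ℝ} (h : z = a + θ • (b - a)) (p u : Pt) :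
    cr (u - p) (z - p) = (1 - θ) * cr (u - p) (a - p) + θ * cr (u - p) (b - p) := by
  have h0 := congrFun h 0
  have h1 := congrFun h 1
  simp only [Pi.add_apply, Pi.smul_apply, Pi.sub_apply, smul_eq_mul] at h0 h1
  simp only [cr, Pi.sub_apply]
  linear_combination (u 0 - p 0) * h1 - (u 1 - p 1) * h0

lemma cr_comb_p {p z w : Pt} {τ : ℝ} (h : z = p + τ • (w - p)) (u : Pt) :
    cr (u - p) (z - p) = τ * cr (u - p) (w - p) := by
  have h2 := cr_comb h p u
  have h3 : cr (u - p) (p - p) = 0 := by rw [sub_self]; simp [cr]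
  rw [h3] at h2
  linarith

lemma good_flip {p u v w : Pt} (h : 0 < cr (u - p) (w - p) * cr (w - p) (v - p)) :
    0 < cr (v - p) (w - p) * cr (w - p) (u - p) := by
  have e : cr (v - p) (w - p) * cr (w - p) (u - p)
      = cr (u - p) (w - p) * cr (w - p) (v - p) := by
    rw [cr_anti (v - p) (w - p), cr_anti (w - p) (u - p)]
    ring
  linarith

lemma collinear_param {a b z : Pt} (hab : a ≠ b) (h : Collinear ℝ ({a, b, z} : Set Pt)) :
    ∃ θ : ℝ, z = a + θ • (b - a) := by
  rw [collinear_iff_of_mem (Set.mem_insert a {b, z})] at h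
  obtain ⟨v, hv⟩ := h
  obtain ⟨tb, htb⟩ := hv b (by simp)
  obtain ⟨tz, htz⟩ := hv z (by simp)
  simp only [vadd_eq_add] at htb htz
  have htbne : tb ≠ 0 := by
    rintro rfl
    simp at htb
    exact hab htb.symm
  refine ⟨tz / tb, ?_⟩
  rw [htz, htb]
  rw [add_sub_cancel_right, smul_smul, div_mul_cancel₀ _ htbne]
  abel

lemma collinear_of_cr {p w u : Pt} (hw : w ≠ p) (h : cr (w - p) (u - p) = 0) :
    Collinear ℝ ({p, w, u} : Set Pt) := by
  rw [collinear_iff_of_mem (Set.mem_insert p {w, u})]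
  refine ⟨w - p, ?_⟩
  intro q hq
  simp only [Set.mem_insert_iff, Set.mem_singleton_iff] at hq
  have hwp : w - p ≠ 0 := sub_ne_zero.mpr hw
  simp only [cr, Pi.sub_apply] at h
  rcases hq with rfl | rfl | rfl
  · exact ⟨0, by simp⟩
  · exact ⟨1, by simp⟩
  · by_cases h0 : w 0 - p 0 ≠ 0
    · refine ⟨(q 0 - p 0) / (w 0 - p 0), ?_⟩
      funext i
      simp only [vadd_eq_add, Pi.add_apply, Pi.smul_apply, Pi.sub_apply, smul_eq_mul]
      fin_cases i
      · simp only [Fin.zero_eta, Fin.mk_one, Fin.isValue]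
        field_simp
        ring
      · simp only [Fin.zero_eta, Fin.mk_one, Fin.isValue]
        field_simp
        linear_combination h
    · push_neg at h0
      have h1 : w 1 - p 1 ≠ 0 := by
        intro h1; apply hwp; funext i
        fin_cases i
        · exact h0
        · exact h1
      refine ⟨(q 1 - p 1) / (w 1 - p 1), ?_⟩
      funext i
      simp only [vadd_eq_add, Pi.add_apply, Pi.smul_apply, Pi.sub_apply, smul_eq_mul]
      fin_cases i
      · simp only [Fin.zero_eta, Fin.mk_one, Fin.isValue]
        field_simp
        linear_combination -h
      · simp only [Fin.zero_eta, Fin.mk_one, Fin.isValue]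
        field_simp
        ring

lemma theta_of_not_seg {a b z : Pt} {θ : ℝ} (h : z = a + θ • (b - a))
    (hz : z ∉ segment ℝ a b) : θ * (1 - θ) < 0 := by
  have : θ ∉ Set.Icc (0:ℝ) 1 := by
    intro hmem
    apply hz
    rw [segment_eq_image']
    exact ⟨θ, hmem, h.symm⟩
  simp only [Set.mem_Icc, not_and_or, not_le] at this
  rcases this with h1 | h1 <;> nlinarith


lemma cr_comp (u v w : Pt) (i : Fin 2) : cr u v * w i = cr w v * u i + cr u w * v i := by
  fin_cases i <;> simp [cr] <;> ring

lemma vne_comp {v : Pt} (hv : v ≠ 0) : v 0 ≠ 0 ∨ v 1 ≠ 0 := by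
  by_contra h
  push_neg at h
  exact hv (by funext i; fin_cases i <;> simp [h.1, h.2])

lemma cr_zero_trans {u u' v : Pt} (hv : v ≠ 0) (hu : cr v u = 0) (hu' : cr v u' = 0) :
    cr u u' = 0 := by
  have h0 := cr_comp u u' v 0
  have h1 := cr_comp u u' v 1
  have huv : cr u v = 0 := by simp [cr] at hu ⊢; linarith
  rw [hu', huv] at h0 h1
  simp at h0 h1
  rcases vne_comp hv with h | h
  · rcases h0 with h0 | h0
    · exact h0
    · exact absurd h0 h
  · rcases h1 with h1 | h1
    · exact h1
    · exact absurd h1 h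

lemma surround {Q : Finset Pt} {p : Pt} (hpQ : p ∉ Q)
    (hp : p ∈ convexHull ℝ (↑Q : Set Pt))
    (hK : ∀ a ∈ Q, ∀ b ∈ Q, a ≠ b → cr (a - p) (b - p) ≠ 0) :
    ∀ v : Pt, v ≠ 0 → ∃ w ∈ Q, 0 < cr v (w - p) := by
  intro v hv
  by_contra hcon
  push_neg at hcon
  rw [Finset.convexHull_eq] at hp
  obtain ⟨lam, hlam0, hlam1, hcm⟩ := hp
  rw [Finset.centerMass_eq_of_sum_1 _ _ hlam1] at hcm
  -- vector sum: ∑ lam y • (y - p) = 0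
  have hvec : ∑ y ∈ Q, lam y • (y - p) = 0 := by
    have : ∑ y ∈ Q, lam y • (y - p) = (∑ y ∈ Q, lam y • id y) - (∑ y ∈ Q, lam y) • p := by
      rw [Finset.sum_smul]
      rw [← Finset.sum_sub_distrib]
      congr 1
      funext y
      rw [smul_sub]
      rfl
    rw [this, hcm, hlam1, one_smul, sub_self]
  have hsum : ∑ y ∈ Q, lam y * cr v (y - p) = 0 := by
    have h0 : ∑ y ∈ Q, lam y * ((y:Pt) 0 - p 0) = 0 := by
      have := congrFun hvec 0
      simpa [Finset.sum_apply] using this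
    have h1 : ∑ y ∈ Q, lam y * ((y:Pt) 1 - p 1) = 0 := by
      have := congrFun hvec 1
      simpa [Finset.sum_apply] using this
    have : ∑ y ∈ Q, lam y * cr v (y - p)
        = v 0 * (∑ y ∈ Q, lam y * ((y:Pt) 1 - p 1)) - v 1 * (∑ y ∈ Q, lam y * ((y:Pt) 0 - p 0)) := by
      rw [Finset.mul_sum, Finset.mul_sum, ← Finset.sum_sub_distrib]
      apply Finset.sum_congr rfl
      intro y _
      simp [cr]
      ring
    rw [this, h0, h1]
    ring
  have hterms : ∀ y ∈ Q, lam y * cr v (y - p) = 0 := by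
    have := (Finset.sum_eq_zero_iff_of_nonpos (fun y hy =>
      mul_nonpos_of_nonneg_of_nonpos (hlam0 y hy) (hcon y hy))).mp hsum
    exact this
  -- there is some y with lam y ≠ 0
  have hex : ∃ y ∈ Q, lam y ≠ 0 := by
    by_contra hno
    push_neg at hno
    rw [Finset.sum_eq_zero hno] at hlam1
    exact zero_ne_one hlam1
  obtain ⟨y, hyQ, hyne⟩ := hex
  have hcry : cr v (y - p) = 0 := by
    have := hterms y hyQ
    rcases mul_eq_zero.mp this with h | h
    · exact absurd h hyne
    · exact h
  -- all other y' with lam ≠ 0 coincide with y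
  have huniq : ∀ y' ∈ Q, y' ≠ y → lam y' = 0 := by
    intro y' hy'Q hne
    by_contra hne0
    have hcry' : cr v (y' - p) = 0 := by
      have := hterms y' hy'Q
      rcases mul_eq_zero.mp this with h | h
      · exact absurd h hne0
      · exact h
    exact hK y' hy'Q y hyQ hne (cr_zero_trans hv hcry' hcry)
  -- then lam y = 1 and p = y
  have hlamy : lam y = 1 := by
    rw [Finset.sum_eq_single y (fun b hb hne => huniq b hb hne) (fun h => absurd hyQ h)] at hlam1
    exact hlam1
  have : p = y := by
    rw [← hcm]
    rw [Finset.sum_eq_single y (fun b hb hne => by rw [huniq b hb hne, zero_smul])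
      (fun h => absurd hyQ h)]
    rw [hlamy, one_smul]
    rfl
  exact hpQ (this ▸ hyQ)


lemma param_flip {z c d : Pt} {lmb : ℝ} (h : z = c + lmb • (d - c)) :
    z = d + (1 - lmb) • (c - d) := by
  rw [h]
  funext i
  simp only [Pi.add_apply, Pi.smul_apply, Pi.sub_apply, smul_eq_mul]
  ring

lemma shared_case {p v b d z : Pt} {σ lam : ℝ}
    (hz1 : z = v + σ • (b - v)) (hz2 : z = v + lam • (d - v))
    (hσ : σ * (1 - σ) < 0) (hlam : lam * (1 - lam) < 0)
    (G1 : 0 < cr (v - p) (d - p) * cr (d - p) (b - p))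
    (G2 : 0 < cr (v - p) (b - p) * cr (b - p) (d - p)) : False := by
  set Kvb := cr (v - p) (b - p) with hKvb
  set Kvd := cr (v - p) (d - p) with hKvd
  set Kdb := cr (d - p) (b - p) with hKdb
  have hG2' : Kvb * Kdb < 0 := by
    have e : cr (b - p) (d - p) = - Kdb := by rw [hKdb, ← cr_anti]
    rw [e] at G2
    linarith
  have e1 : σ * Kvb = lam * Kvd := by
    have a1 := cr_comb hz1 p v
    have a2 := cr_comb hz2 p v
    rw [a1] at a2
    have hvv : cr (v - p) (v - p) = 0 := by simp [cr]; ring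
    rw [hvv] at a2
    linarith [a2]
  have e2 : (lam - σ) * Kvb = lam * Kdb := by
    have a1 := cr_comb hz1 p b
    have a2 := cr_comb hz2 p b
    have hbb : cr (b - p) (b - p) = 0 := by simp [cr]; ring
    have hbv : cr (b - p) (v - p) = - Kvb := by rw [hKvb, ← cr_anti]
    have hbd : cr (b - p) (d - p) = - Kdb := by rw [hKdb, ← cr_anti]
    rw [hbb, hbv] at a1
    rw [hbv, hbd] at a2
    rw [a1] at a2
    linarith [a2]
  have hKdbne : Kdb ≠ 0 := by
    intro h
    rw [h] at hG2'
    simp at hG2'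
  have hlmb : lam < 0 ∨ 1 < lam := by
    by_contra hcon
    push_neg at hcon
    nlinarith
  rcases lt_or_gt_of_ne hKdbne with hdb | hdb
  · -- Kdb < 0 : from G1, Kvd < 0; from hG2', Kvb > 0
    have hKvd : Kvd < 0 := by nlinarith
    have hKvbpos : 0 < Kvb := by nlinarith
    rcases hlmb with hl | hl
    · have hr : 0 < lam * Kvd := mul_pos_of_neg_of_neg hl hKvd
      have hσpos : 0 < σ := by nlinarith
      have hσ1 : 1 < σ := by nlinarith
      have hr2 : 0 < lam * Kdb := mul_pos_of_neg_of_neg hl hdb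
      have hL : (lam - σ) * Kvb < 0 := mul_neg_of_neg_of_pos (by linarith) hKvbpos
      linarith [e2]
    · have hr : lam * Kvd < 0 := mul_neg_of_pos_of_neg (by linarith) hKvd
      have hσneg : σ < 0 := by nlinarith
      have hr2 : lam * Kdb < 0 := mul_neg_of_pos_of_neg (by linarith) hdb
      have hL : 0 < (lam - σ) * Kvb := mul_pos (by linarith) hKvbpos
      linarith [e2]
  · -- Kdb > 0 : Kvd > 0, Kvb < 0
    have hKvd : 0 < Kvd := by nlinarith
    have hKvbneg : Kvb < 0 := by nlinarith
    rcases hlmb with hl | hl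
    · have hr : lam * Kvd < 0 := mul_neg_of_neg_of_pos hl hKvd
      have hσpos : 0 < σ := by nlinarith
      have hσ1 : 1 < σ := by nlinarith
      have hr2 : lam * Kdb < 0 := mul_neg_of_neg_of_pos hl hdb
      have hL : 0 < (lam - σ) * Kvb := mul_pos_of_neg_of_neg (by linarith) hKvbneg
      linarith [e2]
    · have hr : 0 < lam * Kvd := mul_pos (by linarith) hKvd
      have hσneg : σ < 0 := by nlinarith
      have hr2 : 0 < lam * Kdb := mul_pos (by linarith) hdb
      have hL : (lam - σ) * Kvb < 0 := mul_neg_of_pos_of_neg (by linarith) hKvbneg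
      linarith [e2]

lemma disjoint_case {p a b c d z : Pt} {σ lam : ℝ}
    (hz1 : z = a + σ • (b - a)) (hz2 : z = c + lam • (d - c))
    (hσ : σ * (1 - σ) < 0) (hlam : lam * (1 - lam) < 0)
    (hKab : cr (a - p) (b - p) ≠ 0)
    (G1 : 0 < cr (a - p) (c - p) * cr (c - p) (b - p))
    (G2 : 0 < cr (a - p) (d - p) * cr (d - p) (b - p))
    (G3 : 0 < cr (c - p) (a - p) * cr (a - p) (d - p))
    (G4 : 0 < cr (c - p) (b - p) * cr (b - p) (d - p)) : False := by
  set k := cr (a - p) (b - p) with hk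
  set u1 := cr (c - p) (b - p) with hu1
  set u2 := cr (a - p) (c - p) with hu2
  set w1 := cr (d - p) (b - p) with hw1
  set w2 := cr (a - p) (d - p) with hw2
  have hu2w2 : u2 * w2 < 0 := by
    have e : cr (c - p) (a - p) = - u2 := by rw [hu2, ← cr_anti]
    rw [e] at G3
    nlinarith
  have hu1w1 : u1 * w1 < 0 := by
    have e : cr (b - p) (d - p) = - w1 := by rw [hw1, ← cr_anti]
    rw [e] at G4
    nlinarith
  have e1 : σ * k = (1 - lam) * u2 + lam * w2 := by
    have a1 := cr_comb hz1 p a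
    have a2 := cr_comb hz2 p a
    have haa : cr (a - p) (a - p) = 0 := by simp [cr]; ring
    rw [haa] at a1
    rw [a1] at a2
    linarith [a2]
  have e2 : (1 - σ) * k = (1 - lam) * u1 + lam * w1 := by
    have a1 := cr_comb hz1 p b
    have a2 := cr_comb hz2 p b
    have hbb : cr (b - p) (b - p) = 0 := by simp [cr]; ring
    have hba : cr (b - p) (a - p) = - k := by rw [hk, ← cr_anti]
    have hbc : cr (b - p) (c - p) = - u1 := by rw [hu1, ← cr_anti]
    have hbd : cr (b - p) (d - p) = - w1 := by rw [hw1, ← cr_anti]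
    rw [hbb, hba] at a1
    rw [hbc, hbd] at a2
    rw [a1] at a2
    linarith [a2]
  have hlmb : lam < 0 ∨ 1 < lam := by
    by_contra hcon
    push_neg at hcon
    nlinarith
  have hu1ne : u1 ≠ 0 := by
    intro h
    rw [h] at hu1w1
    simp at hu1w1
  have hfinal : 0 < (σ * k) * ((1 - σ) * k) := by
    rcases lt_or_gt_of_ne hu1ne with h1 | h1
    · -- u1 < 0 → from G1 u2 < 0, w1 > 0, w2 > 0
      have h2 : u2 < 0 := by nlinarith
      have h3 : 0 < w1 := by nlinarith
      have h4 : 0 < w2 := by nlinarith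
      rcases hlmb with hl | hl
      · have t1 : (1 - lam) * u2 < 0 := mul_neg_of_pos_of_neg (by linarith) h2
        have t2 : lam * w2 < 0 := mul_neg_of_neg_of_pos hl h4
        have t3 : (1 - lam) * u1 < 0 := mul_neg_of_pos_of_neg (by linarith) h1
        have t4 : lam * w1 < 0 := mul_neg_of_neg_of_pos hl h3
        have hA : σ * k < 0 := by linarith
        have hB : (1 - σ) * k < 0 := by linarith
        exact mul_pos_of_neg_of_neg hA hB
      · have t1 : 0 < (1 - lam) * u2 := mul_pos_of_neg_of_neg (by linarith) h2
        have t2 : 0 < lam * w2 := mul_pos (by linarith) h4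
        have t3 : 0 < (1 - lam) * u1 := mul_pos_of_neg_of_neg (by linarith) h1
        have t4 : 0 < lam * w1 := mul_pos (by linarith) h3
        have hA : 0 < σ * k := by linarith
        have hB : 0 < (1 - σ) * k := by linarith
        exact mul_pos hA hB
    · -- u1 > 0 → u2 > 0, w1 < 0, w2 < 0
      have h2 : 0 < u2 := by nlinarith
      have h3 : w1 < 0 := by nlinarith
      have h4 : w2 < 0 := by nlinarith
      rcases hlmb with hl | hl
      · have t1 : 0 < (1 - lam) * u2 := mul_pos (by linarith) h2
        have t2 : 0 < lam * w2 := mul_pos_of_neg_of_neg hl h4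
        have t3 : 0 < (1 - lam) * u1 := mul_pos (by linarith) h1
        have t4 : 0 < lam * w1 := mul_pos_of_neg_of_neg hl h3
        have hA : 0 < σ * k := by linarith
        have hB : 0 < (1 - σ) * k := by linarith
        exact mul_pos hA hB
      · have t1 : (1 - lam) * u2 < 0 := mul_neg_of_neg_of_pos (by linarith) h2
        have t2 : lam * w2 < 0 := mul_neg_of_pos_of_neg (by linarith) h4
        have t3 : (1 - lam) * u1 < 0 := mul_neg_of_neg_of_pos (by linarith) h1
        have t4 : lam * w1 < 0 := mul_neg_of_pos_of_neg (by linarith) h3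
        have hA : σ * k < 0 := by linarith
        have hB : (1 - σ) * k < 0 := by linarith
        exact mul_pos_of_neg_of_neg hA hB
  have hle : σ * (1 - σ) * (k * k) ≤ 0 :=
    mul_nonpos_of_nonpos_of_nonneg (le_of_lt hσ) (mul_self_nonneg k)
  nlinarith [hfinal, hle]


lemma star_not_blocker {p a b z w : Pt} {σ τ : ℝ}
    (hσeq : z = a + σ • (b - a)) (hσ : σ * (1 - σ) < 0)
    (hτeq : z = p + τ • (w - p)) (hτne : τ ≠ 0)
    (hKab : cr (a - p) (b - p) ≠ 0)
    (hgood : w ≠ a → w ≠ b → 0 < cr (a - p) (w - p) * cr (w - p) (b - p)) : False := by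
  by_cases hwa : w = a
  · rw [hwa] at hτeq
    have e1 : cr (a - p) (z - p) = σ * cr (a - p) (b - p) := by
      have := cr_comb hσeq p a
      rw [cr_self] at this
      linarith
    have e2 : cr (a - p) (z - p) = 0 := by
      have := cr_comb_p hτeq a
      rw [cr_self, mul_zero] at this
      exact this
    have hσ0 : σ = 0 := by
      rcases mul_eq_zero.mp (e2 ▸ e1).symm with h | h
      · exact h
      · exact absurd h hKab
    rw [hσ0] at hσ
    norm_num at hσ
  · by_cases hwb : w = b
    · rw [hwb] at hτeq
      have e1 : cr (b - p) (z - p) = - ((1 - σ) * cr (a - p) (b - p)) := by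
        have h2 := cr_comb hσeq p b
        rw [cr_self] at h2
        have e : cr (b - p) (a - p) = - cr (a - p) (b - p) := by rw [← cr_anti]
        rw [e] at h2
        linarith
      have e2 : cr (b - p) (z - p) = 0 := by
        have := cr_comb_p hτeq b
        rw [cr_self, mul_zero] at this
        exact this
      have hσ1 : 1 - σ = 0 := by
        have h3 : (1 - σ) * cr (a - p) (b - p) = 0 := by linarith [e1, e2]
        rcases mul_eq_zero.mp h3 with h | h
        · exact h
        · exact absurd h hKab
      have : σ = 1 := by linarith
      rw [this] at hσ
      norm_num at hσ
    · have hG := hgood hwa hwb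
      have e1 : σ * cr (a - p) (b - p) = τ * cr (a - p) (w - p) := by
        have h1 := cr_comb hσeq p a
        rw [cr_self] at h1
        have h2 := cr_comb_p hτeq a
        rw [h1] at h2
        linarith
      have e2 : (1 - σ) * cr (a - p) (b - p) = τ * cr (w - p) (b - p) := by
        have h1 := cr_comb hσeq p b
        rw [cr_self] at h1
        have e : cr (b - p) (a - p) = - cr (a - p) (b - p) := by rw [← cr_anti]
        rw [e] at h1
        have h2 := cr_comb_p hτeq b
        rw [h1] at h2
        have e' : cr (b - p) (w - p) = - cr (w - p) (b - p) := by rw [← cr_anti]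
        rw [e'] at h2
        linarith
      have emul : (σ * cr (a - p) (b - p)) * ((1 - σ) * cr (a - p) (b - p))
          = (τ * cr (a - p) (w - p)) * (τ * cr (w - p) (b - p)) := by
        rw [e1, e2]
      have hpos : 0 < (τ * τ) * (cr (a - p) (w - p) * cr (w - p) (b - p)) :=
        mul_pos (mul_self_pos.mpr hτne) hG
      have hnonpos : σ * (1 - σ) * (cr (a - p) (b - p) * cr (a - p) (b - p)) ≤ 0 :=
        mul_nonpos_of_nonpos_of_nonneg (le_of_lt hσ) (mul_self_nonneg _)
      nlinarith [emul, hpos, hnonpos]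


lemma core_iden (a x y : Pt) (hx : cr a x ≠ 0) (hy : cr a y ≠ 0) :
    dt a a * cr x y = cr a x * cr a y * (dt a x / cr a x - dt a y / cr a y) := by
  field_simp
  simp [cr, dt]
  ring

lemma pos_factor {d t : ℝ} (hd : 0 < d) (h : 0 < d * t) : 0 < t := by
  by_contra h'
  push_neg at h'
  nlinarith

lemma vne_comp' {v : Pt} (hv : v ≠ 0) : v 0 ≠ 0 ∨ v 1 ≠ 0 := by
  by_contra h
  push_neg at h
  exact hv (by funext i; fin_cases i <;> simp [h.1, h.2])

lemma dt_self_pos {v : Pt} (hv : v ≠ 0) : 0 < dt v v := by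
  rcases vne_comp' hv with h | h <;>
    · simp only [dt]
      nlinarith [mul_self_pos.mpr h, mul_self_nonneg (v 0), mul_self_nonneg (v 1)]

lemma two_good_pairs {Q : Finset Pt} {p : Pt}
    (hQp : ∀ w ∈ Q, w ≠ p)
    (hK : ∀ a ∈ Q, ∀ b ∈ Q, a ≠ b → cr (a - p) (b - p) ≠ 0)
    (hsurr : ∀ v : Pt, v ≠ 0 → ∃ w ∈ Q, 0 < cr v (w - p)) :
    ∃ a b c d, a ∈ Q ∧ b ∈ Q ∧ c ∈ Q ∧ d ∈ Q ∧ a ≠ b ∧ c ≠ d ∧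
      ¬(a = c ∧ b = d) ∧ ¬(a = d ∧ b = c) ∧
      (∀ w ∈ Q, w ≠ a → w ≠ b → 0 < cr (a - p) (w - p) * cr (w - p) (b - p)) ∧
      (∀ w ∈ Q, w ≠ c → w ≠ d → 0 < cr (c - p) (w - p) * cr (w - p) (d - p)) := by
  classical
  obtain ⟨w₀, hw₀Q, -⟩ := hsurr ![1, 0] (by
    intro h
    have := congrFun h 0
    norm_num at this)
  have hane : w₀ - p ≠ 0 := sub_ne_zero.mpr (hQp w₀ hw₀Q)
  have hdaa : 0 < dt (w₀ - p) (w₀ - p) := dt_self_pos hane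
  have hfw₀ : ff p w₀ w₀ = 0 := cr_self (w₀ - p)
  have hfne : ∀ u ∈ Q, u ≠ w₀ → ff p w₀ u ≠ 0 := by
    intro u huQ hne
    exact hK w₀ hw₀Q u huQ (fun h => hne h.symm)
  have CORE : ∀ u v : Pt, ff p w₀ u ≠ 0 → ff p w₀ v ≠ 0 →
      dt (w₀ - p) (w₀ - p) * cr (u - p) (v - p)
        = ff p w₀ u * ff p w₀ v * (rr p w₀ u - rr p w₀ v) :=
    fun u v hu hv => core_iden (w₀ - p) (u - p) (v - p) hu hv
  have hinj : ∀ u ∈ Q, ∀ v ∈ Q, u ≠ w₀ → v ≠ w₀ → u ≠ v → rr p w₀ u ≠ rr p w₀ v := by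
    intro u hu v hv hu0 hv0 huv heq
    have h1 := CORE u v (hfne u hu hu0) (hfne v hv hv0)
    rw [heq, sub_self, mul_zero] at h1
    refine hK u hu v hv huv ?_
    rcases mul_eq_zero.mp h1 with h | h
    · exact absurd h (ne_of_gt hdaa)
    · exact h
  set Q' : Finset Pt := Q.erase w₀ with hQ'
  set A : Finset Pt := Q'.filter (fun w => 0 < ff p w₀ w) with hA
  set B : Finset Pt := Q'.filter (fun w => ff p w₀ w < 0) with hB
  have hABmem : ∀ w ∈ Q', w ∈ A ∨ w ∈ B := by
    intro w hw
    have hfw := hfne w (Finset.mem_of_mem_erase hw) (Finset.ne_of_mem_erase hw)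
    rcases lt_or_gt_of_ne hfw with h | h
    · right; exact Finset.mem_filter.mpr ⟨hw, h⟩
    · left; exact Finset.mem_filter.mpr ⟨hw, h⟩
  have hAQ' : ∀ w ∈ A, w ∈ Q' := fun w hw => (Finset.mem_filter.mp hw).1
  have hBQ' : ∀ w ∈ B, w ∈ Q' := fun w hw => (Finset.mem_filter.mp hw).1
  have hApos : ∀ w ∈ A, 0 < ff p w₀ w := fun w hw => (Finset.mem_filter.mp hw).2
  have hBneg : ∀ w ∈ B, ff p w₀ w < 0 := fun w hw => (Finset.mem_filter.mp hw).2
  have hQ'Q : ∀ w ∈ Q', w ∈ Q := fun w hw => Finset.mem_of_mem_erase hw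
  have hQ'w₀ : ∀ w ∈ Q', w ≠ w₀ := fun w hw => Finset.ne_of_mem_erase hw
  have hABne : ∀ x ∈ A, ∀ y ∈ B, x ≠ y := by
    intro x hx y hy h
    subst h
    exact absurd (hApos x hx) (not_lt.mpr (le_of_lt (hBneg x hy)))
  have hAne : A.Nonempty := by
    obtain ⟨w, hwQ, hwpos⟩ := hsurr (w₀ - p) hane
    have hne : w ≠ w₀ := by
      intro h
      rw [h] at hwpos
      exact absurd hwpos (by rw [show cr (w₀ - p) (w₀ - p) = (0:ℝ) from cr_self _]; exact lt_irrefl 0)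
    exact ⟨w, Finset.mem_filter.mpr ⟨Finset.mem_erase.mpr ⟨hne, hwQ⟩, hwpos⟩⟩
  have hBne : B.Nonempty := by
    obtain ⟨w, hwQ, hwpos⟩ := hsurr (-(w₀ - p)) (neg_ne_zero.mpr hane)
    rw [cr_neg_left] at hwpos
    have hneg : ff p w₀ w < 0 := by
      have : cr (w₀ - p) (w - p) < 0 := by linarith
      exact this
    have hne : w ≠ w₀ := by
      intro h
      rw [h] at hneg
      rw [hfw₀] at hneg
      exact lt_irrefl 0 hneg
    exact ⟨w, Finset.mem_filter.mpr ⟨Finset.mem_erase.mpr ⟨hne, hwQ⟩, hneg⟩⟩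
  -- good-pair producing lemmas
  have GOODW0B : ∀ z ∈ B, (∀ w ∈ Q', w ≠ z → rr p w₀ w < rr p w₀ z) →
      (∀ w ∈ Q, w ≠ w₀ → w ≠ z → 0 < cr (w₀ - p) (w - p) * cr (w - p) (z - p)) := by
    intro z hzB hzmax w hwQ hw0 hwz
    have hwQ' : w ∈ Q' := Finset.mem_erase.mpr ⟨hw0, hwQ⟩
    have hfw : ff p w₀ w ≠ 0 := hfne w hwQ hw0
    have h1 := CORE w z hfw (ne_of_lt (hBneg z hzB))
    have key : 0 < ff p w₀ w * cr (w - p) (z - p) := by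
      refine pos_factor hdaa ?_
      have e : dt (w₀ - p) (w₀ - p) * (ff p w₀ w * cr (w - p) (z - p))
          = (ff p w₀ w * ff p w₀ w) * (ff p w₀ z * (rr p w₀ w - rr p w₀ z)) := by
        linear_combination ff p w₀ w * h1
      rw [e]
      exact mul_pos (mul_self_pos.mpr hfw)
        (mul_pos_of_neg_of_neg (hBneg z hzB) (sub_neg.mpr (hzmax w hwQ' hwz)))
    exact key
  have GOODW0A : ∀ z ∈ A, (∀ w ∈ Q', w ≠ z → rr p w₀ z < rr p w₀ w) →
      (∀ w ∈ Q, w ≠ w₀ → w ≠ z → 0 < cr (w₀ - p) (w - p) * cr (w - p) (z - p)) := by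
    intro z hzA hzmin w hwQ hw0 hwz
    have hwQ' : w ∈ Q' := Finset.mem_erase.mpr ⟨hw0, hwQ⟩
    have hfw : ff p w₀ w ≠ 0 := hfne w hwQ hw0
    have h1 := CORE w z hfw (ne_of_gt (hApos z hzA))
    have key : 0 < ff p w₀ w * cr (w - p) (z - p) := by
      refine pos_factor hdaa ?_
      have e : dt (w₀ - p) (w₀ - p) * (ff p w₀ w * cr (w - p) (z - p))
          = (ff p w₀ w * ff p w₀ w) * (ff p w₀ z * (rr p w₀ w - rr p w₀ z)) := by
        linear_combination ff p w₀ w * h1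
      rw [e]
      exact mul_pos (mul_self_pos.mpr hfw)
        (mul_pos (hApos z hzA) (sub_pos.mpr (hzmin w hwQ' hwz)))
    exact key
  have GOOD3 : ∀ x ∈ A, ∀ y ∈ B,
      (∀ w ∈ Q', w ≠ x → w ≠ y → 0 < (rr p w₀ w - rr p w₀ x) * (rr p w₀ w - rr p w₀ y)) →
      (∀ w ∈ Q, w ≠ x → w ≠ y → 0 < cr (x - p) (w - p) * cr (w - p) (y - p)) := by
    intro x hxA y hyB hadj w hwQ hwx hwy
    have hfx : ff p w₀ x ≠ 0 := ne_of_gt (hApos x hxA)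
    have hfy : ff p w₀ y ≠ 0 := ne_of_lt (hBneg y hyB)
    have hfxy : ff p w₀ x * ff p w₀ y < 0 :=
      mul_neg_of_pos_of_neg (hApos x hxA) (hBneg y hyB)
    by_cases hw0 : w = w₀
    · rw [hw0]
      have e1 : cr (x - p) (w₀ - p) = - ff p w₀ x := by
        rw [cr_anti]; rfl
      have e2 : cr (w₀ - p) (y - p) = ff p w₀ y := rfl
      rw [e1, e2]
      nlinarith
    · have hwQ' : w ∈ Q' := Finset.mem_erase.mpr ⟨hw0, hwQ⟩
      have hfw : ff p w₀ w ≠ 0 := hfne w hwQ hw0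
      have h1 := CORE x w hfx hfw
      have h2 := CORE w y hfw hfy
      have hadjw := hadj w hwQ' hwx hwy
      refine pos_factor (mul_pos hdaa hdaa) ?_
      have e : dt (w₀ - p) (w₀ - p) * dt (w₀ - p) (w₀ - p)
            * (cr (x - p) (w - p) * cr (w - p) (y - p))
          = (ff p w₀ x * ff p w₀ y) * (ff p w₀ w * ff p w₀ w)
            * ((rr p w₀ x - rr p w₀ w) * (rr p w₀ w - rr p w₀ y)) := by
        linear_combination (cr (w - p) (y - p) * dt (w₀ - p) (w₀ - p)) * h1
          + (ff p w₀ x * ff p w₀ w * (rr p w₀ x - rr p w₀ w)) * h2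
      rw [e]
      have hneg : (rr p w₀ x - rr p w₀ w) * (rr p w₀ w - rr p w₀ y) < 0 := by nlinarith
      have hneg2 : (ff p w₀ x * ff p w₀ y) * (ff p w₀ w * ff p w₀ w) < 0 :=
        mul_neg_of_neg_of_pos hfxy (mul_self_pos.mpr hfw)
      nlinarith
  -- extremal elements
  obtain ⟨M, hMQ', hMmax⟩ := Finset.exists_max_image Q' (rr p w₀)
    ⟨hAne.choose, hAQ' _ hAne.choose_spec⟩
  obtain ⟨N, hNQ', hNmin⟩ := Finset.exists_min_image Q' (rr p w₀)
    ⟨hAne.choose, hAQ' _ hAne.choose_spec⟩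
  have hMstrict : ∀ w ∈ Q', w ≠ M → rr p w₀ w < rr p w₀ M := fun w hw hne =>
    lt_of_le_of_ne (hMmax w hw)
      (hinj w (hQ'Q w hw) M (hQ'Q M hMQ') (hQ'w₀ w hw) (hQ'w₀ M hMQ') hne)
  have hNstrict : ∀ w ∈ Q', w ≠ N → rr p w₀ N < rr p w₀ w := fun w hw hne =>
    lt_of_le_of_ne (hNmin w hw)
      (hinj N (hQ'Q N hNQ') w (hQ'Q w hw) (hQ'w₀ N hNQ') (hQ'w₀ w hw) (fun h => hne h.symm))
  rcases hABmem M hMQ' with hMA | hMB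
  · rcases hABmem N hNQ' with hNA | hNB
    · -- case (c): M ∈ A, N ∈ A : pair (w₀, N) and an interior pair
      obtain ⟨y, hyB, hymin⟩ := Finset.exists_min_image B (rr p w₀) hBne
      have hNy : N ≠ y := hABne N hNA y hyB
      have hA''ne : (A.filter (fun w => rr p w₀ w < rr p w₀ y)).Nonempty :=
        ⟨N, Finset.mem_filter.mpr ⟨hNA, hNstrict y (hBQ' y hyB) (fun h => hNy h.symm)⟩⟩
      obtain ⟨x, hxA'', hxmax⟩ := Finset.exists_max_image _ (rr p w₀) hA''ne
      have hxA : x ∈ A := (Finset.mem_filter.mp hxA'').1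
      have hxy : rr p w₀ x < rr p w₀ y := (Finset.mem_filter.mp hxA'').2
      have hadj : ∀ w ∈ Q', w ≠ x → w ≠ y →
          0 < (rr p w₀ w - rr p w₀ x) * (rr p w₀ w - rr p w₀ y) := by
        intro w hw hwx hwy
        rcases hABmem w hw with hwA | hwB
        · by_cases hlt : rr p w₀ w < rr p w₀ y
          · have : rr p w₀ w ≤ rr p w₀ x :=
              hxmax w (Finset.mem_filter.mpr ⟨hwA, hlt⟩)
            have hne : rr p w₀ w ≠ rr p w₀ x :=
              hinj w (hQ'Q w hw) x (hQ'Q x (hAQ' x hxA)) (hQ'w₀ w hw)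
                (hQ'w₀ x (hAQ' x hxA)) hwx
            have h1 : rr p w₀ w < rr p w₀ x := lt_of_le_of_ne this hne
            nlinarith
          · push_neg at hlt
            have hne : rr p w₀ w ≠ rr p w₀ y :=
              hinj w (hQ'Q w hw) y (hQ'Q y (hBQ' y hyB)) (hQ'w₀ w hw)
                (hQ'w₀ y (hBQ' y hyB)) hwy
            have h1 : rr p w₀ y < rr p w₀ w := lt_of_le_of_ne hlt (fun h => hne h.symm)
            nlinarith
        · have : rr p w₀ y ≤ rr p w₀ w := hymin w hwB
          have hne : rr p w₀ w ≠ rr p w₀ y :=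
            hinj w (hQ'Q w hw) y (hQ'Q y (hBQ' y hyB)) (hQ'w₀ w hw)
              (hQ'w₀ y (hBQ' y hyB)) hwy
          have h1 : rr p w₀ y < rr p w₀ w := lt_of_le_of_ne this (fun h => hne h.symm)
          nlinarith
      refine ⟨w₀, N, x, y, hw₀Q, hQ'Q N hNQ', hQ'Q x (hAQ' x hxA), hQ'Q y (hBQ' y hyB),
        fun h => (hQ'w₀ N hNQ') h.symm, hABne x hxA y hyB, ?_, ?_, ?_, ?_⟩
      · rintro ⟨h1, -⟩; exact (hQ'w₀ x (hAQ' x hxA)) h1.symm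
      · rintro ⟨h1, -⟩; exact (hQ'w₀ y (hBQ' y hyB)) h1.symm
      · exact GOODW0A N hNA hNstrict
      · exact GOOD3 x hxA y hyB hadj
    · -- case (a): M ∈ A? no: here M ∈ A, N ∈ B. case (d): two interior pairs
      -- pair 1 : (x₁, y₁), y₁ = argmax B, x₁ = argmin of A above y₁
      obtain ⟨y₁, hy₁B, hy₁max⟩ := Finset.exists_max_image B (rr p w₀) hBne
      have hMy₁ : M ≠ y₁ := hABne M hMA y₁ hy₁B
      have hA₁ne : (A.filter (fun w => rr p w₀ y₁ < rr p w₀ w)).Nonempty :=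
        ⟨M, Finset.mem_filter.mpr ⟨hMA, hMstrict y₁ (hBQ' y₁ hy₁B) (fun h => hMy₁ h.symm)⟩⟩
      obtain ⟨x₁, hx₁A₁, hx₁min⟩ := Finset.exists_min_image _ (rr p w₀) hA₁ne
      have hx₁A : x₁ ∈ A := (Finset.mem_filter.mp hx₁A₁).1
      have hx₁y₁ : rr p w₀ y₁ < rr p w₀ x₁ := (Finset.mem_filter.mp hx₁A₁).2
      have hadj1 : ∀ w ∈ Q', w ≠ x₁ → w ≠ y₁ →
          0 < (rr p w₀ w - rr p w₀ x₁) * (rr p w₀ w - rr p w₀ y₁) := by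
        intro w hw hwx hwy
        rcases hABmem w hw with hwA | hwB
        · by_cases hlt : rr p w₀ y₁ < rr p w₀ w
          · have : rr p w₀ x₁ ≤ rr p w₀ w :=
              hx₁min w (Finset.mem_filter.mpr ⟨hwA, hlt⟩)
            have hne : rr p w₀ w ≠ rr p w₀ x₁ :=
              hinj w (hQ'Q w hw) x₁ (hQ'Q x₁ (hAQ' x₁ hx₁A)) (hQ'w₀ w hw)
                (hQ'w₀ x₁ (hAQ' x₁ hx₁A)) hwx
            have h1 : rr p w₀ x₁ < rr p w₀ w := lt_of_le_of_ne this (fun h => hne h.symm)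
            nlinarith
          · push_neg at hlt
            have hne : rr p w₀ w ≠ rr p w₀ y₁ :=
              hinj w (hQ'Q w hw) y₁ (hQ'Q y₁ (hBQ' y₁ hy₁B)) (hQ'w₀ w hw)
                (hQ'w₀ y₁ (hBQ' y₁ hy₁B)) hwy
            have h1 : rr p w₀ w < rr p w₀ y₁ := lt_of_le_of_ne hlt hne
            nlinarith
        · have : rr p w₀ w ≤ rr p w₀ y₁ := hy₁max w hwB
          have hne : rr p w₀ w ≠ rr p w₀ y₁ :=
            hinj w (hQ'Q w hw) y₁ (hQ'Q y₁ (hBQ' y₁ hy₁B)) (hQ'w₀ w hw)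
              (hQ'w₀ y₁ (hBQ' y₁ hy₁B)) hwy
          have h1 : rr p w₀ w < rr p w₀ y₁ := lt_of_le_of_ne this hne
          nlinarith
      -- pair 2 : (x₂, y₂), x₂ = argmin A, y₂ = argmax of B below x₂
      obtain ⟨x₂, hx₂A, hx₂min⟩ := Finset.exists_min_image A (rr p w₀) hAne
      have hNx₂ : x₂ ≠ N := hABne x₂ hx₂A N hNB
      have hB₂ne : (B.filter (fun w => rr p w₀ w < rr p w₀ x₂)).Nonempty :=
        ⟨N, Finset.mem_filter.mpr ⟨hNB, hNstrict x₂ (hAQ' x₂ hx₂A) hNx₂⟩⟩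
      obtain ⟨y₂, hy₂B₂, hy₂max⟩ := Finset.exists_max_image _ (rr p w₀) hB₂ne
      have hy₂B : y₂ ∈ B := (Finset.mem_filter.mp hy₂B₂).1
      have hy₂x₂ : rr p w₀ y₂ < rr p w₀ x₂ := (Finset.mem_filter.mp hy₂B₂).2
      have hadj2 : ∀ w ∈ Q', w ≠ x₂ → w ≠ y₂ →
          0 < (rr p w₀ w - rr p w₀ x₂) * (rr p w₀ w - rr p w₀ y₂) := by
        intro w hw hwx hwy
        rcases hABmem w hw with hwA | hwB
        · have : rr p w₀ x₂ ≤ rr p w₀ w := hx₂min w hwA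
          have hne : rr p w₀ w ≠ rr p w₀ x₂ :=
            hinj w (hQ'Q w hw) x₂ (hQ'Q x₂ (hAQ' x₂ hx₂A)) (hQ'w₀ w hw)
              (hQ'w₀ x₂ (hAQ' x₂ hx₂A)) hwx
          have h1 : rr p w₀ x₂ < rr p w₀ w := lt_of_le_of_ne this (fun h => hne h.symm)
          nlinarith
        · by_cases hlt : rr p w₀ w < rr p w₀ x₂
          · have : rr p w₀ w ≤ rr p w₀ y₂ :=
              hy₂max w (Finset.mem_filter.mpr ⟨hwB, hlt⟩)
            have hne : rr p w₀ w ≠ rr p w₀ y₂ :=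
              hinj w (hQ'Q w hw) y₂ (hQ'Q y₂ (hBQ' y₂ hy₂B)) (hQ'w₀ w hw)
                (hQ'w₀ y₂ (hBQ' y₂ hy₂B)) hwy
            have h1 : rr p w₀ w < rr p w₀ y₂ := lt_of_le_of_ne this hne
            nlinarith
          · push_neg at hlt
            have hne : rr p w₀ w ≠ rr p w₀ x₂ :=
              hinj w (hQ'Q w hw) x₂ (hQ'Q x₂ (hAQ' x₂ hx₂A)) (hQ'w₀ w hw)
                (hQ'w₀ x₂ (hAQ' x₂ hx₂A)) hwx
            have h1 : rr p w₀ x₂ < rr p w₀ w := lt_of_le_of_ne hlt (fun h => hne h.symm)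
            nlinarith
      -- the two pairs are distinct, otherwise all points lie in a halfplane
      have hdist : ¬(x₁ = x₂ ∧ y₁ = y₂) := by
        rintro ⟨rfl, rfl⟩
        -- halfplane contradiction
        set s : ℝ := (rr p w₀ x₁ + rr p w₀ y₁) / 2 with hs
        have hsx : s < rr p w₀ x₁ := by rw [hs]; linarith
        have hsy : rr p w₀ y₁ < s := by rw [hs]; linarith
        have hBlt : ∀ b ∈ B, rr p w₀ b < s := by
          intro b hb
          have h1 : rr p w₀ b ≤ rr p w₀ y₁ := hy₁max b hb
          linarith
        have hAgt : ∀ w ∈ A, s < rr p w₀ w := by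
          intro w hw
          have h1 : rr p w₀ x₁ ≤ rr p w₀ w := hx₂min w hw
          linarith
        -- the vector v := s • (w₀-p) + rot (w₀-p)
        set aa : Pt := w₀ - p with haa
        set v : Pt := s • aa + ![-(aa 1), aa 0] with hv
        have hcrav : cr aa v = dt aa aa := by
          rw [hv]
          simp only [cr, dt, Pi.add_apply, Pi.smul_apply, smul_eq_mul,
            Matrix.cons_val_zero, Matrix.cons_val_one, Matrix.head_cons]
          ring
        have hvne : v ≠ 0 := by
          intro h
          rw [h] at hcrav
          have : cr aa (0:Pt) = 0 := by simp [cr]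
          rw [this] at hcrav
          exact absurd hcrav.symm (ne_of_gt hdaa)
        have hval : ∀ x : Pt, cr v x = s * cr aa x - dt aa x := by
          intro x
          rw [hv]
          simp only [cr, dt, Pi.add_apply, Pi.smul_apply, smul_eq_mul,
            Matrix.cons_val_zero, Matrix.cons_val_one, Matrix.head_cons]
          ring
        obtain ⟨w, hwQ, hwpos⟩ := hsurr v hvne
        rw [hval (w - p)] at hwpos
        by_cases hw0 : w = w₀
        · rw [hw0, ← haa, cr_self aa] at hwpos
          nlinarith
        · have hwQ' : w ∈ Q' := Finset.mem_erase.mpr ⟨hw0, hwQ⟩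
          have hfw : ff p w₀ w ≠ 0 := hfne w hwQ hw0
          have hgf : dt aa (w - p) = rr p w₀ w * ff p w₀ w := by
            rw [show rr p w₀ w = gg p w₀ w / ff p w₀ w from rfl]
            field_simp
            rfl
          have hcraw : cr aa (w - p) = ff p w₀ w := rfl
          rw [hcraw, hgf] at hwpos
          rcases hABmem w hwQ' with hwA | hwB
          · have h1 := hAgt w hwA
            have h2 := hApos w hwA
            nlinarith
          · have h1 := hBlt w hwB
            have h2 := hBneg w hwB
            nlinarith
      refine ⟨x₁, y₁, x₂, y₂, hQ'Q x₁ (hAQ' x₁ hx₁A), hQ'Q y₁ (hBQ' y₁ hy₁B),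
        hQ'Q x₂ (hAQ' x₂ hx₂A), hQ'Q y₂ (hBQ' y₂ hy₂B),
        hABne x₁ hx₁A y₁ hy₁B, hABne x₂ hx₂A y₂ hy₂B, hdist, ?_, ?_, ?_⟩
      · rintro ⟨h1, -⟩; exact hABne x₁ hx₁A y₂ hy₂B h1
      · exact GOOD3 x₁ hx₁A y₁ hy₁B hadj1
      · exact GOOD3 x₂ hx₂A y₂ hy₂B hadj2
  · rcases hABmem N hNQ' with hNA | hNB
    · -- case (a): M ∈ B, N ∈ A : pairs (w₀, M), (w₀, N)
      refine ⟨w₀, M, w₀, N, hw₀Q, hQ'Q M hMQ', hw₀Q, hQ'Q N hNQ',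
        fun h => (hQ'w₀ M hMQ') h.symm, fun h => (hQ'w₀ N hNQ') h.symm, ?_, ?_, ?_, ?_⟩
      · rintro ⟨-, h2⟩
        exact hABne N hNA M hMB h2.symm
      · rintro ⟨h1, -⟩; exact (hQ'w₀ N hNQ') h1.symm
      · exact GOODW0B M hMB hMstrict
      · exact GOODW0A N hNA hNstrict
    · -- case (b): M ∈ B, N ∈ B : pair (w₀, M) and interior pair
      obtain ⟨x, hxA, hxmax⟩ := Finset.exists_max_image A (rr p w₀) hAne
      have hxM : x ≠ M := hABne x hxA M hMB
      have hB'ne : (B.filter (fun w => rr p w₀ x < rr p w₀ w)).Nonempty :=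
        ⟨M, Finset.mem_filter.mpr ⟨hMB, hMstrict x (hAQ' x hxA) hxM⟩⟩
      obtain ⟨y, hyB', hymin⟩ := Finset.exists_min_image _ (rr p w₀) hB'ne
      have hyB : y ∈ B := (Finset.mem_filter.mp hyB').1
      have hxy : rr p w₀ x < rr p w₀ y := (Finset.mem_filter.mp hyB').2
      have hadj : ∀ w ∈ Q', w ≠ x → w ≠ y →
          0 < (rr p w₀ w - rr p w₀ x) * (rr p w₀ w - rr p w₀ y) := by
        intro w hw hwx hwy
        rcases hABmem w hw with hwA | hwB
        · have : rr p w₀ w ≤ rr p w₀ x := hxmax w hwA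
          have hne : rr p w₀ w ≠ rr p w₀ x :=
            hinj w (hQ'Q w hw) x (hQ'Q x (hAQ' x hxA)) (hQ'w₀ w hw)
              (hQ'w₀ x (hAQ' x hxA)) hwx
          have h1 : rr p w₀ w < rr p w₀ x := lt_of_le_of_ne this hne
          nlinarith
        · by_cases hlt : rr p w₀ x < rr p w₀ w
          · have : rr p w₀ y ≤ rr p w₀ w :=
              hymin w (Finset.mem_filter.mpr ⟨hwB, hlt⟩)
            have hne : rr p w₀ w ≠ rr p w₀ y :=
              hinj w (hQ'Q w hw) y (hQ'Q y (hBQ' y hyB)) (hQ'w₀ w hw)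
                (hQ'w₀ y (hBQ' y hyB)) hwy
            have h1 : rr p w₀ y < rr p w₀ w := lt_of_le_of_ne this (fun h => hne h.symm)
            nlinarith
          · push_neg at hlt
            have hne : rr p w₀ w ≠ rr p w₀ x :=
              hinj w (hQ'Q w hw) x (hQ'Q x (hAQ' x hxA)) (hQ'w₀ w hw)
                (hQ'w₀ x (hAQ' x hxA)) hwx
            have h1 : rr p w₀ w < rr p w₀ x := lt_of_le_of_ne hlt hne
            nlinarith
      refine ⟨w₀, M, x, y, hw₀Q, hQ'Q M hMQ', hQ'Q x (hAQ' x hxA), hQ'Q y (hBQ' y hyB),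
        fun h => (hQ'w₀ M hMQ') h.symm, hABne x hxA y hyB, ?_, ?_, ?_, ?_⟩
      · rintro ⟨h1, -⟩; exact (hQ'w₀ x (hAQ' x hxA)) h1.symm
      · rintro ⟨h1, -⟩; exact (hQ'w₀ y (hBQ' y hyB)) h1.symm
      · exact GOODW0B M hMB hMstrict
      · exact GOOD3 x hxA y hyB hadj


theorem stmt5 (n : ℕ) (P R : Finset Pt) (hPcard : P.card = n) (hRcard : R.card = n)
    (hgp : GenPos ↑P) (hdisj : Disjoint P R)
    (hpierce : ∀ x ∈ P, ∀ y ∈ P, x ≠ y →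
      ∃ r ∈ R, Collinear ℝ ({x, y, r} : Set Pt) ∧ r ∉ segment ℝ x y) :
    ∀ x ∈ P, x ∉ convexHull ℝ ((↑P : Set Pt) \ {x}) := by
  classical
  intro p hpP hmem
  set Q : Finset Pt := P.erase p with hQdef
  have hQcoe : (↑Q : Set Pt) = (↑P : Set Pt) \ {p} := Finset.coe_erase p P
  rw [← hQcoe] at hmem
  have hpQ : p ∉ Q := Finset.notMem_erase p P
  have hQP : ∀ w ∈ Q, w ∈ P := fun w hw => Finset.mem_of_mem_erase hw
  have hQp : ∀ w ∈ Q, w ≠ p := fun w hw => Finset.ne_of_mem_erase hw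
  have hpR : p ∉ R := Finset.disjoint_left.mp hdisj hpP
  have hK : ∀ a ∈ Q, ∀ b ∈ Q, a ≠ b → cr (a - p) (b - p) ≠ 0 := by
    intro a ha b hb hab hcr
    exact hgp p (Finset.mem_coe.mpr hpP) a (Finset.mem_coe.mpr (hQP a ha))
      b (Finset.mem_coe.mpr (hQP b hb))
      (fun h => hQp a ha h.symm) (fun h => hQp b hb h.symm) hab
      (collinear_of_cr (hQp a ha) hcr)
  have hsurr := surround hpQ hmem hK
  obtain ⟨a, b, c, d, haQ, hbQ, hcQ, hdQ, hab, hcd, hne1, hne2, gd1, gd2⟩ :=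
    two_good_pairs hQp hK hsurr
  -- star blockers
  have hstar : ∀ w : Pt, ∃ z : Pt, w ∈ Q → z ∈ R ∧ z ≠ p ∧ ∃ τ : ℝ, z = p + τ • (w - p) := by
    intro w
    by_cases hw : w ∈ Q
    · obtain ⟨z, hzR, hzCol, -⟩ := hpierce p hpP w (hQP w hw) (fun h => hQp w hw h.symm)
      obtain ⟨τ, hτ⟩ := collinear_param (show p ≠ w from fun h => hQp w hw h.symm) hzCol
      refine ⟨z, fun _ => ⟨hzR, ?_, τ, hτ⟩⟩
      intro h
      exact hpR (h ▸ hzR)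
    · exact ⟨p, fun h => absurd h hw⟩
  choose F hF using hstar
  have hFinj : ∀ w ∈ Q, ∀ w' ∈ Q, F w = F w' → w = w' := by
    intro w hw w' hw' heq
    by_contra hne
    obtain ⟨hR, hnep, τ, hτ⟩ := hF w hw
    obtain ⟨hR', hnep', τ', hτ'⟩ := hF w' hw'
    have hτ'ne : τ' ≠ 0 := by
      intro h
      rw [h] at hτ'
      simp only [zero_smul, add_zero] at hτ'
      exact hnep' hτ'
    have h1 : cr (w - p) (F w - p) = 0 := by
      rw [cr_comb_p hτ w, cr_self, mul_zero]
    have h2 : cr (w - p) (F w' - p) = τ' * cr (w - p) (w' - p) := cr_comb_p hτ' w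
    rw [← heq, h1] at h2
    rcases mul_eq_zero.mp h2.symm with h | h
    · exact hτ'ne h
    · exact hK w hw w' hw' hne h
  set T : Finset Pt := Q.attach.image (fun w => F w.1) with hTdef
  have hTcard : T.card = Q.card := by
    rw [hTdef, Finset.card_image_of_injOn, Finset.card_attach]
    intro x hx y hy h
    exact Subtype.ext (hFinj x.1 x.2 y.1 y.2 h)
  have hTsub : T ⊆ R := by
    intro z hz
    obtain ⟨w, -, rfl⟩ := Finset.mem_image.mp hz
    exact (hF w.1 w.2).1
  -- blockers of the two good pairs
  obtain ⟨s₁, hs₁R, hs₁Col, hs₁Seg⟩ := hpierce a (hQP a haQ) b (hQP b hbQ) hab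
  obtain ⟨σ, hσeq⟩ := collinear_param hab hs₁Col
  have hσ := theta_of_not_seg hσeq hs₁Seg
  obtain ⟨s₂, hs₂R, hs₂Col, hs₂Seg⟩ := hpierce c (hQP c hcQ) d (hQP d hdQ) hcd
  obtain ⟨lam, hleq⟩ := collinear_param hcd hs₂Col
  have hlam2 := theta_of_not_seg hleq hs₂Seg
  have hs₁T : s₁ ∉ T := by
    intro hmemT
    obtain ⟨w, -, heq⟩ := Finset.mem_image.mp hmemT
    obtain ⟨hwR, hwnep, τ, hτ⟩ := hF w.1 w.2
    rw [heq] at hτ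
    have hτne : τ ≠ 0 := by
      intro h
      rw [h] at hτ
      simp only [zero_smul, add_zero] at hτ
      exact hpR (hτ ▸ hs₁R)
    exact star_not_blocker hσeq hσ hτ hτne (hK a haQ b hbQ hab)
      (fun h1 h2 => gd1 w.1 w.2 h1 h2)
  have hs₂T : s₂ ∉ T := by
    intro hmemT
    obtain ⟨w, -, heq⟩ := Finset.mem_image.mp hmemT
    obtain ⟨hwR, hwnep, τ, hτ⟩ := hF w.1 w.2
    rw [heq] at hτ
    have hτne : τ ≠ 0 := by
      intro h
      rw [h] at hτ
      simp only [zero_smul, add_zero] at hτ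
      exact hpR (hτ ▸ hs₂R)
    exact star_not_blocker hleq hlam2 hτ hτne (hK c hcQ d hdQ hcd)
      (fun h1 h2 => gd2 w.1 w.2 h1 h2)
  have hs12 : s₁ ≠ s₂ := by
    intro h
    rw [← h] at hleq
    by_cases hac : a = c
    · have hbd : b ≠ d := fun h' => hne1 ⟨hac, h'⟩
      rw [← hac] at hleq
      have G2' := gd2 b hbQ (fun h' => hab (h'.trans hac.symm).symm) hbd
      rw [← hac] at G2'
      exact shared_case hσeq hleq hσ hlam2
        (gd1 d hdQ (fun h' => hcd (h'.trans hac).symm) (fun h' => hbd h'.symm)) G2'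
    · by_cases had : a = d
      · have hbc : b ≠ c := fun h' => hne2 ⟨had, h'⟩
        have hz2' := param_flip hleq
        rw [← had] at hz2'
        have hlam2P : (1 - lam) * (1 - (1 - lam)) < 0 := by nlinarith
        have G2' := gd2 b hbQ hbc (fun h' => hab (h'.trans had.symm).symm)
        rw [← had] at G2'
        exact shared_case hσeq hz2' hσ hlam2P
          (gd1 c hcQ (fun h' => hac h'.symm) (fun h' => hbc h'.symm)) (good_flip G2')
      · by_cases hbc : b = c
        · have hz1' := param_flip hσeq
          have hσ' : (1 - σ) * (1 - (1 - σ)) < 0 := by nlinarith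
          rw [← hbc] at hleq
          have G1' := gd1 d hdQ (fun h' => hne2 ⟨h'.symm, hbc⟩)
            (fun h' => hcd (hbc.symm.trans h'.symm))
          have G2' := gd2 a haQ (fun h' => hab (h'.trans hbc.symm)) had
          rw [← hbc] at G2'
          exact shared_case hz1' hleq hσ' hlam2 (good_flip G1') G2'
        · by_cases hbd : b = d
          · have hz1' := param_flip hσeq
            have hσ' : (1 - σ) * (1 - (1 - σ)) < 0 := by nlinarith
            have hz2' := param_flip hleq
            rw [← hbd] at hz2'
            have hlam2P : (1 - lam) * (1 - (1 - lam)) < 0 := by nlinarith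
            have G1' := gd1 c hcQ (fun h' => hne1 ⟨h'.symm, hbd⟩) (fun h' => hbc h'.symm)
            have G2' := gd2 a haQ hac (fun h' => hab (h'.trans hbd.symm))
            rw [← hbd] at G2'
            exact shared_case hz1' hz2' hσ' hlam2P (good_flip G1') (good_flip G2')
          · exact disjoint_case hσeq hleq hσ hlam2 (hK a haQ b hbQ hab)
              (gd1 c hcQ (fun h' => hac h'.symm) (fun h' => hbc h'.symm))
              (gd1 d hdQ (fun h' => had h'.symm) (fun h' => hbd h'.symm))
              (gd2 a haQ hac had)
              (gd2 b hbQ hbc hbd)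
  -- counting
  have hbig : insert s₁ (insert s₂ T) ⊆ R := by
    intro z hz
    rcases Finset.mem_insert.mp hz with rfl | hz
    · exact hs₁R
    rcases Finset.mem_insert.mp hz with rfl | hz
    · exact hs₂R
    · exact hTsub hz
  have hcard : (insert s₁ (insert s₂ T)).card = T.card + 2 := by
    rw [Finset.card_insert_of_notMem (fun h => by
      rcases Finset.mem_insert.mp h with h | h
      · exact hs12 h
      · exact hs₁T h), Finset.card_insert_of_notMem hs₂T]
  have hQcard : Q.card = n - 1 := by
    rw [hQdef, Finset.card_erase_of_mem hpP, hPcard]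
  have hn1 : 1 ≤ n := by
    rw [← hPcard]
    exact Finset.card_pos.mpr ⟨p, hpP⟩
  have hle := Finset.card_le_card hbig
  rw [hcard, hTcard, hQcard, hRcard] at hle
  omega
end

section
/- Let x_0, …, x_{n−1} and r_0, …, r_{n−1} be points in the plane such that x_i, x_j, r_k are collinear whenever i + j + k ≡ 0 (mod n), with the nine points x_{n−1−i}, …, x_{n−6−i}, r_{5+2i}, r_{7+2i}, r_{9+2i} pairwise distinct and the relevant six lines distinct. Then any cubic curve passing through eight of the nine points x_{n−1−i}, x_{n−2−i}, …, x_{n−6−i}, r_{5+2i}, r_{7+2i}, r_{9+2i} passes through all nine. -/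
/-- The set of points collinear with `a` and `b` (the line through `a` and `b`
when `a ≠ b`). -/
def lineThrough (a b : Pt) : Set Pt := {q : Pt | Collinear ℝ ({a, b, q} : Set Pt)}

namespace CB9

open MvPolynomial

/-! ### Planar cross form and lines -/

def cross (u v q : Pt) : ℝ := (v 0 - u 0) * (q 1 - u 1) - (v 1 - u 1) * (q 0 - u 0)

lemma pt_ext {u v : Pt} (h0 : u 0 = v 0) (h1 : u 1 = v 1) : u = v := by
  funext j; fin_cases j <;> assumption

lemma pt_ne {u v : Pt} (h : u ≠ v) : u 0 ≠ v 0 ∨ u 1 ≠ v 1 := by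
  by_contra hc
  push_neg at hc
  exact h (pt_ext hc.1 hc.2)

lemma cross_self_left (u v : Pt) : cross u v u = 0 := by unfold cross; ring

lemma cross_self_right (u v : Pt) : cross u v v = 0 := by unfold cross; ring

lemma exists_param {u v a : Pt} (huv : u ≠ v) (h0 : cross u v a = 0) :
    ∃ s : ℝ, a 0 = u 0 + s * (v 0 - u 0) ∧ a 1 = u 1 + s * (v 1 - u 1) := by
  unfold cross at h0
  rcases eq_or_ne (v 0) (u 0) with h | h
  · have hv1 : v 1 - u 1 ≠ 0 := by
      rcases pt_ne huv with h' | h'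
      · exact absurd h.symm h'
      · exact sub_ne_zero.mpr (fun he => h' he.symm)
    refine ⟨(a 1 - u 1) / (v 1 - u 1), ?_, by field_simp; ring⟩
    have : (v 1 - u 1) * (a 0 - u 0) = 0 := by rw [h] at h0; linarith [h0]
    have h2 : a 0 - u 0 = 0 := by
      rcases mul_eq_zero.mp this with h' | h'
      · exact absurd h' hv1
      · exact h'
    rw [h]; linarith [h2]
  · have hv0 : v 0 - u 0 ≠ 0 := sub_ne_zero.mpr h
    refine ⟨(a 0 - u 0) / (v 0 - u 0), by field_simp; ring, ?_⟩
    field_simp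
    linarith [h0]

lemma key {u v a b : Pt} (huv : u ≠ v) (hab : a ≠ b)
    (ha : cross u v a = 0) (hb : cross u v b = 0) :
    ∃ c : ℝ, c ≠ 0 ∧ ∀ q : Pt, cross a b q = c * cross u v q := by
  obtain ⟨s, hs0, hs1⟩ := exists_param huv ha
  obtain ⟨t, ht0, ht1⟩ := exists_param huv hb
  refine ⟨t - s, ?_, ?_⟩
  · intro hts
    have hst : s = t := by linarith [sub_eq_zero.mp hts]
    exact hab (pt_ext (by rw [hs0, ht0, hst]) (by rw [hs1, ht1, hst]))
  · intro q
    unfold cross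
    rw [hs0, hs1, ht0, ht1]
    ring

lemma collinear_iff_cross {u v q : Pt} (huv : u ≠ v) :
    Collinear ℝ ({u, v, q} : Set Pt) ↔ cross u v q = 0 := by
  constructor
  · intro h
    obtain ⟨d, hd⟩ := (collinear_iff_of_mem (show u ∈ ({u, v, q} : Set Pt) by simp)).mp h
    obtain ⟨r1, hr1⟩ := hd v (by simp)
    obtain ⟨r2, hr2⟩ := hd q (by simp)
    have hv0 : v 0 = r1 * d 0 + u 0 := by rw [hr1]; simp
    have hv1 : v 1 = r1 * d 1 + u 1 := by rw [hr1]; simp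
    have hq0 : q 0 = r2 * d 0 + u 0 := by rw [hr2]; simp
    have hq1 : q 1 = r2 * d 1 + u 1 := by rw [hr2]; simp
    unfold cross
    rw [hv0, hv1, hq0, hq1]
    ring
  · intro h
    obtain ⟨s, hs0, hs1⟩ := exists_param huv h
    apply (collinear_iff_of_mem (show u ∈ ({u, v, q} : Set Pt) by simp)).mpr
    refine ⟨fun j => v j - u j, ?_⟩
    intro p hp
    rcases hp with h' | h' | h'
    · exact ⟨0, by simp [h']⟩
    · refine ⟨1, ?_⟩; rw [h']; funext j; simp
    · refine ⟨s, ?_⟩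
      rw [h']; apply pt_ext <;> simp [hs0, hs1] <;> ring

lemma lineThrough_eq_of_cross {u v a b : Pt} (huv : u ≠ v) (hab : a ≠ b)
    (ha : cross u v a = 0) (hb : cross u v b = 0) :
    lineThrough u v = lineThrough a b := by
  obtain ⟨c, hc, hcq⟩ := key huv hab ha hb
  ext q
  simp only [lineThrough, Set.mem_setOf_eq]
  rw [collinear_iff_cross huv, collinear_iff_cross hab, hcq q, mul_eq_zero]
  tauto

noncomputable def linPoly (u v : Pt) : MvPolynomial (Fin 2) ℝ :=
  C (v 0 - u 0) * (X 1 - C (u 1)) - C (v 1 - u 1) * (X 0 - C (u 0))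

lemma eval_linPoly (u v q : Pt) : eval q (linPoly u v) = cross u v q := by
  simp [linPoly, cross]

lemma totalDegree_linPoly (u v : Pt) : (linPoly u v).totalDegree ≤ 1 := by
  unfold linPoly
  apply le_trans (totalDegree_sub _ _)
  apply max_le <;>
  · apply le_trans (totalDegree_mul _ _)
    simp only [totalDegree_C, zero_add]
    apply le_trans (totalDegree_sub _ _)
    simp [totalDegree_X]

lemma linPoly_ne_zero {u v : Pt} (huv : u ≠ v) : linPoly u v ≠ 0 := by
  intro h
  have h2 : eval (fun j => if j = 0 then u 0 - (v 1 - u 1) else u 1 + (v 0 - u 0)) (linPoly u v) = 0 := by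
    rw [h]; simp
  rw [eval_linPoly] at h2
  unfold cross at h2
  simp only [if_pos rfl] at h2
  norm_num at h2
  have h3 : (v 0 - u 0) ^ 2 + (v 1 - u 1) ^ 2 = 0 := by ring_nf; ring_nf at h2; linarith
  have h0 : v 0 - u 0 = 0 := by nlinarith [sq_nonneg (v 0 - u 0), sq_nonneg (v 1 - u 1)]
  have h1 : v 1 - u 1 = 0 := by nlinarith [sq_nonneg (v 0 - u 0), sq_nonneg (v 1 - u 1)]
  exact huv (pt_ext (by linarith) (by linarith))

/-! ### Combinatorics of the 3×3 grid of intersection points -/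

def grid : Fin 3 → Fin 3 → Fin 9 := ![![2,6,1],![8,3,4],![5,0,7]]
def rowOf : Fin 9 → Fin 3 := ![2,0,0,1,1,2,0,2,1]
def colOf : Fin 9 → Fin 3 := ![1,2,0,1,2,0,1,2,0]
def oth : Fin 3 → Fin 3 → Fin 3 := ![![0,2,1],![2,1,0],![1,0,2]]

def T : Fin 6 → Fin 9 → Bool :=
  ![![false,true,true,false,false,false,true,false,false],
    ![false,false,false,true,true,false,false,false,true],
    ![true,false,false,false,false,true,false,true,false],
    ![false,false,true,false,false,true,false,false,true],
    ![true,false,false,true,false,false,true,false,false],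
    ![false,true,false,false,true,false,false,true,false]]

def ep : Fin 6 → Fin 9 × Fin 9 := ![(1,2),(3,4),(0,5),(2,5),(0,3),(1,4)]
def tp : Fin 6 → Fin 9 := ![6,8,7,8,6,7]

def w (a P : Fin 9) : Fin 3 → Fin 9 × Fin 9 :=
  let j := rowOf P; let k := colOf P; let j0 := rowOf a; let k0 := colOf a
  if j = j0 then
    ![(grid (j+1) k, grid (j+1) k0), (grid (j+2) k, grid (j+2) k0),
      (grid (j+1) (oth k k0), grid (j+2) (oth k k0))]
  else if k = k0 then
    ![(grid j (k+1), grid j0 (k+1)), (grid j (k+2), grid j0 (k+2)),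
      (grid (oth j j0) (k+1), grid (oth j j0) (k+2))]
  else
    ![(grid (oth j j0) k, grid (oth j j0) k0), (grid j (oth k k0), grid j0 (oth k k0)),
      (grid j0 k, grid j k0)]

lemma trip_cases : ∀ t s, T t s → s = (ep t).1 ∨ s = (ep t).2 ∨ s = tp t := by decide

lemma ep_ne : ∀ t, (ep t).1 ≠ (ep t).2 := by decide

lemma allOnSomeRow : ∀ s : Fin 9, T 0 s ∨ T 1 s ∨ T 2 s := by decide
lemma allOnSomeCol : ∀ s : Fin 9, T 3 s ∨ T 4 s ∨ T 5 s := by decide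

lemma nonmem_witness : ∀ t s, ¬ T t s →
    ∃ t' s₀, T t' s ∧ T t s₀ ∧ T t' s₀ ∧ s₀ ≠ s ∧ t' ≠ t := by decide

lemma master : ∀ a P : Fin 9, P ≠ a →
    (∀ idx : Fin 3, (w a P idx).1 ≠ (w a P idx).2) ∧
    (∀ b : Fin 9, b ≠ a → b ≠ P →
      ∃ idx : Fin 3, b = (w a P idx).1 ∨ b = (w a P idx).2 ∨
        ∃ t : Fin 6, T t (w a P idx).1 ∧ T t (w a P idx).2 ∧ T t b) ∧
    (∀ idx : Fin 3,
      (∃ t, T t (w a P idx).1 ∧ T t (w a P idx).2 ∧ ¬ T t P) ∨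
      (∃ t, T t (w a P idx).2 ∧ T t P ∧ ¬ T t (w a P idx).1 ∧ (w a P idx).2 ≠ P)) := by decide

/-! ### Degree-indexing for cubics -/

def ddv : Fin 10 → ℕ × ℕ := ![(0,0),(1,0),(0,1),(2,0),(1,1),(0,2),(3,0),(2,1),(1,2),(0,3)]

noncomputable def dd (j : Fin 10) : Fin 2 →₀ ℕ :=
  Finsupp.single 0 (ddv j).1 + Finsupp.single 1 (ddv j).2

end CB9

namespace CB9
open MvPolynomial

noncomputable def Cpoly (p : Fin 9 → Pt) (a P : Fin 9) : MvPolynomial (Fin 2) ℝ :=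
  ∏ idx : Fin 3, linPoly (p (w a P idx).1) (p (w a P idx).2)

noncomputable def Lpoly (p : Fin 9 → Pt) : MvPolynomial (Fin 2) ℝ :=
  linPoly (p 1) (p 2) * linPoly (p 3) (p 4) * linPoly (p 0) (p 5)

noncomputable def Mpoly (p : Fin 9 → Pt) : MvPolynomial (Fin 2) ℝ :=
  linPoly (p 2) (p 5) * linPoly (p 0) (p 3) * linPoly (p 1) (p 4)

lemma totalDegree_mul3 {A B C : MvPolynomial (Fin 2) ℝ} (hA : A.totalDegree ≤ 1)
    (hB : B.totalDegree ≤ 1) (hC : C.totalDegree ≤ 1) : (A * B * C).totalDegree ≤ 3 := by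
  calc (A * B * C).totalDegree ≤ (A * B).totalDegree + C.totalDegree := totalDegree_mul _ _
    _ ≤ A.totalDegree + B.totalDegree + C.totalDegree :=
        Nat.add_le_add_right (totalDegree_mul _ _) _
    _ ≤ 3 := by omega

lemma totalDegree_Cpoly (p : Fin 9 → Pt) (a P : Fin 9) : (Cpoly p a P).totalDegree ≤ 3 := by
  unfold Cpoly
  rw [Fin.prod_univ_three]
  exact totalDegree_mul3 (totalDegree_linPoly _ _) (totalDegree_linPoly _ _)
    (totalDegree_linPoly _ _)

lemma totalDegree_Lpoly (p : Fin 9 → Pt) : (Lpoly p).totalDegree ≤ 3 :=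
  totalDegree_mul3 (totalDegree_linPoly _ _) (totalDegree_linPoly _ _) (totalDegree_linPoly _ _)

lemma totalDegree_Mpoly (p : Fin 9 → Pt) : (Mpoly p).totalDegree ≤ 3 :=
  totalDegree_mul3 (totalDegree_linPoly _ _) (totalDegree_linPoly _ _) (totalDegree_linPoly _ _)

/-- coefficient extraction map on a submodule of cubics -/
noncomputable def coeffφ (V : Submodule ℝ (MvPolynomial (Fin 2) ℝ)) :
    V →ₗ[ℝ] (Fin 10 → ℝ) where
  toFun g j := coeff (dd j) g.1
  map_add' g h := by funext j; simp
  map_smul' c g := by funext j; simp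

/-- evaluation map at the 8 points -/
noncomputable def evalE (p : Fin 9 → Pt) (a : Fin 9) (V : Submodule ℝ (MvPolynomial (Fin 2) ℝ)) :
    V →ₗ[ℝ] ({b : Fin 9 // b ≠ a} → ℝ) where
  toFun g b := eval (p b.1) g.1
  map_add' g h := by funext b; simp
  map_smul' c g := by funext b; simp [smul_eval]

@[simp] lemma evalE_apply (p : Fin 9 → Pt) (a : Fin 9) (V : Submodule ℝ (MvPolynomial (Fin 2) ℝ))
    (g : V) (b : {b : Fin 9 // b ≠ a}) : evalE p a V g b = eval (p b.1) g.1 := rfl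

@[simp] lemma coeffφ_apply (V : Submodule ℝ (MvPolynomial (Fin 2) ℝ)) (g : V) (j : Fin 10) :
    coeffφ V g j = coeff (dd j) g.1 := rfl

lemma sum_supp_eq (d : Fin 2 →₀ ℕ) : (∑ i ∈ d.support, d i) = d 0 + d 1 := by
  rw [Finset.sum_subset (Finset.subset_univ _)
    (fun i _ hi => Finsupp.notMem_support_iff.mp hi), Fin.sum_univ_two]

lemma coeff_determined {g h : MvPolynomial (Fin 2) ℝ} (hg : g.totalDegree ≤ 3)
    (hh : h.totalDegree ≤ 3)
    (heq : ∀ j : Fin 10, coeff (dd j) g = coeff (dd j) h) : g = h := by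
  apply MvPolynomial.ext
  intro d
  by_cases hd : d 0 + d 1 ≤ 3
  · have hdd : d = Finsupp.single 0 (d 0) + Finsupp.single 1 (d 1) := by
      ext c; fin_cases c <;> simp
    have hgen : ∀ i j : ℕ, i + j ≤ 3 →
        coeff (Finsupp.single (0 : Fin 2) i + Finsupp.single 1 j) g
          = coeff (Finsupp.single (0 : Fin 2) i + Finsupp.single 1 j) h := by
      intro i j hij
      have hi3 : i ≤ 3 := by omega
      have hj3 : j ≤ 3 := by omega
      interval_cases i <;> interval_cases j <;> first
        | exact heq 0 | exact heq 2 | exact heq 5 | exact heq 9 | exact heq 1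
        | exact heq 4 | exact heq 8 | exact heq 3 | exact heq 7 | exact heq 6 | omega
    rw [hdd]
    exact hgen _ _ hd
  · rw [coeff_eq_zero_of_totalDegree_lt, coeff_eq_zero_of_totalDegree_lt]
    · rw [sum_supp_eq]; omega
    · rw [sum_supp_eq]; omega

end CB9

open MvPolynomial CB9 in
theorem stmt9 (n : ℕ) (x r : ZMod n → Pt)
    (hcol : ∀ a b c : ZMod n, a ≠ b → a + b + c = 0 →
      Collinear ℝ ({x a, x b, r c} : Set Pt))
    (i : ZMod n)
    (p : Fin 9 → Pt)
    (hp : p = ![x (-1 - i), x (-2 - i), x (-3 - i), x (-4 - i), x (-5 - i), x (-6 - i),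
      r (5 + 2 * i), r (7 + 2 * i), r (9 + 2 * i)])
    (hdist : Function.Injective p)
    (hlines : Function.Injective
      ![lineThrough (x (-2 - i)) (x (-3 - i)), lineThrough (x (-4 - i)) (x (-5 - i)),
        lineThrough (x (-1 - i)) (x (-6 - i)), lineThrough (x (-3 - i)) (x (-6 - i)),
        lineThrough (x (-1 - i)) (x (-4 - i)), lineThrough (x (-2 - i)) (x (-5 - i))])
    (f : MvPolynomial (Fin 2) ℝ) (hf : f ≠ 0) (hdeg : f.totalDegree ≤ 3)
    (a : Fin 9) (h8 : ∀ b, b ≠ a → MvPolynomial.eval (p b) f = 0) :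
    ∀ b, MvPolynomial.eval (p b) f = 0 := by
  classical
  -- point identifications
  have hP0 : p 0 = x (-1 - i) := by subst hp; rfl
  have hP1 : p 1 = x (-2 - i) := by subst hp; rfl
  have hP2 : p 2 = x (-3 - i) := by subst hp; rfl
  have hP3 : p 3 = x (-4 - i) := by subst hp; rfl
  have hP4 : p 4 = x (-5 - i) := by subst hp; rfl
  have hP5 : p 5 = x (-6 - i) := by subst hp; rfl
  have hP6 : p 6 = r (5 + 2 * i) := by subst hp; rfl
  have hP7 : p 7 = r (7 + 2 * i) := by subst hp; rfl
  have hP8 : p 8 = r (9 + 2 * i) := by subst hp; rfl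
  have hxne : ∀ (s s' : Fin 9) (u v : ZMod n), p s = x u → p s' = x v → s ≠ s' → u ≠ v := by
    intro s s' u v hu hv hss huv
    exact hdist.ne hss (by rw [hu, hv, huv])
  have hthird : ∀ (s s' s'' : Fin 9) (u v c : ZMod n), p s = x u → p s' = x v → p s'' = r c →
      s ≠ s' → u + v + c = 0 → cross (p s) (p s') (p s'') = 0 := by
    intro s s' s'' u v c hu hv hc hss hsum
    rw [hu, hv, hc]
    have hne : x u ≠ x v := by rw [← hu, ← hv]; exact hdist.ne hss
    exact (collinear_iff_cross hne).mp (hcol u v c (hxne s s' u v hu hv hss) hsum)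
  have hmemT : ∀ t s, T t s → cross (p (ep t).1) (p (ep t).2) (p s) = 0 := by
    intro t s hts
    rcases trip_cases t s hts with h | h | h
    · rw [h]; exact cross_self_left _ _
    · rw [h]; exact cross_self_right _ _
    · rw [h]
      fin_cases t
      · exact hthird 1 2 6 _ _ _ hP1 hP2 hP6 (by decide) (by ring)
      · exact hthird 3 4 8 _ _ _ hP3 hP4 hP8 (by decide) (by ring)
      · exact hthird 0 5 7 _ _ _ hP0 hP5 hP7 (by decide) (by ring)
      · exact hthird 2 5 8 _ _ _ hP2 hP5 hP8 (by decide) (by ring)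
      · exact hthird 0 3 6 _ _ _ hP0 hP3 hP6 (by decide) (by ring)
      · exact hthird 1 4 7 _ _ _ hP1 hP4 hP7 (by decide) (by ring)
  have hLdist : ∀ t t' : Fin 6,
      lineThrough (p (ep t).1) (p (ep t).2) = lineThrough (p (ep t').1) (p (ep t').2) →
      t = t' := by
    have hvec : ∀ t : Fin 6,
        ![lineThrough (x (-2 - i)) (x (-3 - i)), lineThrough (x (-4 - i)) (x (-5 - i)),
          lineThrough (x (-1 - i)) (x (-6 - i)), lineThrough (x (-3 - i)) (x (-6 - i)),
          lineThrough (x (-1 - i)) (x (-4 - i)), lineThrough (x (-2 - i)) (x (-5 - i))] t =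
          lineThrough (p (ep t).1) (p (ep t).2) := by
      intro t
      fin_cases t
      · show lineThrough (x (-2 - i)) (x (-3 - i)) = lineThrough (p 1) (p 2)
        rw [hP1, hP2]
      · show lineThrough (x (-4 - i)) (x (-5 - i)) = lineThrough (p 3) (p 4)
        rw [hP3, hP4]
      · show lineThrough (x (-1 - i)) (x (-6 - i)) = lineThrough (p 0) (p 5)
        rw [hP0, hP5]
      · show lineThrough (x (-3 - i)) (x (-6 - i)) = lineThrough (p 2) (p 5)
        rw [hP2, hP5]
      · show lineThrough (x (-1 - i)) (x (-4 - i)) = lineThrough (p 0) (p 3)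
        rw [hP0, hP3]
      · show lineThrough (x (-2 - i)) (x (-5 - i)) = lineThrough (p 1) (p 4)
        rw [hP1, hP4]
    intro t t' heq
    apply hlines
    rw [hvec t, hvec t', heq]
  have hnonT : ∀ t s, ¬ T t s → cross (p (ep t).1) (p (ep t).2) (p s) ≠ 0 := by
    intro t s hT h0
    obtain ⟨t', s₀, h1, h2, h3, h4, h5⟩ := nonmem_witness t s hT
    have hps : p s ≠ p s₀ := hdist.ne (Ne.symm h4)
    have e1 := lineThrough_eq_of_cross (hdist.ne (ep_ne t)) hps h0 (hmemT t s₀ h2)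
    have e2 := lineThrough_eq_of_cross (hdist.ne (ep_ne t')) hps (hmemT t' s h1) (hmemT t' s₀ h3)
    exact h5 (hLdist t' t (e2.trans e1.symm))
  have hCne : ∀ (s₁ s₂ P : Fin 9), s₁ ≠ s₂ →
      ((∃ t, T t s₁ ∧ T t s₂ ∧ ¬ T t P) ∨ (∃ t, T t s₂ ∧ T t P ∧ ¬ T t s₁ ∧ s₂ ≠ P)) →
      cross (p s₁) (p s₂) (p P) ≠ 0 := by
    rintro s₁ s₂ P h12 (⟨t, ht1, ht2, htP⟩ | ⟨t, ht2, htP, ht1, h2P⟩) h0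
    · obtain ⟨c, hc, hcq⟩ := key (hdist.ne (ep_ne t)) (hdist.ne h12)
        (hmemT t s₁ ht1) (hmemT t s₂ ht2)
      have h2 : c * cross (p (ep t).1) (p (ep t).2) (p P) = 0 := by rw [← hcq (p P)]; exact h0
      exact hnonT t P htP ((mul_eq_zero.mp h2).resolve_left hc)
    · obtain ⟨c, hc, hcq⟩ := key (hdist.ne h12) (hdist.ne h2P)
        (cross_self_right (p s₁) (p s₂)) h0
      obtain ⟨c', hc', hcq'⟩ := key (hdist.ne (ep_ne t)) (hdist.ne h2P)
        (hmemT t s₂ ht2) (hmemT t P htP)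
      have e1 : cross (p s₂) (p P) (p s₁) = 0 := by
        rw [hcq (p s₁), cross_self_left, mul_zero]
      have e2 := hcq' (p s₁)
      rw [e1] at e2
      exact hnonT t s₁ ht1 ((mul_eq_zero.mp e2.symm).resolve_left hc')
  -- the space of cubics
  set V := restrictTotalDegree (Fin 2) ℝ 3 with hV
  have hmemV : ∀ g : MvPolynomial (Fin 2) ℝ, g.totalDegree ≤ 3 → g ∈ V :=
    fun g hg => (mem_restrictTotalDegree _ 3 g).mpr hg
  have hφinj : Function.Injective (coeffφ V) := by
    intro g h hgh
    apply Subtype.ext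
    apply coeff_determined ((mem_restrictTotalDegree _ 3 g.1).mp g.2)
      ((mem_restrictTotalDegree _ 3 h.1).mp h.2)
    intro j
    exact congrFun hgh j
  haveI hFD : FiniteDimensional ℝ V := FiniteDimensional.of_injective (coeffφ V) hφinj
  have hVle : Module.finrank ℝ V ≤ 10 := by
    have h1 := LinearMap.finrank_le_finrank_of_injective hφinj
    simpa [Module.finrank_fintype_fun_eq_card] using h1
  -- key evaluation facts for the interpolation cubics
  have hCz : ∀ (P b : Fin 9), P ≠ a → b ≠ a → b ≠ P → eval (p b) (Cpoly p a P) = 0 := by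
    intro P b hPa hba hbP
    obtain ⟨idx, hidx⟩ := (master a P hPa).2.1 b hba hbP
    unfold Cpoly
    rw [map_prod]
    apply Finset.prod_eq_zero (Finset.mem_univ idx)
    rw [eval_linPoly]
    rcases hidx with h | h | ⟨t, ht1, ht2, htb⟩
    · rw [h]; exact cross_self_left _ _
    · rw [h]; exact cross_self_right _ _
    · obtain ⟨c, hc, hcq⟩ := key (hdist.ne (ep_ne t)) (hdist.ne ((master a P hPa).1 idx))
        (hmemT t _ ht1) (hmemT t _ ht2)
      rw [hcq, hmemT t b htb, mul_zero]
  have hCnz : ∀ P : Fin 9, P ≠ a → eval (p P) (Cpoly p a P) ≠ 0 := by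
    intro P hPa
    unfold Cpoly
    rw [map_prod, Finset.prod_ne_zero_iff]
    intro idx _
    rw [eval_linPoly]
    exact hCne _ _ P ((master a P hPa).1 idx) ((master a P hPa).2.2 idx)
  -- the evaluation map at the eight points is surjective
  have hEsurj : Function.Surjective (evalE p a V) := by
    intro v
    refine ⟨∑ b : {b : Fin 9 // b ≠ a}, (v b / eval (p b.1) (Cpoly p a b.1)) •
      (⟨Cpoly p a b.1, hmemV _ (totalDegree_Cpoly p a b.1)⟩ : V), ?_⟩
    funext b'
    rw [map_sum, Finset.sum_apply, Finset.sum_eq_single b']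
    · simp only [map_smul, Pi.smul_apply, evalE_apply, SetLike.val_smul, smul_eval, smul_eq_mul]
      exact div_mul_cancel₀ (v b') (hCnz b'.1 b'.2)
    · intro b _ hbb'
      simp only [map_smul, Pi.smul_apply, evalE_apply, SetLike.val_smul, smul_eval, smul_eq_mul]
      rw [hCz b.1 b'.1 b.2 b'.2 (fun h => hbb' (Subtype.ext h.symm)), mul_zero]
    · intro hb'
      exact absurd (Finset.mem_univ b') hb'
  have hrange : LinearMap.range (evalE p a V) = ⊤ := LinearMap.range_eq_top.mpr hEsurj
  have hcard : Fintype.card {b : Fin 9 // b ≠ a} = 8 := by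
    simp [Fintype.card_subtype_compl, Fintype.card_subtype_eq]
  have hker2 : Module.finrank ℝ (LinearMap.ker (evalE p a V)) ≤ 2 := by
    have h1 := LinearMap.finrank_range_add_finrank_ker (evalE p a V)
    rw [hrange, finrank_top, Module.finrank_fintype_fun_eq_card, hcard] at h1
    omega
  -- L and M vanish at all nine points
  have hLz : ∀ s : Fin 9, eval (p s) (Lpoly p) = 0 := by
    intro s
    unfold Lpoly
    simp only [map_mul, eval_linPoly]
    rcases allOnSomeRow s with h | h | h
    · have h0 : cross (p 1) (p 2) (p s) = 0 := hmemT 0 s h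
      rw [h0]; ring
    · have h0 : cross (p 3) (p 4) (p s) = 0 := hmemT 1 s h
      rw [h0]; ring
    · have h0 : cross (p 0) (p 5) (p s) = 0 := hmemT 2 s h
      rw [h0]; ring
  have hMz : ∀ s : Fin 9, eval (p s) (Mpoly p) = 0 := by
    intro s
    unfold Mpoly
    simp only [map_mul, eval_linPoly]
    rcases allOnSomeCol s with h | h | h
    · have h0 : cross (p 2) (p 5) (p s) = 0 := hmemT 3 s h
      rw [h0]; ring
    · have h0 : cross (p 0) (p 3) (p s) = 0 := hmemT 4 s h
      rw [h0]; ring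
    · have h0 : cross (p 1) (p 4) (p s) = 0 := hmemT 5 s h
      rw [h0]; ring
  -- a point on line ℓ₁ avoiding the three m-lines
  have hq : ∃ q : Pt, eval q (Lpoly p) = 0 ∧ eval q (Mpoly p) ≠ 0 := by
    set param : ℝ → Pt := fun t => fun j => p 1 j + t * (p 2 j - p 1 j) with hparam
    have hparamline : ∀ t : ℝ, cross (p 1) (p 2) (param t) = 0 := by
      intro t; unfold cross; simp only [hparam]; ring
    have hparaminj : ∀ t₁ t₂ : ℝ, param t₁ = param t₂ → t₁ = t₂ := by
      intro t₁ t₂ h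
      rcases pt_ne (hdist.ne (show (1 : Fin 9) ≠ 2 by decide)) with hj | hj
      · have := congrFun h 0
        simp only [hparam] at this
        have hd : p 2 0 - p 1 0 ≠ 0 := sub_ne_zero.mpr (Ne.symm hj)
        have : t₁ * (p 2 0 - p 1 0) = t₂ * (p 2 0 - p 1 0) := by linarith
        exact mul_right_cancel₀ hd this
      · have := congrFun h 1
        simp only [hparam] at this
        have hd : p 2 1 - p 1 1 ≠ 0 := sub_ne_zero.mpr (Ne.symm hj)
        have : t₁ * (p 2 1 - p 1 1) = t₂ * (p 2 1 - p 1 1) := by linarith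
        exact mul_right_cancel₀ hd this
    have hsub : ∀ t' : Fin 6, t' ≠ 0 →
        {t : ℝ | cross (p (ep t').1) (p (ep t').2) (param t) = 0}.Subsingleton := by
      intro t' ht' t₁ h₁ t₂ h₂
      by_contra hne
      have hpp : param t₁ ≠ param t₂ := fun h => hne (hparaminj _ _ h)
      have e1 := lineThrough_eq_of_cross (hdist.ne (ep_ne t')) hpp h₁ h₂
      have e2 := lineThrough_eq_of_cross
        (hdist.ne (show (ep 0).1 ≠ (ep 0).2 from ep_ne 0)) hpp
        (hparamline t₁) (hparamline t₂)
      exact ht' (hLdist t' 0 (e1.trans e2.symm))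
    have hfin : ({t : ℝ | cross (p (ep 3).1) (p (ep 3).2) (param t) = 0} ∪
        ({t : ℝ | cross (p (ep 4).1) (p (ep 4).2) (param t) = 0} ∪
         {t : ℝ | cross (p (ep 5).1) (p (ep 5).2) (param t) = 0})).Finite := by
      refine Set.Finite.union ((hsub 3 (by decide)).finite)
        (Set.Finite.union ((hsub 4 (by decide)).finite) ((hsub 5 (by decide)).finite))
    obtain ⟨t₀, ht₀⟩ := hfin.infinite_compl.nonempty
    simp only [Set.mem_compl_iff, Set.mem_union, Set.mem_setOf_eq, not_or] at ht₀
    refine ⟨param t₀, ?_, ?_⟩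
    · unfold Lpoly
      simp only [map_mul, eval_linPoly]
      rw [hparamline t₀]; ring
    · unfold Mpoly
      simp only [map_mul, eval_linPoly]
      exact mul_ne_zero (mul_ne_zero ht₀.1 ht₀.2.1) ht₀.2.2
  obtain ⟨q₀, hLq, hMq⟩ := hq
  have hLne : Lpoly p ≠ 0 := by
    unfold Lpoly
    exact mul_ne_zero (mul_ne_zero
      (linPoly_ne_zero (hdist.ne (show (1:Fin 9) ≠ 2 by decide)))
      (linPoly_ne_zero (hdist.ne (show (3:Fin 9) ≠ 4 by decide))))
      (linPoly_ne_zero (hdist.ne (show (0:Fin 9) ≠ 5 by decide)))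
  set LV : V := ⟨Lpoly p, hmemV _ (totalDegree_Lpoly p)⟩ with hLV
  set MV : V := ⟨Mpoly p, hmemV _ (totalDegree_Mpoly p)⟩ with hMV
  have hLM : LinearIndependent ℝ ![LV, MV] := by
    rw [LinearIndependent.pair_iff]
    intro s t hst
    have hst' : s • Lpoly p + t • Mpoly p = 0 := by
      have := congrArg Subtype.val hst
      simpa [hLV, hMV] using this
    have h1 : eval q₀ (s • Lpoly p + t • Mpoly p) = 0 := by rw [hst']; simp
    rw [map_add, smul_eval, smul_eval, hLq, mul_zero, zero_add] at h1
    have ht : t = 0 := (mul_eq_zero.mp h1).resolve_right hMq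
    subst ht
    rw [zero_smul, add_zero] at hst'
    have hs : s = 0 := by
      by_contra hs
      exact hLne (by rw [← inv_smul_smul₀ hs (Lpoly p), hst', smul_zero])
    exact ⟨hs, rfl⟩
  have hsp : Submodule.span ℝ (Set.range ![LV, MV]) = LinearMap.ker (evalE p a V) := by
    apply Submodule.eq_of_le_of_finrank_le
    · rw [Submodule.span_le]
      rintro z ⟨k, rfl⟩
      rw [SetLike.mem_coe, LinearMap.mem_ker]
      fin_cases k
      · funext b
        simpa [hLV] using hLz b.1
      · funext b
        simpa [hMV] using hMz b.1
    · rw [finrank_span_eq_card hLM, Fintype.card_fin]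
      exact hker2
  have hfmem : (⟨f, hmemV f hdeg⟩ : V) ∈ LinearMap.ker (evalE p a V) := by
    rw [LinearMap.mem_ker]
    funext b
    simpa using h8 b.1 b.2
  rw [← hsp] at hfmem
  obtain ⟨c, hc⟩ := (Submodule.mem_span_range_iff_exists_fun ℝ).mp hfmem
  have hc' : c 0 • Lpoly p + c 1 • Mpoly p = f := by
    have h2 := congrArg Subtype.val hc
    simpa [Fin.sum_univ_two, hLV, hMV] using h2
  intro b
  rcases eq_or_ne b a with rfl | hba
  · rw [← hc', map_add, smul_eval, smul_eval, hLz b, hMz b]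
    ring
  · exact h8 b hba
end

section
/- Let x_0, …, x_{n−1} and r_0, …, r_{n−1} be points in the plane such that x_i, x_j, r_k are collinear whenever i + j + k ≡ 0 (mod n) (with appropriate distinctness of the nine points and six lines involved). Then any cubic curve passing through eight of the nine points x_{n−1−i}, x_{n−2−i}, x_{n−3−i}, x_{n−5−i}, x_{n−6−i}, x_{n−7−i}, r_{7+2i}, r_{8+2i}, r_{9+2i} passes through all nine. -/
open MvPolynomial

noncomputable section CBaux

/-- Parameterization of a line through `a` with direction `d`. -/
def lparam (a d : Pt) (t : ℝ) : Pt := fun i => a i + t * d i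

lemma lparam_injective {a d : Pt} (hd : d ≠ 0) : Function.Injective (lparam a d) := by
  intro t t' h
  obtain ⟨i, hi⟩ := Function.ne_iff.1 hd
  have := congrFun h i
  simp only [lparam] at this
  have h2 : t * d i = t' * d i := by linarith
  exact mul_right_cancel₀ hi h2

lemma collinear_iff_lparam {a b z : Pt} (hab : a ≠ b) :
    Collinear ℝ ({a, b, z} : Set Pt) ↔ ∃ t : ℝ, z = lparam a (b - a) t := by
  rw [collinear_iff_of_mem (Set.mem_insert a {b, z})]
  constructor
  · rintro ⟨v, hv⟩
    obtain ⟨rb, hrb⟩ := hv b (by simp)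
    obtain ⟨rz, hrz⟩ := hv z (by simp)
    have hrb0 : rb ≠ 0 := by
      rintro rfl
      simp only [zero_smul, zero_vadd] at hrb
      exact hab hrb.symm
    refine ⟨rz / rb, funext fun i => ?_⟩
    have hb : b i = rb * v i + a i := by rw [hrb]; rfl
    have hz : z i = rz * v i + a i := by rw [hrz]; rfl
    simp only [lparam, Pi.sub_apply]
    rw [hz, hb]
    field_simp
    ring
  · rintro ⟨t, rfl⟩
    refine ⟨b - a, ?_⟩
    rintro p hp
    simp only [Set.mem_insert_iff, Set.mem_singleton_iff] at hp
    rcases hp with rfl | rfl | rfl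
    · exact ⟨0, by simp⟩
    · exact ⟨1, funext fun i => by simp [lparam]⟩
    · exact ⟨t, funext fun i => by simp [lparam]; ring⟩

lemma mem_lineThrough_iff {a b z : Pt} (hab : a ≠ b) :
    z ∈ lineThrough a b ↔ ∃ t : ℝ, z = lparam a (b - a) t :=
  collinear_iff_lparam hab

lemma left_mem_lineThrough {a b : Pt} : a ∈ lineThrough a b := by
  have : ({a, b, a} : Set Pt) = {a, b} := by
    ext z; simp [or_comm, or_assoc, or_left_comm]
  show Collinear ℝ ({a, b, a} : Set Pt)
  rw [this]; exact collinear_pair ℝ a b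

lemma right_mem_lineThrough {a b : Pt} : b ∈ lineThrough a b := by
  have : ({a, b, b} : Set Pt) = {a, b} := by
    ext z; simp [or_comm, or_assoc, or_left_comm]
  show Collinear ℝ ({a, b, b} : Set Pt)
  rw [this]; exact collinear_pair ℝ a b

lemma lineThrough_eq_of_mem {a b q q' : Pt} (hab : a ≠ b)
    (hq : q ∈ lineThrough a b) (hq' : q' ∈ lineThrough a b) (hqq' : q ≠ q') :
    lineThrough a b = lineThrough q q' := by
  obtain ⟨s, hs⟩ := (mem_lineThrough_iff hab).1 hq
  obtain ⟨s', hs'⟩ := (mem_lineThrough_iff hab).1 hq'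
  have hss' : s ≠ s' := by rintro rfl; exact hqq' (hs.trans hs'.symm)
  ext z
  show z ∈ lineThrough a b ↔ z ∈ lineThrough q q'
  show Collinear ℝ ({a, b, z} : Set Pt) ↔ Collinear ℝ ({q, q', z} : Set Pt)
  rw [collinear_iff_lparam hab, collinear_iff_lparam hqq']
  have h0 : s' - s ≠ 0 := sub_ne_zero.2 (Ne.symm hss')
  constructor
  · rintro ⟨t, rfl⟩
    refine ⟨(t - s) / (s' - s), funext fun i => ?_⟩
    simp only [lparam, Pi.sub_apply, hs, hs']
    field_simp
    ring
  · rintro ⟨u, rfl⟩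
    refine ⟨s + u * (s' - s), funext fun i => ?_⟩
    simp only [lparam, Pi.sub_apply, hs, hs']
    ring

lemma line_eq_line_of_two_mem {a b c d q q' : Pt} (hab : a ≠ b) (hcd : c ≠ d) (hqq' : q ≠ q')
    (h1 : q ∈ lineThrough a b) (h2 : q' ∈ lineThrough a b)
    (h3 : q ∈ lineThrough c d) (h4 : q' ∈ lineThrough c d) :
    lineThrough a b = lineThrough c d :=
  (lineThrough_eq_of_mem hab h1 h2 hqq').trans (lineThrough_eq_of_mem hcd h3 h4 hqq').symm

lemma exists_point_on_line_avoiding {a b : Pt} (hab : a ≠ b) (S : Set Pt) (hS : S.Finite) :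
    ∃ q ∈ lineThrough a b, q ∉ S := by
  have hd : b - a ≠ 0 := sub_ne_zero.2 (Ne.symm hab)
  have hfin : {t : ℝ | lparam a (b - a) t ∈ S}.Finite :=
    hS.preimage (Set.injOn_of_injective (lparam_injective hd))
  obtain ⟨t, ht⟩ := hfin.infinite_compl.nonempty
  exact ⟨lparam a (b - a) t, (mem_lineThrough_iff hab).2 ⟨t, rfl⟩, ht⟩

end CBaux

noncomputable section CBpoly

open MvPolynomial

/-- The affine form whose zero set is the line through `a` and `b`. -/
noncomputable def linePoly (a b : Pt) : MvPolynomial (Fin 2) ℝ :=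
  C (b 1 - a 1) * X 0 - C (b 0 - a 0) * X 1 + C (a 1 * b 0 - a 0 * b 1)

lemma eval_linePoly (a b z : Pt) :
    eval z (linePoly a b) = (z 0 - a 0) * (b 1 - a 1) - (z 1 - a 1) * (b 0 - a 0) := by
  simp only [linePoly, map_add, map_sub, map_mul, eval_C, eval_X]
  ring

lemma totalDegree_linePoly_le (a b : Pt) : (linePoly a b).totalDegree ≤ 1 := by
  unfold linePoly
  refine (totalDegree_add _ _).trans (max_le ((totalDegree_sub _ _).trans (max_le ?_ ?_)) ?_)
  · exact (totalDegree_mul _ _).trans (by rw [totalDegree_C, totalDegree_X])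
  · exact (totalDegree_mul _ _).trans (by rw [totalDegree_C, totalDegree_X])
  · exact le_trans (le_of_eq (totalDegree_C _)) (by norm_num)

lemma ne_coord {a b : Pt} (hab : a ≠ b) : b 0 - a 0 ≠ 0 ∨ b 1 - a 1 ≠ 0 := by
  by_contra h
  push_neg at h
  obtain ⟨h0, h1⟩ := h
  apply hab
  funext i
  fin_cases i
  · show a 0 = b 0
    linarith
  · show a 1 = b 1
    linarith

lemma eval_linePoly_eq_zero_iff {a b : Pt} (hab : a ≠ b) {z : Pt} :
    eval z (linePoly a b) = 0 ↔ Collinear ℝ ({a, b, z} : Set Pt) := by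
  rw [eval_linePoly, collinear_iff_lparam hab]
  constructor
  · intro h
    rcases ne_coord hab with h0 | h1
    · refine ⟨(z 0 - a 0) / (b 0 - a 0), funext fun i => ?_⟩
      fin_cases i <;> simp only [lparam, Pi.sub_apply, Fin.zero_eta, Fin.mk_one]
      · field_simp
        ring
      · field_simp
        linarith [h]
    · refine ⟨(z 1 - a 1) / (b 1 - a 1), funext fun i => ?_⟩
      fin_cases i <;> simp only [lparam, Pi.sub_apply, Fin.zero_eta, Fin.mk_one]
      · field_simp
        linarith [h]
      · field_simp
        ring
  · rintro ⟨t, rfl⟩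
    simp only [lparam, Pi.sub_apply]
    ring

lemma mem_lineThrough_iff_eval {a b : Pt} (hab : a ≠ b) {z : Pt} :
    z ∈ lineThrough a b ↔ eval z (linePoly a b) = 0 :=
  (eval_linePoly_eq_zero_iff hab).symm

/-- Restriction of a 2-variable polynomial to a parameterized line. -/
noncomputable def lineRes (a d : Pt) (f : MvPolynomial (Fin 2) ℝ) : Polynomial ℝ :=
  aeval (fun i => Polynomial.C (a i) + Polynomial.C (d i) * Polynomial.X) f

lemma eval_lineRes (a d : Pt) (f : MvPolynomial (Fin 2) ℝ) (t : ℝ) :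
    (lineRes a d f).eval t = eval (lparam a d t) f := by
  rw [lineRes, aeval_def]
  have h := MvPolynomial.eval₂_comp_left (Polynomial.evalRingHom t)
    (algebraMap ℝ (Polynomial ℝ))
    (fun i => Polynomial.C (a i) + Polynomial.C (d i) * Polynomial.X) f
  simp only [Polynomial.coe_evalRingHom] at h
  rw [h]
  have h1 : (Polynomial.evalRingHom t).comp (algebraMap ℝ (Polynomial ℝ)) = RingHom.id ℝ := by
    ext r; simp
  have h2 : (Polynomial.eval t ∘
      fun i => Polynomial.C (a i) + Polynomial.C (d i) * Polynomial.X) = lparam a d t := by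
    funext i; simp [lparam]; ring
  rw [h1, h2]
  rfl

lemma natDegree_lineRes_le (a d : Pt) (f : MvPolynomial (Fin 2) ℝ) :
    (lineRes a d f).natDegree ≤ f.totalDegree := by
  rw [lineRes]
  conv_lhs => rw [f.as_sum]
  rw [map_sum]
  apply Polynomial.natDegree_sum_le_of_forall_le
  intro m hm
  rw [aeval_monomial]
  refine Polynomial.natDegree_mul_le.trans ?_
  have hC : (algebraMap ℝ (Polynomial ℝ) (coeff m f)).natDegree = 0 := Polynomial.natDegree_C _
  rw [hC, zero_add]
  rw [Finsupp.prod]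
  refine (Polynomial.natDegree_prod_le _ _).trans ?_
  refine le_trans ?_ (le_totalDegree hm)
  refine le_trans (Finset.sum_le_sum (g := fun i => m i) fun i _ => ?_) (le_of_eq rfl)
  calc ((Polynomial.C (a i) + Polynomial.C (d i) * Polynomial.X) ^ m i).natDegree
      ≤ m i * (Polynomial.C (a i) + Polynomial.C (d i) * Polynomial.X).natDegree :=
        Polynomial.natDegree_pow_le
    _ ≤ m i * 1 := Nat.mul_le_mul_left _ ((Polynomial.natDegree_add_le _ _).trans
        (max_le (by simp) (Polynomial.natDegree_mul_le.trans (by simp))))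
    _ = m i := mul_one _

/-- Vanishing at more points than the degree forces vanishing on the whole line. -/
lemma vanish_on_line {a b : Pt} (hab : a ≠ b) {f : MvPolynomial (Fin 2) ℝ} {d : ℕ}
    (hdeg : f.totalDegree ≤ d) (s : Finset ℝ) (hcard : d < s.card)
    (hroots : ∀ t ∈ s, eval (lparam a (b - a) t) f = 0) :
    ∀ z ∈ lineThrough a b, eval z f = 0 := by
  have h0 : lineRes a (b - a) f = 0 := by
    apply Polynomial.eq_zero_of_natDegree_lt_card_of_eval_eq_zero' _ s
    · intro t ht; rw [eval_lineRes]; exact hroots t ht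
    · exact lt_of_le_of_lt (le_trans (natDegree_lineRes_le a (b - a) f) hdeg) hcard
  intro z hz
  obtain ⟨t, rfl⟩ := (mem_lineThrough_iff hab).1 hz
  rw [← eval_lineRes, h0, Polynomial.eval_zero]

end CBpoly

noncomputable section CBdiv

open MvPolynomial

/-- If `f` vanishes on the graph `x₀ = α x₁ + β` then `X 0 - (α X 1 + β)` divides `f`. -/
lemma dvd_of_vanish_graph0 (α β : ℝ) (f : MvPolynomial (Fin 2) ℝ)
    (h : ∀ t : ℝ, eval (Fin.cons (α * t + β) (fun _ => t) : Fin 2 → ℝ) f = 0) :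
    (X 0 - (C α * X 1 + C β)) ∣ f := by
  set e := finSuccEquiv ℝ 1
  set F := e f with hF
  set rr : MvPolynomial (Fin 1) ℝ := C α * X 0 + C β with hrr
  have hroot : Polynomial.eval rr F = 0 := by
    apply MvPolynomial.funext (q := 0)
    intro s
    have h1 : (eval s) (Polynomial.eval rr F) =
        Polynomial.eval (eval s rr) (F.map (eval s)) := by
      show (eval s : MvPolynomial (Fin 1) ℝ →+* ℝ) (Polynomial.eval₂ (RingHom.id _) rr F) = _
      rw [Polynomial.hom_eval₂, Polynomial.eval_map]
      rfl
    have h2 : eval s rr = α * s 0 + β := by simp [hrr]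
    have h3 : (Fin.cons (α * s 0 + β) s : Fin 2 → ℝ) =
        (Fin.cons (α * s 0 + β) (fun _ => s 0) : Fin 2 → ℝ) := by
      funext i
      refine Fin.cases rfl (fun j => ?_) i
      simp [Subsingleton.elim j 0]
    rw [h1, h2, ← eval_eq_eval_mv_eval', h3, h (s 0), map_zero]
  have hdvd : (Polynomial.X - Polynomial.C rr) ∣ F :=
    Polynomial.dvd_iff_isRoot.2 hroot
  obtain ⟨G, hG⟩ := hdvd
  refine ⟨e.symm G, ?_⟩
  have he : e (X 0 - (C α * X 1 + C β)) = Polynomial.X - Polynomial.C rr := by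
    have hx1 : (1 : Fin 2) = Fin.succ 0 := rfl
    rw [map_sub, map_add, map_mul, finSuccEquiv_X_zero, hx1, finSuccEquiv_X_succ]
    have hc : ∀ r : ℝ, e (C r) = Polynomial.C (C r) := by
      intro r
      show e (algebraMap ℝ _ r) = _
      rw [AlgEquiv.commutes]
      rfl
    rw [hc, hc, hrr, map_add, map_mul]
  apply e.injective
  rw [map_mul, he, AlgEquiv.apply_symm_apply, ← hG, hF]

/-- swapped version: vanishing on the graph `x₁ = α x₀ + β`. -/
lemma dvd_of_vanish_graph1 (α β : ℝ) (f : MvPolynomial (Fin 2) ℝ)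
    (h : ∀ t : ℝ, eval (Fin.cons t (fun _ => α * t + β) : Fin 2 → ℝ) f = 0) :
    (X 1 - (C α * X 0 + C β)) ∣ f := by
  set sw : Fin 2 ≃ Fin 2 := Equiv.swap 0 1
  have hswsw : ∀ p : MvPolynomial (Fin 2) ℝ, rename sw (rename sw p) = p := by
    intro p
    rw [rename_rename]
    have : (sw : Fin 2 → Fin 2) ∘ sw = id := by
      funext i; simp [sw, Equiv.swap_apply_self]
    rw [this, rename_id, AlgHom.id_apply]
  have h' : ∀ t : ℝ, eval (Fin.cons (α * t + β) (fun _ => t) : Fin 2 → ℝ) (rename sw f) = 0 := by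
    intro t
    rw [eval_rename]
    have : ((Fin.cons (α * t + β) (fun _ => t) : Fin 2 → ℝ) ∘ sw) =
        (Fin.cons t (fun _ => α * t + β) : Fin 2 → ℝ) := by
      funext i
      refine Fin.cases ?_ (fun j => ?_) i
      · simp [sw]
      · have : Fin.succ j = 1 := by
          rw [Subsingleton.elim j 0]; rfl
        simp [this, sw]
    rw [this]
    exact h t
  have hdvd := dvd_of_vanish_graph0 α β (rename sw f) h'
  obtain ⟨G, hG⟩ := hdvd
  refine ⟨rename sw G, ?_⟩
  have := congrArg (rename sw) hG
  rw [hswsw, map_mul] at this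
  rw [this]
  congr 1
  rw [map_sub, map_add, map_mul, rename_C, rename_C, rename_X, rename_X]
  have h0 : sw 0 = 1 := Equiv.swap_apply_left 0 1
  have h1 : sw 1 = 0 := Equiv.swap_apply_right 0 1
  rw [h0, h1]

/-- totalDegree bound for degree-1 substitutions. -/
lemma totalDegree_aeval_le (u : Fin 2 → MvPolynomial (Fin 2) ℝ)
    (hu : ∀ i, (u i).totalDegree ≤ 1) (p : MvPolynomial (Fin 2) ℝ) :
    (aeval u p).totalDegree ≤ p.totalDegree := by
  conv_lhs => rw [p.as_sum]
  rw [map_sum]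
  refine (totalDegree_finset_sum _ _).trans ?_
  rw [Finset.sup_le_iff]
  intro m hm
  rw [aeval_monomial]
  refine (totalDegree_mul _ _).trans ?_
  have hC : (algebraMap ℝ (MvPolynomial (Fin 2) ℝ) (coeff m p)).totalDegree = 0 := by
    rw [MvPolynomial.algebraMap_eq, totalDegree_C]
  rw [hC, zero_add, Finsupp.prod]
  refine le_trans ?_ (le_totalDegree hm)
  refine le_trans (totalDegree_finset_prod _ _) ?_
  refine le_trans (Finset.sum_le_sum (g := fun i => m i) fun i _ => ?_) (le_of_eq rfl)
  calc (u i ^ m i).totalDegree ≤ m i * (u i).totalDegree := totalDegree_pow _ _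
    _ ≤ m i * 1 := Nat.mul_le_mul_left _ (hu i)
    _ = m i := mul_one _

lemma totalDegree_linsub_le (α β : ℝ) :
    (X 0 - (C α * X 1 + C β) : MvPolynomial (Fin 2) ℝ).totalDegree ≤ 1 ∧
    (X 0 + (C α * X 1 + C β) : MvPolynomial (Fin 2) ℝ).totalDegree ≤ 1 := by
  constructor
  · refine (totalDegree_sub _ _).trans (max_le (le_of_eq (totalDegree_X _)) ?_)
    refine (totalDegree_add _ _).trans (max_le ?_ ?_)
    · exact (totalDegree_mul _ _).trans (by rw [totalDegree_C, totalDegree_X])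
    · exact le_trans (le_of_eq (totalDegree_C _)) (by norm_num)
  · refine (totalDegree_add _ _).trans (max_le (le_of_eq (totalDegree_X _)) ?_)
    refine (totalDegree_add _ _).trans (max_le ?_ ?_)
    · exact (totalDegree_mul _ _).trans (by rw [totalDegree_C, totalDegree_X])
    · exact le_trans (le_of_eq (totalDegree_C _)) (by norm_num)

/-- Multiplying by a monic affine form raises total degree by at least one. -/
lemma totalDegree_line_mul0 (α β : ℝ) (g : MvPolynomial (Fin 2) ℝ) (hg : g ≠ 0) :
    g.totalDegree + 1 ≤ ((X 0 - (C α * X 1 + C β)) * g).totalDegree := by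
  set u : Fin 2 → MvPolynomial (Fin 2) ℝ := ![X 0 + (C α * X 1 + C β), X 1] with hu
  set u' : Fin 2 → MvPolynomial (Fin 2) ℝ := ![X 0 - (C α * X 1 + C β), X 1] with hu'
  set τ : MvPolynomial (Fin 2) ℝ →ₐ[ℝ] MvPolynomial (Fin 2) ℝ := aeval u with hτ
  set τ' : MvPolynomial (Fin 2) ℝ →ₐ[ℝ] MvPolynomial (Fin 2) ℝ := aeval u' with hτ'
  have hu0 : u 0 = X 0 + (C α * X 1 + C β) := rfl
  have hu1 : u 1 = X 1 := rfl
  have hu'0 : u' 0 = X 0 - (C α * X 1 + C β) := rfl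
  have hu'1 : u' 1 = X 1 := rfl
  have hτ'1 : τ' (X 1) = X 1 := by rw [hτ', aeval_X, hu'1]
  have hτ'0 : τ' (X 0) = X 0 - (C α * X 1 + C β) := by rw [hτ', aeval_X, hu'0]
  have hτ1 : τ (X 1) = X 1 := by rw [hτ, aeval_X, hu1]
  have hτ0 : τ (X 0) = X 0 + (C α * X 1 + C β) := by rw [hτ, aeval_X, hu0]
  have hτC : ∀ r : ℝ, τ (C r) = C r := fun r => by
    rw [hτ, aeval_C, MvPolynomial.algebraMap_eq]
  have hτ'C : ∀ r : ℝ, τ' (C r) = C r := fun r => by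
    rw [hτ', aeval_C, MvPolynomial.algebraMap_eq]
  have hcomp : ∀ p, τ' (τ p) = p := by
    intro p
    have : τ'.comp τ = AlgHom.id ℝ _ := by
      apply algHom_ext
      intro i
      fin_cases i
      · show τ' (τ (X 0)) = X 0
        rw [hτ0, map_add, map_add, map_mul, hτ'0, hτ'1, hτ'C, hτ'C]
        ring
      · show τ' (τ (X 1)) = X 1
        rw [hτ1, hτ'1]
    calc τ' (τ p) = (τ'.comp τ) p := rfl
      _ = p := by rw [this]; rfl
  have hτg : τ g ≠ 0 := fun h0 => hg (by rw [← hcomp g, h0, map_zero])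
  have hτl : τ (X 0 - (C α * X 1 + C β)) = X 0 := by
    rw [map_sub, map_add, map_mul, hτ0, hτ1, hτC, hτC]
    ring
  -- lower bound on td (X 0 * τ g)
  have hne : (τ g).support.Nonempty := Finset.nonempty_iff_ne_empty.2 (fun h => hτg (MvPolynomial.support_eq_empty.1 h))
  obtain ⟨m, hm, hms⟩ := (τ g).support.exists_mem_eq_sup hne
    (fun s : Fin 2 →₀ ℕ => s.sum fun _ e => e)
  have hcoeff : coeff (Finsupp.single 0 1 + m) (X 0 * τ g) ≠ 0 := by
    rw [coeff_X_mul]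
    exact mem_support_iff.1 hm
  have hsum : (Finsupp.single (0 : Fin 2) 1 + m).sum (fun _ e => e) =
      1 + (τ g).totalDegree := by
    rw [Finsupp.sum_add_index' (fun _ => rfl) (fun _ _ _ => rfl)]
    rw [Finsupp.sum_single_index rfl]
    rw [totalDegree, hms]
  have hlow : 1 + (τ g).totalDegree ≤ (X 0 * τ g).totalDegree := by
    rw [← hsum]
    exact le_totalDegree (mem_support_iff.2 hcoeff)
  have h2 : (X 0 * τ g) = τ ((X 0 - (C α * X 1 + C β)) * g) := by
    rw [map_mul, hτl]
  have h3 : (τ ((X 0 - (C α * X 1 + C β)) * g)).totalDegree ≤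
      ((X 0 - (C α * X 1 + C β)) * g).totalDegree := by
    apply totalDegree_aeval_le
    intro i
    fin_cases i
    · show (u 0).totalDegree ≤ 1
      rw [hu0]; exact (totalDegree_linsub_le α β).2
    · show (u 1).totalDegree ≤ 1
      rw [hu1, totalDegree_X]
  have h4 : g.totalDegree ≤ (τ g).totalDegree := by
    conv_lhs => rw [← hcomp g]
    apply totalDegree_aeval_le
    intro i
    fin_cases i
    · show (u' 0).totalDegree ≤ 1
      rw [hu'0]; exact (totalDegree_linsub_le α β).1
    · show (u' 1).totalDegree ≤ 1
      rw [hu'1, totalDegree_X]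
  rw [h2] at hlow
  omega

lemma totalDegree_line_mul1 (α β : ℝ) (g : MvPolynomial (Fin 2) ℝ) (hg : g ≠ 0) :
    g.totalDegree + 1 ≤ ((X 1 - (C α * X 0 + C β)) * g).totalDegree := by
  set sw : Fin 2 ≃ Fin 2 := Equiv.swap 0 1
  have hswsw : ∀ p : MvPolynomial (Fin 2) ℝ, rename sw (rename sw p) = p := by
    intro p
    rw [rename_rename]
    have : (sw : Fin 2 → Fin 2) ∘ sw = id := by
      funext i; simp [sw, Equiv.swap_apply_self]
    rw [this, rename_id, AlgHom.id_apply]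
  have hrd : ∀ p : MvPolynomial (Fin 2) ℝ, (rename sw p).totalDegree = p.totalDegree := by
    intro p
    refine le_antisymm (totalDegree_rename_le _ _) ?_
    conv_lhs => rw [← hswsw p]
    exact totalDegree_rename_le _ _
  have hswl : rename sw (X 1 - (C α * X 0 + C β) : MvPolynomial (Fin 2) ℝ)
      = X 0 - (C α * X 1 + C β) := by
    rw [map_sub, map_add, map_mul, rename_C, rename_C, rename_X, rename_X]
    rw [Equiv.swap_apply_right, Equiv.swap_apply_left]
  have hg' : rename sw g ≠ 0 := fun h0 => hg (by rw [← hswsw g, h0, map_zero])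
  have h0 := totalDegree_line_mul0 α β (rename sw g) hg'
  have he : ((X 0 - (C α * X 1 + C β)) * rename sw g)
      = rename sw ((X 1 - (C α * X 0 + C β)) * g) := by
    rw [map_mul, hswl]
  rw [hrd g, he, hrd] at h0
  exact h0

end CBdiv

noncomputable section CBfactor

open MvPolynomial

/-- If a nonzero polynomial vanishes on the line through `a ≠ b`, it is divisible by
`linePoly a b`, with total degree dropping. -/
lemma line_factor {a b : Pt} (hab : a ≠ b) {f : MvPolynomial (Fin 2) ℝ} (hf : f ≠ 0)
    (h : ∀ z ∈ lineThrough a b, eval z f = 0) :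
    ∃ g, f = linePoly a b * g ∧ g.totalDegree + 1 ≤ f.totalDegree := by
  rcases ne_coord hab with h0 | h1
  · -- b 0 - a 0 ≠ 0 : graph x₁ = α x₀ + β
    set α := (b 1 - a 1) / (b 0 - a 0) with hα
    set β := a 1 - α * a 0 with hβ
    have hon : ∀ t : ℝ, eval (Fin.cons t (fun _ => α * t + β) : Fin 2 → ℝ) f = 0 := by
      intro t
      apply h
      rw [mem_lineThrough_iff hab]
      refine ⟨(t - a 0) / (b 0 - a 0), funext fun i => ?_⟩
      fin_cases i
      · show (Fin.cons t (fun _ => α * t + β) : Fin 2 → ℝ) 0 = _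
        simp only [Fin.cons_zero, lparam, Pi.sub_apply, Fin.zero_eta, Fin.mk_one]
        field_simp
        ring
      · show (Fin.cons t (fun _ => α * t + β) : Fin 2 → ℝ) 1 = _
        simp only [Fin.cons_one, lparam, Pi.sub_apply, hβ, hα, Fin.zero_eta, Fin.mk_one]
        field_simp
        ring
    obtain ⟨g0, hg0⟩ := dvd_of_vanish_graph1 α β f hon
    have hg00 : g0 ≠ 0 := by rintro rfl; rw [mul_zero] at hg0; exact hf hg0
    have e1 : (b 0 - a 0) * α = b 1 - a 1 := by rw [hα]; field_simp
    have e2 : (b 0 - a 0) * β = a 1 * b 0 - a 0 * b 1 := by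
      rw [hβ, mul_sub, ← mul_assoc, e1]; ring
    have hl : linePoly a b = C (-(b 0 - a 0)) * (X 1 - (C α * X 0 + C β)) := by
      rw [linePoly, ← e1, ← e2, C_mul, C_mul, map_neg]
      ring
    have hc : C (-(b 0 - a 0)) * C (-(b 0 - a 0))⁻¹ = (1 : MvPolynomial (Fin 2) ℝ) := by
      rw [← C_mul, mul_inv_cancel₀ (neg_ne_zero.mpr h0), C_1]
    refine ⟨C (-(b 0 - a 0))⁻¹ * g0, ?_, ?_⟩
    · have key : linePoly a b * (C (-(b 0 - a 0))⁻¹ * g0) = f := by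
        rw [hl, hg0, show C (-(b 0 - a 0)) * (X 1 - (C α * X 0 + C β)) *
          (C (-(b 0 - a 0))⁻¹ * g0) = (C (-(b 0 - a 0)) * C (-(b 0 - a 0))⁻¹) *
          ((X 1 - (C α * X 0 + C β)) * g0) from by ring, hc, one_mul]
      exact key.symm
    · have hd1 : (C (-(b 0 - a 0))⁻¹ * g0).totalDegree ≤ g0.totalDegree :=
        (totalDegree_mul _ _).trans (by rw [totalDegree_C, zero_add])
      have hd2 := totalDegree_line_mul1 α β g0 hg00
      rw [← hg0] at hd2
      omega
  · -- b 1 - a 1 ≠ 0 : graph x₀ = α x₁ + β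
    set α := (b 0 - a 0) / (b 1 - a 1) with hα
    set β := a 0 - α * a 1 with hβ
    have hon : ∀ t : ℝ, eval (Fin.cons (α * t + β) (fun _ => t) : Fin 2 → ℝ) f = 0 := by
      intro t
      apply h
      rw [mem_lineThrough_iff hab]
      refine ⟨(t - a 1) / (b 1 - a 1), funext fun i => ?_⟩
      fin_cases i
      · show (Fin.cons (α * t + β) (fun _ => t) : Fin 2 → ℝ) 0 = _
        simp only [Fin.cons_zero, lparam, Pi.sub_apply, hβ, hα, Fin.zero_eta, Fin.mk_one]
        field_simp
        ring
      · show (Fin.cons (α * t + β) (fun _ => t) : Fin 2 → ℝ) 1 = _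
        simp only [Fin.cons_one, lparam, Pi.sub_apply, Fin.zero_eta, Fin.mk_one]
        field_simp
        ring
    obtain ⟨g0, hg0⟩ := dvd_of_vanish_graph0 α β f hon
    have hg00 : g0 ≠ 0 := by rintro rfl; rw [mul_zero] at hg0; exact hf hg0
    have e1 : (b 1 - a 1) * α = b 0 - a 0 := by rw [hα]; field_simp
    have e2 : (b 1 - a 1) * β = -(a 1 * b 0 - a 0 * b 1) := by
      rw [hβ, mul_sub, ← mul_assoc, e1]; ring
    have hl : linePoly a b = C (b 1 - a 1) * (X 0 - (C α * X 1 + C β)) := by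
      have h1' : (C ((b 1 - a 1) * α) : MvPolynomial (Fin 2) ℝ) = C (b 0 - a 0) := by rw [e1]
      have h2' : (C ((b 1 - a 1) * β) : MvPolynomial (Fin 2) ℝ)
          = C (-(a 1 * b 0 - a 0 * b 1)) := by rw [e2]
      rw [C_mul] at h1' h2'
      rw [map_neg] at h2'
      rw [linePoly, show (C (a 1 * b 0 - a 0 * b 1) : MvPolynomial (Fin 2) ℝ)
        = -(-C (a 1 * b 0 - a 0 * b 1)) from (neg_neg _).symm, ← h2', ← h1']
      ring
    have hc : C (b 1 - a 1) * C (b 1 - a 1)⁻¹ = (1 : MvPolynomial (Fin 2) ℝ) := by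
      rw [← C_mul, mul_inv_cancel₀ h1, C_1]
    refine ⟨C (b 1 - a 1)⁻¹ * g0, ?_, ?_⟩
    · have key : linePoly a b * (C (b 1 - a 1)⁻¹ * g0) = f := by
        rw [hl, hg0, show C (b 1 - a 1) * (X 0 - (C α * X 1 + C β)) *
          (C (b 1 - a 1)⁻¹ * g0) = (C (b 1 - a 1) * C (b 1 - a 1)⁻¹) *
          ((X 0 - (C α * X 1 + C β)) * g0) from by ring, hc, one_mul]
      exact key.symm
    · have hd1 : (C (b 1 - a 1)⁻¹ * g0).totalDegree ≤ g0.totalDegree :=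
        (totalDegree_mul _ _).trans (by rw [totalDegree_C, zero_add])
      have hd2 := totalDegree_line_mul0 α β g0 hg00
      rw [← hg0] at hd2
      omega

end CBfactor

noncomputable section CBgrid

open MvPolynomial

lemma exists_two_other (j0 : Fin 3) : ∃ j1 j2 : Fin 3, j1 ≠ j0 ∧ j2 ≠ j0 ∧ j1 ≠ j2 := by
  fin_cases j0
  · exact ⟨1, 2, by decide, by decide, by decide⟩
  · exact ⟨0, 2, by decide, by decide, by decide⟩
  · exact ⟨0, 1, by decide, by decide, by decide⟩

theorem grid_CB (P : Fin 3 → Fin 3 → Pt)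
    (hPinj : ∀ j k j' k', P j k = P j' k' → j = j' ∧ k = k')
    (aL bL : Fin 3 → Pt) (habL : ∀ j, aL j ≠ bL j)
    (aM bM : Fin 3 → Pt) (habM : ∀ k, aM k ≠ bM k)
    (hPL : ∀ j k, P j k ∈ lineThrough (aL j) (bL j))
    (hPM : ∀ j k, P j k ∈ lineThrough (aM k) (bM k))
    (hLM : ∀ j k, lineThrough (aL j) (bL j) ≠ lineThrough (aM k) (bM k))
    (f : MvPolynomial (Fin 2) ℝ) (hdeg : f.totalDegree ≤ 3)
    (j0 k0 : Fin 3)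
    (hv : ∀ j k, (j ≠ j0 ∨ k ≠ k0) → eval (P j k) f = 0) :
    eval (P j0 k0) f = 0 := by
  classical
  obtain ⟨j1, j2, hj10, hj20, hj12⟩ := exists_two_other j0
  obtain ⟨k1, k2, hk10, hk20, hk12⟩ := exists_two_other k0
  -- the product of the three column lines
  set m : Fin 3 → MvPolynomial (Fin 2) ℝ := fun k => linePoly (aM k) (bM k) with hm
  have hmzero : ∀ k (z : Pt), eval z (m k) = 0 ↔ z ∈ lineThrough (aM k) (bM k) := by
    intro k z
    rw [hm]
    exact (mem_lineThrough_iff_eval (habM k)).symm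
  set Mp : MvPolynomial (Fin 2) ℝ := m 0 * m 1 * m 2 with hMp
  have hMdeg : Mp.totalDegree ≤ 3 := by
    rw [hMp]
    refine (totalDegree_mul _ _).trans ?_
    have h01 : (m 0 * m 1).totalDegree ≤ 2 :=
      (totalDegree_mul _ _).trans
        (add_le_add (totalDegree_linePoly_le _ _) (totalDegree_linePoly_le _ _))
    have h2 : (m 2).totalDegree ≤ 1 := totalDegree_linePoly_le _ _
    omega
  have hMpP : ∀ j k, eval (P j k) Mp = 0 := by
    intro j k
    have hk := (hmzero k (P j k)).2 (hPM j k)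
    rw [hMp, map_mul, map_mul]
    have hk3 : k = 0 ∨ k = 1 ∨ k = 2 := by fin_cases k <;> simp
    rcases hk3 with rfl | rfl | rfl
    · rw [hk]; ring
    · rw [hk]; ring
    · rw [hk]; ring
  -- auxiliary point on row j1
  obtain ⟨q, hqmem, hqS⟩ := exists_point_on_line_avoiding (habL j1)
    {P j1 0, P j1 1, P j1 2} (Set.toFinite _)
  have hqP : ∀ k, q ≠ P j1 k := by
    intro k hk
    apply hqS
    fin_cases k
    · rw [hk]; exact Set.mem_insert _ _
    · rw [hk]; right; exact Set.mem_insert _ _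
    · rw [hk]; right; right; rfl
  have hMq : ∀ k, eval q (m k) ≠ 0 := by
    intro k h0
    have hqM : q ∈ lineThrough (aM k) (bM k) := (hmzero k q).1 h0
    refine hLM j1 k ?_
    exact line_eq_line_of_two_mem (habL j1) (habM k) (hqP k) hqmem
      (hPL j1 k) hqM (hPM j1 k)
  have hMq' : eval q Mp ≠ 0 := by
    rw [hMp, map_mul, map_mul]
    exact mul_ne_zero (mul_ne_zero (hMq 0) (hMq 1)) (hMq 2)
  set c : ℝ := eval q f / eval q Mp with hc
  set g : MvPolynomial (Fin 2) ℝ := f - C c * Mp with hg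
  have hfg : f = C c * Mp + g := by rw [hg]; ring
  have hgdeg : g.totalDegree ≤ 3 := by
    rw [hg]
    refine (totalDegree_sub _ _).trans (max_le hdeg ?_)
    exact (totalDegree_mul _ _).trans (by rw [totalDegree_C, zero_add]; exact hMdeg)
  have hgP : ∀ j k, (j ≠ j0 ∨ k ≠ k0) → eval (P j k) g = 0 := by
    intro j k hjk
    rw [hg, map_sub, map_mul, eval_C, hv j k hjk, hMpP j k, mul_zero, sub_zero]
  have hgq : eval q g = 0 := by
    rw [hg, map_sub, map_mul, eval_C, hc]
    field_simp
    ring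
  by_cases hg0 : g = 0
  · rw [hfg, hg0, add_zero, map_mul, eval_C, hMpP j0 k0, mul_zero]
  -- parameters for the three points of each row
  have hmemL : ∀ j k, ∃ t, P j k = lparam (aL j) (bL j - aL j) t :=
    fun j k => (mem_lineThrough_iff (habL j)).1 (hPL j k)
  choose tP htP using hmemL
  have htPne : ∀ j k k', k ≠ k' → tP j k ≠ tP j k' := by
    intro j k k' hkk' h
    exact hkk' ((hPinj j k j k' (by rw [htP j k, htP j k', h])).2)
  obtain ⟨tq, htq⟩ := (mem_lineThrough_iff (habL j1)).1 hqmem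
  have htqne : ∀ k, tP j1 k ≠ tq := by
    intro k h
    exact hqP k (by rw [htq, ← h, ← htP j1 k])
  -- g vanishes on row line j1
  have hrow1 : ∀ z ∈ lineThrough (aL j1) (bL j1), eval z g = 0 := by
    refine vanish_on_line (habL j1) hgdeg ({tP j1 0, tP j1 1, tP j1 2, tq} : Finset ℝ) ?_ ?_
    · have e01 := htPne j1 0 1 (by decide)
      have e02 := htPne j1 0 2 (by decide)
      have e12 := htPne j1 1 2 (by decide)
      have e0q := htqne 0
      have e1q := htqne 1
      have e2q := htqne 2
      rw [Finset.card_insert_of_notMem (by simp [e01, e02, e0q]),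
        Finset.card_insert_of_notMem (by simp [e12, e1q]),
        Finset.card_insert_of_notMem (by simp [e2q]), Finset.card_singleton]
      norm_num
    · intro t ht
      simp only [Finset.mem_insert, Finset.mem_singleton] at ht
      rcases ht with rfl | rfl | rfl | rfl
      · rw [← htP j1 0]; exact hgP j1 0 (Or.inl hj10)
      · rw [← htP j1 1]; exact hgP j1 1 (Or.inl hj10)
      · rw [← htP j1 2]; exact hgP j1 2 (Or.inl hj10)
      · rw [← htq]; exact hgq
  obtain ⟨h1, hgh1, hh1d⟩ := line_factor (habL j1) hg0 hrow1
  have hh1deg : h1.totalDegree ≤ 2 := by omega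
  -- points off a row line
  have hnotrow : ∀ (jr : Fin 3) j k, j ≠ jr → eval (P j k) (linePoly (aL jr) (bL jr)) ≠ 0 := by
    intro jr j k hj h0
    have hmem : P j k ∈ lineThrough (aL jr) (bL jr) :=
      (mem_lineThrough_iff_eval (habL jr)).2 h0
    have hne : P j k ≠ P jr k := fun h => hj (hPinj j k jr k h).1
    refine hLM jr k ?_
    exact line_eq_line_of_two_mem (habL jr) (habM k) hne hmem (hPL jr k)
      (hPM j k) (hPM jr k)
  have hh1P : ∀ j k, j ≠ j1 → (j ≠ j0 ∨ k ≠ k0) → eval (P j k) h1 = 0 := by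
    intro j k hj hjk
    have h0 := hgP j k hjk
    rw [hgh1, map_mul] at h0
    exact (mul_eq_zero.1 h0).resolve_left (hnotrow j1 j k hj)
  have hh10 : h1 ≠ 0 := fun h => hg0 (by rw [hgh1, h, mul_zero])
  -- h1 vanishes on row line j2
  have hrow2 : ∀ z ∈ lineThrough (aL j2) (bL j2), eval z h1 = 0 := by
    refine vanish_on_line (habL j2) hh1deg ({tP j2 0, tP j2 1, tP j2 2} : Finset ℝ) ?_ ?_
    · have e01 := htPne j2 0 1 (by decide)
      have e02 := htPne j2 0 2 (by decide)
      have e12 := htPne j2 1 2 (by decide)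
      rw [Finset.card_insert_of_notMem (by simp [e01, e02]),
        Finset.card_insert_of_notMem (by simp [e12]), Finset.card_singleton]
      norm_num
    · intro t ht
      simp only [Finset.mem_insert, Finset.mem_singleton] at ht
      rcases ht with rfl | rfl | rfl
      · rw [← htP j2 0]; exact hh1P j2 0 hj12.symm (Or.inl hj20)
      · rw [← htP j2 1]; exact hh1P j2 1 hj12.symm (Or.inl hj20)
      · rw [← htP j2 2]; exact hh1P j2 2 hj12.symm (Or.inl hj20)
  obtain ⟨h2, hh1h2, hh2d⟩ := line_factor (habL j2) hh10 hrow2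
  have hh2deg : h2.totalDegree ≤ 1 := by omega
  have hh2P : ∀ k, k ≠ k0 → eval (P j0 k) h2 = 0 := by
    intro k hk
    have h0 := hh1P j0 k (Ne.symm hj10) (Or.inr hk)
    rw [hh1h2, map_mul] at h0
    exact (mul_eq_zero.1 h0).resolve_left (hnotrow j2 j0 k (Ne.symm hj20))
  -- h2 vanishes on row line j0, in particular at P j0 k0
  have hrow0 : ∀ z ∈ lineThrough (aL j0) (bL j0), eval z h2 = 0 := by
    refine vanish_on_line (habL j0) hh2deg ({tP j0 k1, tP j0 k2} : Finset ℝ) ?_ ?_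
    · have e12 := htPne j0 k1 k2 hk12
      rw [Finset.card_insert_of_notMem (by simp [e12]), Finset.card_singleton]
      norm_num
    · intro t ht
      simp only [Finset.mem_insert, Finset.mem_singleton] at ht
      rcases ht with rfl | rfl
      · rw [← htP j0 k1]; exact hh2P k1 hk10
      · rw [← htP j0 k2]; exact hh2P k2 hk20
  have hfinal : eval (P j0 k0) h2 = 0 := hrow0 _ (hPL j0 k0)
  rw [hfg, map_add, map_mul, eval_C, hMpP j0 k0, mul_zero, zero_add,
    hgh1, hh1h2, map_mul, map_mul, hfinal, mul_zero, mul_zero]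

end CBgrid

def cbIdx : Fin 3 → Fin 3 → Fin 9 := ![![4,6,0],![8,1,5],![2,3,7]]

def cbPos : Fin 9 → Fin 3 × Fin 3 := ![(0,2),(1,1),(2,0),(2,1),(0,0),(1,2),(0,1),(2,2),(1,0)]

lemma cbIdx_inj : ∀ j k j' k', cbIdx j k = cbIdx j' k' → j = j' ∧ k = k' := by decide

lemma cbIdx_pos : ∀ c, cbIdx (cbPos c).1 (cbPos c).2 = c := by decide

theorem stmt10 (n : ℕ) (x r : ZMod n → Pt)
    (hcol : ∀ a b c : ZMod n, a ≠ b → a + b + c = 0 →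
      Collinear ℝ ({x a, x b, r c} : Set Pt))
    (i : ZMod n)
    (p : Fin 9 → Pt)
    (hp : p = ![x (-1 - i), x (-2 - i), x (-3 - i), x (-5 - i), x (-6 - i), x (-7 - i),
      r (7 + 2 * i), r (8 + 2 * i), r (9 + 2 * i)])
    (hdist : Function.Injective p)
    (hlines : Function.Injective
      ![lineThrough (x (-1 - i)) (x (-6 - i)), lineThrough (x (-2 - i)) (x (-7 - i)),
        lineThrough (x (-3 - i)) (x (-5 - i)), lineThrough (x (-3 - i)) (x (-6 - i)),
        lineThrough (x (-2 - i)) (x (-5 - i)), lineThrough (x (-1 - i)) (x (-7 - i))])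
    (f : MvPolynomial (Fin 2) ℝ) (hf : f ≠ 0) (hdeg : f.totalDegree ≤ 3)
    (a : Fin 9) (h8 : ∀ b, b ≠ a → MvPolynomial.eval (p b) f = 0) :
    ∀ b, MvPolynomial.eval (p b) f = 0 := by
  intro b
  rcases eq_or_ne b a with rfl | hba
  swap
  · exact h8 b hba
  subst hp
  -- point inequalities from injectivity
  have pne : ∀ (u v : Fin 9), u ≠ v →
      (![x (-1 - i), x (-2 - i), x (-3 - i), x (-5 - i), x (-6 - i), x (-7 - i),
        r (7 + 2 * i), r (8 + 2 * i), r (9 + 2 * i)] : Fin 9 → Pt) u ≠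
      (![x (-1 - i), x (-2 - i), x (-3 - i), x (-5 - i), x (-6 - i), x (-7 - i),
        r (7 + 2 * i), r (8 + 2 * i), r (9 + 2 * i)] : Fin 9 → Pt) v :=
    fun u v huv h => huv (hdist h)
  -- index inequalities in ZMod n
  have ne04z : (-1 - i : ZMod n) ≠ -6 - i :=
    fun h => pne 0 4 (by decide) (congrArg x h)
  have ne15z : (-2 - i : ZMod n) ≠ -7 - i :=
    fun h => pne 1 5 (by decide) (congrArg x h)
  have ne23z : (-3 - i : ZMod n) ≠ -5 - i :=
    fun h => pne 2 3 (by decide) (congrArg x h)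
  have ne24z : (-3 - i : ZMod n) ≠ -6 - i :=
    fun h => pne 2 4 (by decide) (congrArg x h)
  have ne13z : (-2 - i : ZMod n) ≠ -5 - i :=
    fun h => pne 1 3 (by decide) (congrArg x h)
  have ne05z : (-1 - i : ZMod n) ≠ -7 - i :=
    fun h => pne 0 5 (by decide) (congrArg x h)
  have hres := grid_CB
    (P := fun j k => (![x (-1 - i), x (-2 - i), x (-3 - i), x (-5 - i), x (-6 - i), x (-7 - i),
        r (7 + 2 * i), r (8 + 2 * i), r (9 + 2 * i)] : Fin 9 → Pt) (cbIdx j k))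
    (aL := ![x (-1 - i), x (-2 - i), x (-3 - i)])
    (bL := ![x (-6 - i), x (-7 - i), x (-5 - i)])
    (aM := ![x (-3 - i), x (-2 - i), x (-1 - i)])
    (bM := ![x (-6 - i), x (-5 - i), x (-7 - i)])
    (f := f) (j0 := (cbPos b).1) (k0 := (cbPos b).2)
    (fun j k j' k' h => cbIdx_inj j k j' k' (hdist h))
    (by
      intro j
      fin_cases j
      · exact fun h => pne 0 4 (by decide) h
      · exact fun h => pne 1 5 (by decide) h
      · exact fun h => pne 2 3 (by decide) h)
    (by
      intro k
      fin_cases k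
      · exact fun h => pne 2 4 (by decide) h
      · exact fun h => pne 1 3 (by decide) h
      · exact fun h => pne 0 5 (by decide) h)
    (by
      intro j k
      fin_cases j <;> fin_cases k
      · exact right_mem_lineThrough
      · exact hcol (-1 - i) (-6 - i) (7 + 2 * i) ne04z (by ring)
      · exact left_mem_lineThrough
      · exact hcol (-2 - i) (-7 - i) (9 + 2 * i) ne15z (by ring)
      · exact left_mem_lineThrough
      · exact right_mem_lineThrough
      · exact left_mem_lineThrough
      · exact right_mem_lineThrough
      · exact hcol (-3 - i) (-5 - i) (8 + 2 * i) ne23z (by ring))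
    (by
      intro j k
      fin_cases j <;> fin_cases k
      · exact right_mem_lineThrough
      · exact hcol (-2 - i) (-5 - i) (7 + 2 * i) ne13z (by ring)
      · exact left_mem_lineThrough
      · exact hcol (-3 - i) (-6 - i) (9 + 2 * i) ne24z (by ring)
      · exact left_mem_lineThrough
      · exact right_mem_lineThrough
      · exact left_mem_lineThrough
      · exact right_mem_lineThrough
      · exact hcol (-1 - i) (-7 - i) (8 + 2 * i) ne05z (by ring))
    (by
      intro j k
      fin_cases j <;> fin_cases k
      · exact fun h => absurd (hlines (a₁ := 0) (a₂ := 3) h) (by decide)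
      · exact fun h => absurd (hlines (a₁ := 0) (a₂ := 4) h) (by decide)
      · exact fun h => absurd (hlines (a₁ := 0) (a₂ := 5) h) (by decide)
      · exact fun h => absurd (hlines (a₁ := 1) (a₂ := 3) h) (by decide)
      · exact fun h => absurd (hlines (a₁ := 1) (a₂ := 4) h) (by decide)
      · exact fun h => absurd (hlines (a₁ := 1) (a₂ := 5) h) (by decide)
      · exact fun h => absurd (hlines (a₁ := 2) (a₂ := 3) h) (by decide)
      · exact fun h => absurd (hlines (a₁ := 2) (a₂ := 4) h) (by decide)
      · exact fun h => absurd (hlines (a₁ := 2) (a₂ := 5) h) (by decide))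
    hdeg
    (by
      intro j k hjk
      apply h8
      intro he
      obtain ⟨hj', hk'⟩ := cbIdx_inj j k (cbPos b).1 (cbPos b).2 (he.trans (cbIdx_pos b).symm)
      rcases hjk with hj | hk
      · exact hj hj'
      · exact hk hk')
  simpa only [cbIdx_pos b] using hres
end

section
/- Let P be a set of n ≥ 4 points in general position in the plane determining exactly n distinct directions. Then P is contained in a conic (the zero set of a nonzero polynomial of degree at most 2). -/
noncomputable local instance : DecidableEq (Projectivization ℝ Pt) := Classical.decEq _

lemma pt_ext_iff {x y : Pt} : x = y ↔ x 0 = y 0 ∧ x 1 = y 1 := by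
  constructor
  · rintro rfl; exact ⟨rfl, rfl⟩
  · rintro ⟨h0, h1⟩; funext i; fin_cases i <;> assumption

lemma dep2 {u v : Pt} (hu : u ≠ 0) (h : u 0 * v 1 = u 1 * v 0) : ∃ c : ℝ, v = c • u := by
  rcases eq_or_ne (u 0) 0 with h0 | h0
  · have h1 : u 1 ≠ 0 := by
      intro h1; apply hu; funext i; fin_cases i <;> simp [h0, h1]
    have hv0 : v 0 = 0 := by
      rw [h0, zero_mul] at h
      rcases mul_eq_zero.1 h.symm with h' | h'
      · exact absurd h' h1
      · exact h'
    refine ⟨v 1 / u 1, ?_⟩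
    funext i; fin_cases i
    · show v 0 = v 1 / u 1 * u 0
      rw [hv0, h0, mul_zero]
    · show v 1 = v 1 / u 1 * u 1
      field_simp
  · refine ⟨v 0 / u 0, ?_⟩
    funext i; fin_cases i
    · show v 0 = v 0 / u 0 * u 0
      field_simp
    · show v 1 = v 0 / u 0 * u 1
      rw [div_mul_eq_mul_div, eq_div_iff h0]
      nlinarith [h]

lemma collinear3 (a q r : Pt)
    (h : (q 0 - a 0) * (r 1 - a 1) = (q 1 - a 1) * (r 0 - a 0)) :
    Collinear ℝ ({a, q, r} : Set Pt) := by
  rcases eq_or_ne q a with rfl | hqa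
  · have he : ({q, q, r} : Set Pt) = {q, r} := by simp
    rw [he]; exact collinear_pair ℝ q r
  · have hu : q - a ≠ 0 := sub_ne_zero_of_ne hqa
    obtain ⟨c, hc⟩ := dep2 (u := q - a) (v := r - a) hu (by
      simp only [Pi.sub_apply]; nlinarith [h])
    rw [collinear_iff_of_mem (Set.mem_insert a _)]
    refine ⟨q - a, ?_⟩
    rintro p (rfl | rfl | rfl)
    · exact ⟨0, by simp⟩
    · exact ⟨1, by simp⟩
    · exact ⟨c, by rw [← hc]; simp⟩

noncomputable section
open Finset

def wsh (k : ℝ) (x : Pt) : ℝ := x 0 + k * x 1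

def slp (k : ℝ) (x y : Pt) : ℝ := (x 1 - y 1) / (wsh k x - wsh k y)

lemma slp_symm (k : ℝ) (x y : Pt) : slp k x y = slp k y x := by
  unfold slp
  rw [← neg_sub (x 1), ← neg_sub (wsh k x), neg_div_neg_eq]

def e1 : Pt := fun i => if i = 0 then 1 else 0

lemma e1_ne : e1 ≠ 0 := by
  intro h
  have := congrFun h 0
  simp [e1] at this

def dirOf (x y : Pt) : Projectivization ℝ Pt :=
  if h : x - y ≠ 0 then Projectivization.mk ℝ (x - y) h else Projectivization.mk ℝ e1 e1_ne

def dirSlp (k : ℝ) (d : Projectivization ℝ Pt) : ℝ := d.rep 1 / (d.rep 0 + k * d.rep 1)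

lemma dirSlp_mk (k : ℝ) (v : Pt) (hv : v ≠ 0) :
    dirSlp k (Projectivization.mk ℝ v hv) = v 1 / (v 0 + k * v 1) := by
  obtain ⟨a, ha⟩ := Projectivization.exists_smul_eq_mk_rep ℝ v hv
  unfold dirSlp
  rw [← ha, Units.smul_def]
  have h0 : ((a : ℝ) • v) 0 = (a : ℝ) * v 0 := rfl
  have h1 : ((a : ℝ) • v) 1 = (a : ℝ) * v 1 := rfl
  rw [h0, h1]
  rw [show (a:ℝ) * v 0 + k * ((a:ℝ) * v 1) = (a:ℝ) * (v 0 + k * v 1) by ring]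
  exact mul_div_mul_left _ _ (Units.ne_zero a)

lemma mk_eq_of_slp {k : ℝ} {v w : Pt} (hv : v ≠ 0) (hw : w ≠ 0)
    (hdv : v 0 + k * v 1 ≠ 0) (hdw : w 0 + k * w 1 ≠ 0)
    (hs : dirSlp k (Projectivization.mk ℝ v hv) = dirSlp k (Projectivization.mk ℝ w hw)) :
    Projectivization.mk ℝ v hv = Projectivization.mk ℝ w hw := by
  rw [dirSlp_mk, dirSlp_mk] at hs
  rw [div_eq_div_iff hdv hdw] at hs
  have hdet : v 0 * w 1 = v 1 * w 0 := by nlinarith [hs]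
  obtain ⟨c, hc⟩ := dep2 hv hdet
  have hc0 : c ≠ 0 := by
    rintro rfl
    rw [zero_smul] at hc
    exact hw hc
  rw [Projectivization.mk_eq_mk_iff']
  refine ⟨c⁻¹, ?_⟩
  rw [hc, smul_smul, inv_mul_cancel₀ hc0, one_smul]

def Dfin (P : Finset Pt) : Finset (Projectivization ℝ Pt) :=
  P.biUnion fun x => (P.erase x).image fun y => dirOf x y

def Sfin (k : ℝ) (P : Finset Pt) : Finset ℝ := (Dfin P).image (dirSlp k)

def tanSlp (k : ℝ) (P : Finset Pt) (x : Pt) : ℝ :=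
  ∑ s ∈ (Sfin k P \ (P.erase x).image (slp k x)), s

lemma exists_shear (P : Finset Pt) :
    ∃ k : ℝ, ∀ x ∈ P, ∀ y ∈ P, x ≠ y → wsh k x ≠ wsh k y := by
  obtain ⟨k, hk⟩ := Infinite.exists_notMem_finset
    ((P ×ˢ P).image fun q => (q.2 0 - q.1 0) / (q.1 1 - q.2 1))
  refine ⟨k, fun x hx y hy hxy heq => ?_⟩
  rcases eq_or_ne (x 1) (y 1) with h1 | h1
  · have h0 : x 0 = y 0 := by
      have : x 0 + k * x 1 = y 0 + k * y 1 := heq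
      rw [h1] at this; linarith
    exact hxy (pt_ext_iff.2 ⟨h0, h1⟩)
  · apply hk
    refine mem_image.2 ⟨(x, y), mem_product.2 ⟨hx, hy⟩, ?_⟩
    have : x 0 + k * x 1 = y 0 + k * y 1 := heq
    field_simp [sub_ne_zero.2 h1]
    linarith
lemma mem_Dfin {P : Finset Pt} {x y : Pt} (hx : x ∈ P) (hy : y ∈ P) (hxy : x ≠ y) :
    dirOf x y ∈ Dfin P := by
  unfold Dfin
  exact mem_biUnion.2 ⟨x, hx, mem_image_of_mem _ (mem_erase.2 ⟨Ne.symm hxy, hy⟩)⟩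

lemma dirSlp_dirOf {k : ℝ} {x y : Pt} (hxy : x ≠ y) (hden : wsh k x ≠ wsh k y) :
    dirSlp k (dirOf x y) = slp k x y := by
  unfold dirOf
  rw [dif_pos (sub_ne_zero_of_ne hxy), dirSlp_mk]
  unfold slp
  simp only [Pi.sub_apply]
  rw [show x 0 - y 0 + k * (x 1 - y 1) = wsh k x - wsh k y from by unfold wsh; ring]

lemma slp_mem {P : Finset Pt} {k : ℝ}
    (hk : ∀ x ∈ P, ∀ y ∈ P, x ≠ y → wsh k x ≠ wsh k y)
    {a b : Pt} (ha : a ∈ P) (hb : b ∈ P) (hab : a ≠ b) : slp k a b ∈ Sfin k P := by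
  refine mem_image.2 ⟨dirOf a b, mem_Dfin ha hb hab, dirSlp_dirOf hab (hk a ha b hb hab)⟩

lemma Dfin_coe (P : Finset Pt) :
    (↑(Dfin P) : Set (Projectivization ℝ Pt)) =
      {d | ∃ x ∈ P, ∃ y ∈ P, ∃ h : x - y ≠ 0, d = Projectivization.mk ℝ (x - y) h} := by
  ext d
  constructor
  · intro hd
    obtain ⟨x, hx, him⟩ := mem_biUnion.1 (mem_coe.1 hd)
    obtain ⟨y, hy, rfl⟩ := mem_image.1 him
    obtain ⟨hyx, hyP⟩ := mem_erase.1 hy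
    have hne : x - y ≠ 0 := sub_ne_zero_of_ne (Ne.symm hyx)
    exact ⟨x, hx, y, hyP, hne, by unfold dirOf; rw [dif_pos hne]⟩
  · rintro ⟨x, hx, y, hy, h, rfl⟩
    have : dirOf x y = Projectivization.mk ℝ (x - y) h := by unfold dirOf; rw [dif_pos h]
    exact mem_coe.2 (this ▸ mem_Dfin hx hy (sub_ne_zero.1 h))

lemma Sfin_card {n : ℕ} {P : Finset Pt} {k : ℝ}
    (hk : ∀ x ∈ P, ∀ y ∈ P, x ≠ y → wsh k x ≠ wsh k y)
    (hdirs : Set.ncard {d : Projectivization ℝ Pt |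
      ∃ x ∈ P, ∃ y ∈ P, ∃ h : x - y ≠ 0, d = Projectivization.mk ℝ (x - y) h} = n) :
    (Sfin k P).card = n := by
  have hD : (Dfin P).card = n := by
    have := Set.ncard_coe_finset (Dfin P)
    rw [Dfin_coe P, hdirs] at this
    exact this.symm
  rw [← hD]
  apply card_image_of_injOn
  intro d hd e he hs
  obtain ⟨x, hx, himd⟩ := mem_biUnion.1 (mem_coe.1 hd)
  obtain ⟨y, hy', rfl⟩ := mem_image.1 himd
  obtain ⟨hyx, hyP⟩ := mem_erase.1 hy'
  obtain ⟨u, hu, hime⟩ := mem_biUnion.1 (mem_coe.1 he)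
  obtain ⟨v, hv', rfl⟩ := mem_image.1 hime
  obtain ⟨hvu, hvP⟩ := mem_erase.1 hv'
  have hneq : x - y ≠ 0 := sub_ne_zero_of_ne (Ne.symm hyx)
  have hner : u - v ≠ 0 := sub_ne_zero_of_ne (Ne.symm hvu)
  have e1 : dirOf x y = Projectivization.mk ℝ (x - y) hneq := by
    unfold dirOf; rw [dif_pos hneq]
  have e2 : dirOf u v = Projectivization.mk ℝ (u - v) hner := by
    unfold dirOf; rw [dif_pos hner]
  rw [e1, e2] at hs ⊢
  have hd1 : (x - y) 0 + k * (x - y) 1 ≠ 0 := by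
    have := hk x hx y hyP (Ne.symm hyx)
    simp only [Pi.sub_apply]
    intro hcon; apply this; unfold wsh; linarith
  have hd2 : (u - v) 0 + k * (u - v) 1 ≠ 0 := by
    have := hk u hu v hvP (Ne.symm hvu)
    simp only [Pi.sub_apply]
    intro hcon; apply this; unfold wsh; linarith
  exact mk_eq_of_slp _ _ hd1 hd2 hs

lemma slp_injOn {P : Finset Pt} {k : ℝ}
    (hk : ∀ x ∈ P, ∀ y ∈ P, x ≠ y → wsh k x ≠ wsh k y)
    (hgp : GenPos ↑P) {a : Pt} (ha : a ∈ P) :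
    Set.InjOn (slp k a) ↑(P.erase a) := by
  intro q hq r hr heq
  by_contra hqr
  obtain ⟨hqa, hqP⟩ := mem_erase.1 (mem_coe.1 hq)
  obtain ⟨hra, hrP⟩ := mem_erase.1 (mem_coe.1 hr)
  apply hgp a ha q hqP r hrP (Ne.symm hqa) (Ne.symm hra) hqr
  have hwq : wsh k a - wsh k q ≠ 0 := sub_ne_zero_of_ne (hk a ha q hqP (Ne.symm hqa))
  have hwr : wsh k a - wsh k r ≠ 0 := sub_ne_zero_of_ne (hk a ha r hrP (Ne.symm hra))
  unfold slp at heq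
  rw [div_eq_div_iff hwq hwr] at heq
  unfold wsh at heq
  apply collinear3
  nlinarith [heq]
lemma tan_sdiff {n : ℕ} {P : Finset Pt} {k : ℝ}
    (hk : ∀ x ∈ P, ∀ y ∈ P, x ≠ y → wsh k x ≠ wsh k y)
    (hgp : GenPos ↑P) (hPcard : P.card = n)
    (hS : (Sfin k P).card = n) (hn : 1 ≤ n) {a : Pt} (ha : a ∈ P) :
    Sfin k P \ (P.erase a).image (slp k a) = {tanSlp k P a} := by
  have hsub : (P.erase a).image (slp k a) ⊆ Sfin k P := by
    intro s hs
    obtain ⟨q, hq, rfl⟩ := mem_image.1 hs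
    obtain ⟨hqa, hqP⟩ := mem_erase.1 hq
    exact slp_mem hk ha hqP (Ne.symm hqa)
  have hcard : ((P.erase a).image (slp k a)).card = n - 1 := by
    rw [card_image_of_injOn (slp_injOn hk hgp ha), card_erase_of_mem ha, hPcard]
  have hsd : (Sfin k P \ (P.erase a).image (slp k a)).card = 1 := by
    rw [card_sdiff_of_subset hsub, hS, hcard]
    omega
  obtain ⟨t, ht⟩ := card_eq_one.1 hsd
  have : tanSlp k P a = t := by
    unfold tanSlp
    rw [ht, sum_singleton]
  rw [ht, this]

lemma tan_mem {n : ℕ} {P : Finset Pt} {k : ℝ}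
    (hk : ∀ x ∈ P, ∀ y ∈ P, x ≠ y → wsh k x ≠ wsh k y)
    (hgp : GenPos ↑P) (hPcard : P.card = n)
    (hS : (Sfin k P).card = n) (hn : 1 ≤ n) {a : Pt} (ha : a ∈ P) :
    tanSlp k P a ∈ Sfin k P := by
  have h := tan_sdiff hk hgp hPcard hS hn ha
  have : tanSlp k P a ∈ Sfin k P \ (P.erase a).image (slp k a) := by
    rw [h]; exact mem_singleton_self _
  exact (mem_sdiff.1 this).1

lemma slp_ne_tan {n : ℕ} {P : Finset Pt} {k : ℝ}
    (hk : ∀ x ∈ P, ∀ y ∈ P, x ≠ y → wsh k x ≠ wsh k y)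
    (hgp : GenPos ↑P) (hPcard : P.card = n)
    (hS : (Sfin k P).card = n) (hn : 1 ≤ n) {a q : Pt} (ha : a ∈ P) (hq : q ∈ P)
    (hqa : q ≠ a) : slp k a q ≠ tanSlp k P a := by
  have h := tan_sdiff hk hgp hPcard hS hn ha
  intro heq
  have hmem : slp k a q ∈ (P.erase a).image (slp k a) :=
    mem_image_of_mem _ (mem_erase.2 ⟨hqa, hq⟩)
  have : tanSlp k P a ∈ Sfin k P \ (P.erase a).image (slp k a) := by
    rw [h]; exact mem_singleton_self _
  rw [← heq] at this
  exact (mem_sdiff.1 this).2 hmem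

lemma image_erase_tan {n : ℕ} {P : Finset Pt} {k : ℝ}
    (hk : ∀ x ∈ P, ∀ y ∈ P, x ≠ y → wsh k x ≠ wsh k y)
    (hgp : GenPos ↑P) (hPcard : P.card = n)
    (hS : (Sfin k P).card = n) (hn : 1 ≤ n) {a : Pt} (ha : a ∈ P) :
    (P.erase a).image (slp k a) = (Sfin k P).erase (tanSlp k P a) := by
  have hsd := tan_sdiff hk hgp hPcard hS hn ha
  ext s
  constructor
  · intro hs
    obtain ⟨q, hq, rfl⟩ := mem_image.1 hs
    obtain ⟨hqa, hqP⟩ := mem_erase.1 hq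
    refine mem_erase.2 ⟨slp_ne_tan hk hgp hPcard hS hn ha hqP hqa, slp_mem hk ha hqP (Ne.symm hqa)⟩
  · intro hs
    obtain ⟨hne, hsS⟩ := mem_erase.1 hs
    by_contra hnot
    have : s ∈ Sfin k P \ (P.erase a).image (slp k a) := mem_sdiff.2 ⟨hsS, hnot⟩
    rw [hsd] at this
    exact hne (mem_singleton.1 this)
lemma triple_comm (a b c : Pt) : ({a, b, c} : Finset Pt) = {b, a, c} := by
  ext t; simp only [mem_insert, mem_singleton]; tauto

lemma triple_rot (a b c : Pt) : ({a, b, c} : Finset Pt) = {b, c, a} := by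
  ext t; simp only [mem_insert, mem_singleton]; tauto

lemma image3 {n : ℕ} {P : Finset Pt} {k : ℝ}
    (hk : ∀ x ∈ P, ∀ y ∈ P, x ≠ y → wsh k x ≠ wsh k y)
    (hgp : GenPos ↑P) (hPcard : P.card = n)
    (hS : (Sfin k P).card = n) (hn : 1 ≤ n) {a b c : Pt}
    (ha : a ∈ P) (hb : b ∈ P) (hc : c ∈ P)
    (hab : a ≠ b) (hac : a ≠ c) (hbc : b ≠ c) :
    (P \ {a, b, c}).image (slp k a) =
      (((Sfin k P).erase (tanSlp k P a)).erase (slp k a b)).erase (slp k a c) := by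
  have hinj := slp_injOn hk hgp ha
  have him := image_erase_tan hk hgp hPcard hS hn ha
  ext s
  constructor
  · intro hs
    obtain ⟨p, hp, rfl⟩ := mem_image.1 hs
    obtain ⟨hpP, hpn⟩ := mem_sdiff.1 hp
    simp only [mem_insert, mem_singleton, not_or] at hpn
    obtain ⟨hpa, hpb, hpc⟩ := hpn
    have hpe : p ∈ P.erase a := mem_erase.2 ⟨hpa, hpP⟩
    refine mem_erase.2 ⟨?_, mem_erase.2 ⟨?_, ?_⟩⟩
    · intro heq
      exact hpc (hinj (mem_coe.2 hpe) (mem_coe.2 (mem_erase.2 ⟨Ne.symm hac, hc⟩)) heq)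
    · intro heq
      exact hpb (hinj (mem_coe.2 hpe) (mem_coe.2 (mem_erase.2 ⟨Ne.symm hab, hb⟩)) heq)
    · rw [← him]
      exact mem_image_of_mem _ hpe
  · intro hs
    obtain ⟨hsc, hs1⟩ := mem_erase.1 hs
    obtain ⟨hsb, hs2⟩ := mem_erase.1 hs1
    rw [← him] at hs2
    obtain ⟨q, hq, rfl⟩ := mem_image.1 hs2
    obtain ⟨hqa, hqP⟩ := mem_erase.1 hq
    refine mem_image_of_mem _ (mem_sdiff.2 ⟨hqP, ?_⟩)
    simp only [mem_insert, mem_singleton, not_or]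
    exact ⟨hqa, fun h => hsb (by rw [h]), fun h => hsc (by rw [h])⟩

lemma Qfact {n : ℕ} {P : Finset Pt} {k : ℝ}
    (hk : ∀ x ∈ P, ∀ y ∈ P, x ≠ y → wsh k x ≠ wsh k y)
    (hgp : GenPos ↑P) (hPcard : P.card = n)
    (hS : (Sfin k P).card = n) (hn : 1 ≤ n) {a b c : Pt}
    (ha : a ∈ P) (hb : b ∈ P) (hc : c ∈ P)
    (hab : a ≠ b) (hac : a ≠ c) (hbc : b ≠ c) :
    ∏ s ∈ (Sfin k P).erase (slp k a b), (s - slp k a b) =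
      (tanSlp k P a - slp k a b) * (slp k a c - slp k a b) *
        ∏ p ∈ P \ {a, b, c}, (slp k a p - slp k a b) := by
  have hinj := slp_injOn hk hgp ha
  have hbe : b ∈ P.erase a := mem_erase.2 ⟨Ne.symm hab, hb⟩
  have hce : c ∈ P.erase a := mem_erase.2 ⟨Ne.symm hac, hc⟩
  have htau_ne : tanSlp k P a ≠ slp k a b := (slp_ne_tan hk hgp hPcard hS hn ha hb (Ne.symm hab)).symm
  have htac_ne : tanSlp k P a ≠ slp k a c := (slp_ne_tan hk hgp hPcard hS hn ha hc (Ne.symm hac)).symm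
  have hbc_slp : slp k a c ≠ slp k a b := by
    intro heq
    exact hbc (hinj (mem_coe.2 hce) (mem_coe.2 hbe) heq).symm
  have hmem1 : tanSlp k P a ∈ (Sfin k P).erase (slp k a b) :=
    mem_erase.2 ⟨htau_ne, tan_mem hk hgp hPcard hS hn ha⟩
  have hmem2 : slp k a c ∈ ((Sfin k P).erase (slp k a b)).erase (tanSlp k P a) :=
    mem_erase.2 ⟨htac_ne.symm, mem_erase.2 ⟨hbc_slp, slp_mem hk ha hc hac⟩⟩
  rw [← mul_prod_erase _ _ hmem1, ← mul_prod_erase _ _ hmem2]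
  have hsets : (((Sfin k P).erase (slp k a b)).erase (tanSlp k P a)).erase (slp k a c) =
      (((Sfin k P).erase (tanSlp k P a)).erase (slp k a b)).erase (slp k a c) := by
    rw [Finset.erase_right_comm (a := slp k a b)]
  rw [hsets, ← image3 hk hgp hPcard hS hn ha hb hc hab hac hbc]
  rw [Finset.prod_image (fun p hp q hq heq => hinj
      (mem_coe.2 (mem_erase.2 ⟨fun h => by simp [h] at hp, (mem_sdiff.1 hp).1⟩))
      (mem_coe.2 (mem_erase.2 ⟨fun h => by simp [h] at hq, (mem_sdiff.1 hq).1⟩)) heq)]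
  ring
lemma perp_identity {k : ℝ} {x y z p : Pt}
    (hxy : wsh k x ≠ wsh k y) (hxz : wsh k x ≠ wsh k z) (hyz : wsh k y ≠ wsh k z)
    (hxp : wsh k x ≠ wsh k p) (hyp : wsh k y ≠ wsh k p) (hzp : wsh k z ≠ wsh k p) :
    (slp k x p - slp k x y) * (slp k y p - slp k y z) * (slp k z p - slp k z x) =
      (slp k x p - slp k x z) * (slp k y p - slp k y x) * (slp k z p - slp k z y) := by
  unfold slp
  have h1 : wsh k x - wsh k y ≠ 0 := sub_ne_zero_of_ne hxy
  have h2 : wsh k x - wsh k z ≠ 0 := sub_ne_zero_of_ne hxz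
  have h3 : wsh k y - wsh k z ≠ 0 := sub_ne_zero_of_ne hyz
  have h4 : wsh k x - wsh k p ≠ 0 := sub_ne_zero_of_ne hxp
  have h5 : wsh k y - wsh k p ≠ 0 := sub_ne_zero_of_ne hyp
  have h6 : wsh k z - wsh k p ≠ 0 := sub_ne_zero_of_ne hzp
  have h1' : wsh k y - wsh k x ≠ 0 := fun h => h1 (by linarith [sub_eq_zero.1 h])
  have h2' : wsh k z - wsh k x ≠ 0 := fun h => h2 (by linarith [sub_eq_zero.1 h])
  have h3' : wsh k z - wsh k y ≠ 0 := fun h => h3 (by linarith [sub_eq_zero.1 h])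
  field_simp
  ring
lemma triple_13 (a b c : Pt) : ({a, b, c} : Finset Pt) = {c, b, a} := by
  ext t; simp only [mem_insert, mem_singleton]; tauto

lemma triple_rot2 (a b c : Pt) : ({a, b, c} : Finset Pt) = {c, a, b} := by
  ext t; simp only [mem_insert, mem_singleton]; tauto

lemma triple_swap23 (a b c : Pt) : ({a, b, c} : Finset Pt) = {a, c, b} := by
  ext t; simp only [mem_insert, mem_singleton]; tauto

lemma segre_E {n : ℕ} {P : Finset Pt} {k : ℝ}
    (hk : ∀ x ∈ P, ∀ y ∈ P, x ≠ y → wsh k x ≠ wsh k y)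
    (hgp : GenPos ↑P) (hPcard : P.card = n)
    (hS : (Sfin k P).card = n) (hn : 1 ≤ n) {x y z : Pt}
    (hx : x ∈ P) (hy : y ∈ P) (hz : z ∈ P)
    (hxy : x ≠ y) (hxz : x ≠ z) (hyz : y ≠ z) :
    (tanSlp k P x - slp k x z) * (tanSlp k P y - slp k x y) * (tanSlp k P z - slp k y z)
      + (tanSlp k P x - slp k x y) * (tanSlp k P y - slp k y z) * (tanSlp k P z - slp k x z) = 0 := by
  have hinjx := slp_injOn hk hgp hx
  have hinjy := slp_injOn hk hgp hy
  have hinjz := slp_injOn hk hgp hz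
  have hyex : y ∈ P.erase x := mem_erase.2 ⟨Ne.symm hxy, hy⟩
  have hzex : z ∈ P.erase x := mem_erase.2 ⟨Ne.symm hxz, hz⟩
  have hxey : x ∈ P.erase y := mem_erase.2 ⟨hxy, hx⟩
  have hzey : z ∈ P.erase y := mem_erase.2 ⟨Ne.symm hyz, hz⟩
  have hxez : x ∈ P.erase z := mem_erase.2 ⟨hxz, hx⟩
  have hyez : y ∈ P.erase z := mem_erase.2 ⟨hyz, hy⟩
  have hprod : (∏ p ∈ P \ {x, y, z}, (slp k x p - slp k x y)) *
      (∏ p ∈ P \ {x, y, z}, (slp k y p - slp k y z)) *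
      (∏ p ∈ P \ {x, y, z}, (slp k z p - slp k z x)) =
      (∏ p ∈ P \ {x, y, z}, (slp k x p - slp k x z)) *
      (∏ p ∈ P \ {x, y, z}, (slp k y p - slp k y x)) *
      (∏ p ∈ P \ {x, y, z}, (slp k z p - slp k z y)) := by
    rw [← prod_mul_distrib, ← prod_mul_distrib, ← prod_mul_distrib, ← prod_mul_distrib]
    refine prod_congr rfl (fun p hp => ?_)
    obtain ⟨hpP, hpn⟩ := mem_sdiff.1 hp
    simp only [mem_insert, mem_singleton, not_or] at hpn
    exact perp_identity (hk x hx y hy hxy) (hk x hx z hz hxz) (hk y hy z hz hyz)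
      (hk x hx p hpP (Ne.symm hpn.1)) (hk y hy p hpP (Ne.symm hpn.2.1))
      (hk z hz p hpP (Ne.symm hpn.2.2))
  rw [← slp_symm k x y, ← slp_symm k x z, ← slp_symm k y z] at hprod
  have q1 := Qfact hk hgp hPcard hS hn hx hy hz hxy hxz hyz
  have q2 := Qfact hk hgp hPcard hS hn hy hx hz (Ne.symm hxy) hyz hxz
  rw [← slp_symm k x y, triple_comm y x z] at q2
  have q3 := Qfact hk hgp hPcard hS hn hy hz hx hyz (Ne.symm hxy) (Ne.symm hxz)
  rw [← slp_symm k x y, ← triple_rot x y z] at q3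
  have q4 := Qfact hk hgp hPcard hS hn hz hy hx (Ne.symm hyz) (Ne.symm hxz) (Ne.symm hxy)
  rw [← slp_symm k y z, ← slp_symm k x z, ← triple_13 x y z] at q4
  have q5 := Qfact hk hgp hPcard hS hn hz hx hy (Ne.symm hxz) (Ne.symm hyz) hxy
  rw [← slp_symm k x z, ← slp_symm k y z, ← triple_rot2 x y z] at q5
  have q6 := Qfact hk hgp hPcard hS hn hx hz hy hxz hxy (Ne.symm hyz)
  rw [← triple_swap23 x y z] at q6
  have hY1 : (∏ p ∈ P \ {x, y, z}, (slp k x p - slp k x z)) ≠ 0 := by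
    rw [prod_ne_zero_iff]
    intro p hp
    obtain ⟨hpP, hpn⟩ := mem_sdiff.1 hp
    simp only [mem_insert, mem_singleton, not_or] at hpn
    refine sub_ne_zero_of_ne (fun heq => hpn.2.2 ?_)
    exact hinjx (mem_coe.2 (mem_erase.2 ⟨hpn.1, hpP⟩)) (mem_coe.2 hzex) heq
  have hY2 : (∏ p ∈ P \ {x, y, z}, (slp k y p - slp k x y)) ≠ 0 := by
    rw [prod_ne_zero_iff]
    intro p hp
    obtain ⟨hpP, hpn⟩ := mem_sdiff.1 hp
    simp only [mem_insert, mem_singleton, not_or] at hpn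
    refine sub_ne_zero_of_ne (fun heq => hpn.1 ?_)
    rw [slp_symm k x y] at heq
    exact hinjy (mem_coe.2 (mem_erase.2 ⟨hpn.2.1, hpP⟩)) (mem_coe.2 hxey) heq
  have hY3 : (∏ p ∈ P \ {x, y, z}, (slp k z p - slp k y z)) ≠ 0 := by
    rw [prod_ne_zero_iff]
    intro p hp
    obtain ⟨hpP, hpn⟩ := mem_sdiff.1 hp
    simp only [mem_insert, mem_singleton, not_or] at hpn
    refine sub_ne_zero_of_ne (fun heq => hpn.2.1 ?_)
    rw [slp_symm k y z] at heq
    exact hinjz (mem_coe.2 (mem_erase.2 ⟨hpn.2.2, hpP⟩)) (mem_coe.2 hyez) heq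
  have hc13 : slp k x y - slp k x z ≠ 0 :=
    sub_ne_zero_of_ne (fun heq => hyz (hinjx (mem_coe.2 hyex) (mem_coe.2 hzex) heq))
  have hc21 : slp k y z - slp k x y ≠ 0 := by
    rw [slp_symm k x y]
    exact sub_ne_zero_of_ne
      (fun heq => (Ne.symm hxz) (hinjy (mem_coe.2 hzey) (mem_coe.2 hxey) heq))
  have hc32 : slp k x z - slp k y z ≠ 0 := by
    rw [slp_symm k x z, slp_symm k y z]
    exact sub_ne_zero_of_ne (fun heq => hxy (hinjz (mem_coe.2 hxez) (mem_coe.2 hyez) heq))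
  have e1 : (∏ s ∈ (Sfin k P).erase (slp k x y), (s - slp k x y)) * (∏ s ∈ (Sfin k P).erase (slp k y z), (s - slp k y z)) * (∏ s ∈ (Sfin k P).erase (slp k x z), (s - slp k x z)) = ((tanSlp k P x - slp k x y) * (slp k x z - slp k x y) * (tanSlp k P y - slp k y z) * (slp k x y - slp k y z) * (tanSlp k P z - slp k x z) * (slp k y z - slp k x z)) * ((∏ p ∈ P \ {x, y, z}, (slp k x p - slp k x y)) * (∏ p ∈ P \ {x, y, z}, (slp k y p - slp k y z)) * (∏ p ∈ P \ {x, y, z}, (slp k z p - slp k x z))) := by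
    rw [q1, q3, q5]; ring
  have e2 : (∏ s ∈ (Sfin k P).erase (slp k x y), (s - slp k x y)) * (∏ s ∈ (Sfin k P).erase (slp k y z), (s - slp k y z)) * (∏ s ∈ (Sfin k P).erase (slp k x z), (s - slp k x z)) = ((tanSlp k P y - slp k x y) * (slp k y z - slp k x y) * (tanSlp k P z - slp k y z) * (slp k x z - slp k y z) * (tanSlp k P x - slp k x z) * (slp k x y - slp k x z)) * ((∏ p ∈ P \ {x, y, z}, (slp k y p - slp k x y)) * (∏ p ∈ P \ {x, y, z}, (slp k z p - slp k y z)) * (∏ p ∈ P \ {x, y, z}, (slp k x p - slp k x z))) := by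
    rw [q2, q4, q6]; ring
  have key : ((tanSlp k P x - slp k x z) * (tanSlp k P y - slp k x y) * (tanSlp k P z - slp k y z) + (tanSlp k P x - slp k x y) * (tanSlp k P y - slp k y z) * (tanSlp k P z - slp k x z)) * (((slp k y z - slp k x y) * (slp k x z - slp k y z) * (slp k x y - slp k x z)) * ((∏ p ∈ P \ {x, y, z}, (slp k x p - slp k x z)) * (∏ p ∈ P \ {x, y, z}, (slp k y p - slp k x y)) * (∏ p ∈ P \ {x, y, z}, (slp k z p - slp k y z)))) = 0 := by
    linear_combination e1 - e2 + ((tanSlp k P x - slp k x y) * (slp k x z - slp k x y) * (tanSlp k P y - slp k y z) * (slp k x y - slp k y z) * (tanSlp k P z - slp k x z) * (slp k y z - slp k x z)) * hprod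
  have hKY : ((slp k y z - slp k x y) * (slp k x z - slp k y z) * (slp k x y - slp k x z)) * ((∏ p ∈ P \ {x, y, z}, (slp k x p - slp k x z)) * (∏ p ∈ P \ {x, y, z}, (slp k y p - slp k x y)) * (∏ p ∈ P \ {x, y, z}, (slp k z p - slp k y z))) ≠ 0 :=
    mul_ne_zero (mul_ne_zero (mul_ne_zero hc21 hc32) hc13)
      (mul_ne_zero (mul_ne_zero hY1 hY2) hY3)
  rcases mul_eq_zero.1 key with h | h
  · exact h
  · exact absurd h hKY

lemma segre_core (xab xac xbc xap xbp xcp ta tb tc tp : ℝ)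
    (h0 : (xap-xab)*(xbp-xbc)*(xcp-xac) - (xap-xac)*(xbp-xab)*(xcp-xbc) = 0)
    (h1 : (ta-xac)*(tb-xab)*(tc-xbc) + (ta-xab)*(tb-xbc)*(tc-xac) = 0)
    (h2 : (ta-xap)*(tb-xab)*(tp-xbp) + (ta-xab)*(tb-xbp)*(tp-xap) = 0)
    (h3 : (ta-xap)*(tc-xac)*(tp-xcp) + (ta-xac)*(tc-xcp)*(tp-xap) = 0)
    (hu1 : tp ≠ xap) (hu2 : xac ≠ tc) :
    (xac-xab)*(xbc-xab)*(xap-ta)*(xbp-tb) - (xac-ta)*(xbc-tb)*(xap-xab)*(xbp-xab) = 0 := by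
  have key : (tp-xap)*(xac-tc)*((xac-xab)*(xbc-xab)*(xap-ta)*(xbp-tb) - (xac-ta)*(xbc-tb)*(xap-xab)*(xbp-xab)) = 0 := by
    linear_combination ((1/2)*ta*tb*tp + (1/2)*ta*tb*tc + (-1/2)*xap*tb*tc + (-1/2)*xap*ta*tb + (-1/2)*xac*tb*tp + (-1/2)*xac*ta*tb + (1)*xac*xap*tb + (-1/2)*xab*ta*tp + (-1/2)*xab*ta*tc + (1/2)*xab*xap*tc + (1/2)*xab*xap*ta + (1/2)*xab*xac*tp + (1/2)*xab*xac*ta + (-1)*xab*xac*xap)*h0 + ((1/2)*xap*xbp*tp + (-1/2)*xap*xap*xbp + (-1/2)*xac*xbp*tp + (1/2)*xac*xap*xbp + (-1/2)*xab*xap*tp + (1/2)*xab*xap*xap + (1/2)*xab*xac*tp + (-1/2)*xab*xac*xap)*h1 + ((1/2)*xbc*xap*tc + (-1/2)*xac*xbc*tc + (-1/2)*xac*xbc*xap + (1/2)*xac*xac*xbc + (-1/2)*xab*xap*tc + (1/2)*xab*xac*tc + (1/2)*xab*xac*xap + (-1/2)*xab*xac*xac)*h2 + ((-1/2)*xbc*xap*tb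 + (1/2)*xac*xbp*tb + (-1/2)*xab*xbp*tb + (1/2)*xab*xap*tb + (1/2)*xab*xbc*tb + (1/2)*xab*xbc*xap + (-1/2)*xab*xac*tb + (-1/2)*xab*xac*xbp + (1/2)*xab*xab*xbp + (-1/2)*xab*xab*xap + (-1/2)*xab*xab*xbc + (1/2)*xab*xab*xac)*h3
  rcases mul_eq_zero.1 key with h | h
  · rcases mul_eq_zero.1 h with h' | h'
    · exact absurd (sub_eq_zero.1 h') hu1
    · exact absurd (sub_eq_zero.1 h') hu2
  · exact h

lemma conc_zero {n : ℕ} {P : Finset Pt} {k : ℝ}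
    (hk : ∀ x ∈ P, ∀ y ∈ P, x ≠ y → wsh k x ≠ wsh k y)
    (hgp : GenPos ↑P) (hPcard : P.card = n)
    (hS : (Sfin k P).card = n) (hn : 1 ≤ n) {a b c p : Pt}
    (ha : a ∈ P) (hb : b ∈ P) (hc : c ∈ P) (hp : p ∈ P)
    (hab : a ≠ b) (hac : a ≠ c) (hbc : b ≠ c)
    (hpa : p ≠ a) (hpb : p ≠ b) (hpc : p ≠ c) :
    (slp k a c - slp k a b) * (slp k b c - slp k a b) *
      (slp k a p - tanSlp k P a) * (slp k b p - tanSlp k P b) -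
    (slp k a c - tanSlp k P a) * (slp k b c - tanSlp k P b) *
      (slp k a p - slp k a b) * (slp k b p - slp k a b) = 0 := by
  have h0 : (slp k a p - slp k a b) * (slp k b p - slp k b c) * (slp k c p - slp k a c) -
      (slp k a p - slp k a c) * (slp k b p - slp k a b) * (slp k c p - slp k b c) = 0 := by
    have hident := perp_identity (k := k) (x := a) (y := b) (z := c) (p := p)
      (hk a ha b hb hab) (hk a ha c hc hac) (hk b hb c hc hbc)
      (hk a ha p hp (Ne.symm hpa)) (hk b hb p hp (Ne.symm hpb)) (hk c hc p hp (Ne.symm hpc))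
    rw [← slp_symm k a c, ← slp_symm k a b, ← slp_symm k b c] at hident
    linear_combination hident
  have h1 := segre_E hk hgp hPcard hS hn ha hb hc hab hac hbc
  have h2 := segre_E hk hgp hPcard hS hn ha hb hp hab (Ne.symm hpa) (Ne.symm hpb)
  have h3 := segre_E hk hgp hPcard hS hn ha hc hp hac (Ne.symm hpa) (Ne.symm hpc)
  have hu1 : tanSlp k P p ≠ slp k a p := by
    rw [slp_symm k a p]
    exact (slp_ne_tan hk hgp hPcard hS hn hp ha (Ne.symm hpa)).symm
  have hu2 : slp k a c ≠ tanSlp k P c := by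
    rw [slp_symm k a c]
    exact slp_ne_tan hk hgp hPcard hS hn hc ha hac
  exact segre_core (slp k a b) (slp k a c) (slp k b c) (slp k a p) (slp k b p) (slp k c p)
    (tanSlp k P a) (tanSlp k P b) (tanSlp k P c) (tanSlp k P p)
    h0 h1 (by linear_combination h2) (by linear_combination h3) hu1 hu2
def lf (k t : ℝ) (a x : Pt) : ℝ := (x 1 - a 1) - t * (wsh k x - wsh k a)

open MvPolynomial in
def linP (α β γ : ℝ) : MvPolynomial (Fin 2) ℝ := C α + C β * X 0 + C γ * X 1

open MvPolynomial in
lemma linP_eval (α β γ : ℝ) (p : Pt) : eval p (linP α β γ) = α + β * p 0 + γ * p 1 := by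
  simp [linP]

open MvPolynomial in
lemma linP_deg (α β γ : ℝ) : (linP α β γ).totalDegree ≤ 1 := by
  unfold linP
  refine (totalDegree_add _ _).trans (max_le ((totalDegree_add _ _).trans (max_le ?_ ?_)) ?_)
  · simp [totalDegree_C]
  · exact (totalDegree_mul _ _).trans (by simp [totalDegree_C, totalDegree_X])
  · exact (totalDegree_mul _ _).trans (by simp [totalDegree_C, totalDegree_X])

open MvPolynomial in
lemma linP_eval_lf (k t : ℝ) (a p : Pt) :
    eval p (linP (t * wsh k a - a 1) (-t) (1 - t * k)) = lf k t a p := by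
  rw [linP_eval]
  unfold lf wsh
  ring

open MvPolynomial in
def conicP (k ta tb mab : ℝ) (a b c : Pt) : MvPolynomial (Fin 2) ℝ :=
  C ((lf k mab a c) ^ 2) *
      (linP (ta * wsh k a - a 1) (-ta) (1 - ta * k) * linP (tb * wsh k b - b 1) (-tb) (1 - tb * k))
    - C (lf k ta a c * lf k tb b c) * (linP (mab * wsh k a - a 1) (-mab) (1 - mab * k)) ^ 2

open MvPolynomial in
lemma conicP_eval (k ta tb mab : ℝ) (a b c p : Pt) :
    eval p (conicP k ta tb mab a b c) =
      (lf k mab a c) ^ 2 * (lf k ta a p * lf k tb b p)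
        - (lf k ta a c * lf k tb b c) * (lf k mab a p) ^ 2 := by
  unfold conicP
  simp only [map_sub, map_mul, map_pow, eval_C, linP_eval_lf]

open MvPolynomial in
lemma conicP_deg (k ta tb mab : ℝ) (a b c : Pt) :
    (conicP k ta tb mab a b c).totalDegree ≤ 2 := by
  unfold conicP
  refine (totalDegree_sub _ _).trans (max_le ?_ ?_)
  · refine (totalDegree_mul _ _).trans ?_
    have h2 : (linP (ta * wsh k a - a 1) (-ta) (1 - ta * k) *
        linP (tb * wsh k b - b 1) (-tb) (1 - tb * k)).totalDegree ≤ 2 :=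
      (totalDegree_mul _ _).trans (by
        have := linP_deg (ta * wsh k a - a 1) (-ta) (1 - ta * k)
        have := linP_deg (tb * wsh k b - b 1) (-tb) (1 - tb * k)
        omega)
    simp only [totalDegree_C]
    omega
  · refine (totalDegree_mul _ _).trans ?_
    have h2 : ((linP (mab * wsh k a - a 1) (-mab) (1 - mab * k)) ^ 2).totalDegree ≤ 2 :=
      (totalDegree_pow _ _).trans (by
        have := linP_deg (mab * wsh k a - a 1) (-mab) (1 - mab * k)
        omega)
    simp only [totalDegree_C]
    omega
lemma lf_factor (k t : ℝ) (a p : Pt) (h : wsh k p ≠ wsh k a) :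
    lf k t a p = (wsh k p - wsh k a) * (slp k a p - t) := by
  unfold lf slp
  have h' : wsh k a - wsh k p ≠ 0 := sub_ne_zero_of_ne (Ne.symm h)
  field_simp
  ring

lemma lf_base (k : ℝ) (a b p : Pt) (hba : wsh k b ≠ wsh k a) (hpb : wsh k p ≠ wsh k b) :
    lf k (slp k a b) a p = (wsh k p - wsh k b) * (slp k b p - slp k a b) := by
  unfold lf slp
  have h1 : wsh k a - wsh k b ≠ 0 := sub_ne_zero_of_ne (fun h => hba h.symm)
  have h2 : wsh k b - wsh k p ≠ 0 := sub_ne_zero_of_ne (Ne.symm hpb)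
  field_simp
  ring

lemma lf_ab_zero (k : ℝ) (a b : Pt) (hba : wsh k b ≠ wsh k a) :
    lf k (slp k a b) a b = 0 := by
  unfold lf slp
  have h : wsh k a - wsh k b ≠ 0 := sub_ne_zero_of_ne (fun h => hba h.symm)
  field_simp
  ring

lemma lf_mid_a (k t : ℝ) (a b : Pt) :
    lf k t a (fun i => (a i + b i) / 2) = (1 / 2) * lf k t a b := by
  unfold lf wsh
  norm_num
  ring

lemma lf_mid_b (k t : ℝ) (a b : Pt) :
    lf k t b (fun i => (a i + b i) / 2) = (1 / 2) * lf k t b a := by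
  unfold lf wsh
  norm_num
  ring

open MvPolynomial in
lemma Fval_a (k ta tb : ℝ) (a b c : Pt) :
    eval a (conicP k ta tb (slp k a b) a b c) = 0 := by
  rw [conicP_eval]
  unfold lf wsh
  ring

open MvPolynomial in
lemma Fval_b (k ta tb : ℝ) (a b c : Pt) (hba : wsh k b ≠ wsh k a) :
    eval b (conicP k ta tb (slp k a b) a b c) = 0 := by
  rw [conicP_eval, lf_ab_zero k a b hba]
  have hlf2 : lf k tb b b = 0 := by unfold lf; ring
  rw [hlf2]
  ring

open MvPolynomial in
lemma Fval_c (k ta tb : ℝ) (a b c : Pt) :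
    eval c (conicP k ta tb (slp k a b) a b c) = 0 := by
  rw [conicP_eval]
  ring

open MvPolynomial in
lemma Fval_p (k ta tb : ℝ) (a b c p : Pt)
    (hba : wsh k b ≠ wsh k a) (hca : wsh k c ≠ wsh k a) (hcb : wsh k c ≠ wsh k b)
    (hpa : wsh k p ≠ wsh k a) (hpb : wsh k p ≠ wsh k b)
    (hconc : (slp k a c - slp k a b) * (slp k b c - slp k a b) *
        (slp k a p - ta) * (slp k b p - tb) -
      (slp k a c - ta) * (slp k b c - tb) *
        (slp k a p - slp k a b) * (slp k b p - slp k a b) = 0) :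
    eval p (conicP k ta tb (slp k a b) a b c) = 0 := by
  rw [conicP_eval]
  have e1 : (lf k (slp k a b) a c) ^ 2 =
      ((wsh k c - wsh k a) * (slp k a c - slp k a b)) *
      ((wsh k c - wsh k b) * (slp k b c - slp k a b)) := by
    rw [sq]
    nth_rewrite 1 [lf_factor k (slp k a b) a c hca]
    rw [lf_base k a b c hba hcb]
  have e2 : (lf k (slp k a b) a p) ^ 2 =
      ((wsh k p - wsh k a) * (slp k a p - slp k a b)) *
      ((wsh k p - wsh k b) * (slp k b p - slp k a b)) := by
    rw [sq]
    nth_rewrite 1 [lf_factor k (slp k a b) a p hpa]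
    rw [lf_base k a b p hba hpb]
  rw [e1, e2, lf_factor k ta a p hpa, lf_factor k tb b p hpb,
    lf_factor k ta a c hca, lf_factor k tb b c hcb]
  linear_combination ((wsh k p - wsh k a) * (wsh k p - wsh k b) *
    (wsh k c - wsh k a) * (wsh k c - wsh k b)) * hconc

open MvPolynomial in
lemma Fval_z (k ta tb : ℝ) (a b c : Pt) (hba : wsh k b ≠ wsh k a) :
    eval (fun i => (a i + b i) / 2) (conicP k ta tb (slp k a b) a b c) =
      (1 / 4) * (lf k (slp k a b) a c) ^ 2 * (lf k ta a b * lf k tb b a) := by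
  rw [conicP_eval, lf_mid_a, lf_mid_b, lf_mid_a, lf_ab_zero k a b hba]
  ring
theorem stmt12 (n : ℕ) (hn : 4 ≤ n) (P : Finset Pt) (hPcard : P.card = n)
    (hgp : GenPos ↑P)
    (hdirs : Set.ncard {d : Projectivization ℝ Pt |
      ∃ x ∈ P, ∃ y ∈ P, ∃ h : x - y ≠ 0, d = Projectivization.mk ℝ (x - y) h} = n) :
    ∃ f : MvPolynomial (Fin 2) ℝ, f ≠ 0 ∧ f.totalDegree ≤ 2 ∧
      ∀ p ∈ P, MvPolynomial.eval p f = 0 := by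
  classical
  obtain ⟨k, hk⟩ := exists_shear P
  have hS : (Sfin k P).card = n := Sfin_card hk hdirs
  have hn1 : 1 ≤ n := by omega
  obtain ⟨a, ha⟩ := card_pos.1 (show 0 < P.card by rw [hPcard]; omega)
  obtain ⟨b, hb'⟩ := card_pos.1 (show 0 < (P.erase a).card by
    rw [card_erase_of_mem ha, hPcard]; omega)
  obtain ⟨hba, hb⟩ := mem_erase.1 hb'
  obtain ⟨c, hc'⟩ := card_pos.1 (show 0 < ((P.erase a).erase b).card by
    rw [card_erase_of_mem hb', card_erase_of_mem ha, hPcard]; omega)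
  obtain ⟨hcb, hc''⟩ := mem_erase.1 hc'
  obtain ⟨hca, hc⟩ := mem_erase.1 hc''
  have hwba : wsh k b ≠ wsh k a := hk b hb a ha hba
  have hwca : wsh k c ≠ wsh k a := hk c hc a ha hca
  have hwcb : wsh k c ≠ wsh k b := hk c hc b hb hcb
  refine ⟨conicP k (tanSlp k P a) (tanSlp k P b) (slp k a b) a b c, ?_,
    conicP_deg _ _ _ _ _ _ _, ?_⟩
  · intro hF0
    have hz := Fval_z k (tanSlp k P a) (tanSlp k P b) a b c hwba
    rw [hF0, map_zero] at hz
    have h1 : lf k (slp k a b) a c ≠ 0 := by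
      rw [lf_factor k (slp k a b) a c hwca]
      refine mul_ne_zero (sub_ne_zero_of_ne hwca) (sub_ne_zero_of_ne fun heq => ?_)
      exact hcb (slp_injOn hk hgp ha (mem_coe.2 (mem_erase.2 ⟨hca, hc⟩))
        (mem_coe.2 (mem_erase.2 ⟨hba, hb⟩)) heq)
    have h2 : lf k (tanSlp k P a) a b ≠ 0 := by
      rw [lf_factor k _ a b hwba]
      exact mul_ne_zero (sub_ne_zero_of_ne hwba)
        (sub_ne_zero_of_ne (slp_ne_tan hk hgp hPcard hS hn1 ha hb hba))
    have h3 : lf k (tanSlp k P b) b a ≠ 0 := by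
      rw [lf_factor k _ b a (fun h => hwba h.symm)]
      exact mul_ne_zero (sub_ne_zero_of_ne (fun h => hwba h.symm))
        (sub_ne_zero_of_ne (slp_ne_tan hk hgp hPcard hS hn1 hb ha (Ne.symm hba)))
    exact (mul_ne_zero (mul_ne_zero (by norm_num : (1:ℝ)/4 ≠ 0) (pow_ne_zero 2 h1))
      (mul_ne_zero h2 h3)) hz.symm
  · intro p hp
    rcases eq_or_ne p a with rfl | hpa
    · exact Fval_a k _ _ p b c
    rcases eq_or_ne p b with rfl | hpb
    · exact Fval_b k _ _ a p c hwba
    rcases eq_or_ne p c with rfl | hpc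
    · exact Fval_c k _ _ a b p
    · exact Fval_p k _ _ a b c p hwba hwca hwcb (hk p hp a ha hpa) (hk p hp b hb hpb)
        (conc_zero hk hgp hPcard hS hn1 ha hb hc hp (Ne.symm hba) (Ne.symm hca)
          (Ne.symm hcb) hpa hpb hpc)
end
end
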